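/- arXiv:0804.1095 — 12 statements merged into one kernel-verified Lean document; each statement's English description precedes it below -/
import Mathlib

section
/- If a pegging move is applied to a distribution D on a graph G, transforming it into D', then for every vertex t, the weight of D' with respect to t is at most the weight of D with respect to t, where the weight of a distribution with respect to t is the sum over pegged vertices u of σ^{d(u,t)}, with σ = (√5−1)/2. -/
open SimpleGraph Finset

variable {V : Type*} {W : Type*}

/-- A pegging move: remove pegs from adjacent pegged vertices `u, v`,
place a peg on an empty vertex `w` adjacent to `v`. -/
def PegMove {V : Type*} (G : SimpleGraph V) [DecidableEq V] (D D' : Finset V) : Prop :=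
  ∃ u v w : V, G.Adj u v ∧ G.Adj v w ∧ u ∈ D ∧ v ∈ D ∧ w ∉ D ∧
    D' = insert w ((D.erase u).erase v)

/-- The reach of a distribution: all vertices reachable by a finite
sequence of pegging moves. -/
def PegReach {V : Type*} (G : SimpleGraph V) [DecidableEq V] (D : Finset V) : Set V :=
  {t | ∃ D' : Finset V, Relation.ReflTransGen (PegMove G) D D' ∧ t ∈ D'}

/-- The pegging number: least positive `k` such that every distribution of
`k` pegs has full reach. -/
noncomputable def PeggingNumber {V : Type*} (G : SimpleGraph V) [DecidableEq V] : ℕ :=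
  sInf {k | 0 < k ∧ ∀ D : Finset V, D.card = k → PegReach G D = Set.univ}

/-- The optimal pegging number: least positive `k` such that some distribution of
`k` pegs has full reach. -/
noncomputable def OptPeggingNumber {V : Type*} (G : SimpleGraph V) [DecidableEq V] : ℕ :=
  sInf {k | 0 < k ∧ ∃ D : Finset V, D.card = k ∧ PegReach G D = Set.univ}

/-- Weight of a distribution with respect to a target vertex `t`,
with `σ = (√5 - 1)/2`. -/
noncomputable def pegWeight {V : Type*} (G : SimpleGraph V) (D : Finset V) (t : V) : ℝ :=
  ∑ u ∈ D, ((Real.sqrt 5 - 1) / 2) ^ (G.dist u t)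

section aux

private lemma sigma_pos : (0:ℝ) < (Real.sqrt 5 - 1) / 2 := by
  nlinarith [Real.sq_sqrt (by norm_num : (5:ℝ) ≥ 0), Real.sqrt_nonneg 5]

private lemma sigma_lt_one : (Real.sqrt 5 - 1) / 2 < 1 := by
  nlinarith [Real.sq_sqrt (by norm_num : (5:ℝ) ≥ 0), Real.sqrt_nonneg 5]

private lemma sigma_identity : ((Real.sqrt 5 - 1) / 2) ^ 2 + (Real.sqrt 5 - 1) / 2 = 1 := by
  nlinarith [Real.sq_sqrt (by norm_num : (5:ℝ) ≥ 0), Real.sqrt_nonneg 5]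

/-- key: σ^{k-1} = σ^k + σ^{k+1} for k ≥ 1, rephrased: σ^k = σ^{k+1} + σ^{k+2} -/
private lemma sigma_pow (k : ℕ) :
    ((Real.sqrt 5 - 1) / 2) ^ k =
      ((Real.sqrt 5 - 1) / 2) ^ (k+1) + ((Real.sqrt 5 - 1) / 2) ^ (k+2) := by
  have h : ((Real.sqrt 5 - 1) / 2) ^ (k+1) + ((Real.sqrt 5 - 1) / 2) ^ (k+2)
      = ((Real.sqrt 5 - 1) / 2) ^ k * (((Real.sqrt 5 - 1) / 2) ^ 2 + (Real.sqrt 5 - 1) / 2) := by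
    ring
  rw [h, sigma_identity, mul_one]

private lemma key_ineq {a b c : ℕ} (hc : b ≤ c + 1) (ha : a ≤ b + 1) :
    ((Real.sqrt 5 - 1) / 2) ^ c ≤
      ((Real.sqrt 5 - 1) / 2) ^ a + ((Real.sqrt 5 - 1) / 2) ^ b := by
  set s : ℝ := (Real.sqrt 5 - 1) / 2 with hs
  have h0 : 0 < s := sigma_pos
  have h1 : s ≤ 1 := le_of_lt sigma_lt_one
  have mono : ∀ {m n : ℕ}, m ≤ n → s ^ n ≤ s ^ m := fun hmn =>
    pow_le_pow_of_le_one h0.le h1 hmn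
  rcases Nat.eq_zero_or_pos b with hb | hb
  · subst hb
    have : s ^ c ≤ 1 := by simpa using mono (Nat.zero_le c)
    have hA : 0 < s ^ a := pow_pos h0 a
    simpa using this.trans (by linarith)
  · obtain ⟨b', rfl⟩ := Nat.exists_eq_add_of_le hb
    have hcb : b' ≤ c := by omega
    calc s ^ c ≤ s ^ b' := mono hcb
      _ = s ^ (b' + 1) + s ^ (b' + 2) := sigma_pow b'
      _ ≤ s ^ a + s ^ (1 + b') := by
          have : s ^ (b' + 2) ≥ s ^ a → True := fun _ => trivial
          have h2 : s ^ a ≥ s ^ (b' + 2) := mono (by omega)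
          have : (1 + b') = b' + 1 := by omega
          rw [this]; linarith

end aux

theorem pegWeight_mono_of_pegMove {V : Type*} (G : SimpleGraph V) [DecidableEq V]
    (D D' : Finset V) (h : PegMove G D D') (t : V) :
    pegWeight G D' t ≤ pegWeight G D t := by
  obtain ⟨u, v, w, huv, hvw, hu, hv, hw, hD'⟩ := h
  set s : ℝ := (Real.sqrt 5 - 1) / 2 with hs
  have hne : u ≠ v := huv.ne
  have hwu : w ≠ u := fun h => hw (h ▸ hu)
  have hwv : w ≠ v := fun h => hw (h ▸ hv)
  -- the key distance inequality
  have key : s ^ (G.dist w t) ≤ s ^ (G.dist u t) + s ^ (G.dist v t) := by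
    by_cases hr : G.Reachable v t
    · have hrw : G.Reachable w t := (hvw.symm.reachable).trans hr
      -- dist v t ≤ dist w t + 1
      obtain ⟨p, hp⟩ := hrw.exists_walk_length_eq_dist
      have h1 : G.dist v t ≤ G.dist w t + 1 := by
        have := G.dist_le (SimpleGraph.Walk.cons hvw p)
        simpa [hp, Nat.add_comm] using this
      have h2 : G.dist u t ≤ G.dist v t + 1 := by
        obtain ⟨q, hq⟩ := hr.exists_walk_length_eq_dist
        have := G.dist_le (SimpleGraph.Walk.cons huv q)
        simpa [hq, Nat.add_comm] using this
      exact key_ineq h1 h2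
    · have hru : ¬ G.Reachable u t := fun h => hr ((huv.symm.reachable).trans h)
      have hrw : ¬ G.Reachable w t := fun h => hr ((hvw.reachable).trans h)
      rw [SimpleGraph.dist_eq_zero_of_not_reachable hr,
        SimpleGraph.dist_eq_zero_of_not_reachable hru,
        SimpleGraph.dist_eq_zero_of_not_reachable hrw]
      have : (0:ℝ) < s ^ 0 := pow_pos sigma_pos 0
      linarith
  have hwmem : w ∉ (D.erase u).erase v := fun h =>
    hw (Finset.mem_of_mem_erase (Finset.mem_of_mem_erase h))
  have hvmem : v ∈ D.erase u := Finset.mem_erase.mpr ⟨hne.symm, hv⟩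
  unfold pegWeight
  rw [hD', Finset.sum_insert hwmem]
  have e1 : ∑ x ∈ (D.erase u).erase v, s ^ (G.dist x t)
      = (∑ x ∈ D.erase u, s ^ (G.dist x t)) - s ^ (G.dist v t) :=
    Finset.sum_erase_eq_sub hvmem
  have e2 : ∑ x ∈ D.erase u, s ^ (G.dist x t)
      = (∑ x ∈ D, s ^ (G.dist x t)) - s ^ (G.dist u t) :=
    Finset.sum_erase_eq_sub hu
  rw [e1, e2]
  linarith
end

section
/- If D' ⊆ D are two distributions on a graph G, then the reach of D' is contained in the reach of D (monotonicity of reach under adding pegs). -/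
open SimpleGraph Finset

variable {V : Type*} {W : Type*}

lemma pegMove_sim {V : Type*} (G : SimpleGraph V) [DecidableEq V]
    {D D' E' : Finset V} (h : D' ⊆ D) (hm : PegMove G D' E') :
    ∃ E : Finset V, Relation.ReflTransGen (PegMove G) D E ∧ E' ⊆ E := by
  obtain ⟨u, v, w, huv, hvw, hu, hv, hw, hE⟩ := hm
  by_cases hwD : w ∈ D
  · refine ⟨D, Relation.ReflTransGen.refl, ?_⟩
    rw [hE]
    exact Finset.insert_subset hwD
      (((D'.erase u).erase_subset v).trans ((D'.erase_subset u).trans h))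
  · refine ⟨insert w ((D.erase u).erase v),
      Relation.ReflTransGen.single ⟨u, v, w, huv, hvw, h hu, h hv, hwD, rfl⟩, ?_⟩
    rw [hE]
    exact Finset.insert_subset_insert w
      (Finset.erase_subset_erase v (Finset.erase_subset_erase u h))

lemma pegChain_sim {V : Type*} (G : SimpleGraph V) [DecidableEq V]
    {D D' E' : Finset V} (h : D' ⊆ D)
    (hc : Relation.ReflTransGen (PegMove G) D' E') :
    ∃ E : Finset V, Relation.ReflTransGen (PegMove G) D E ∧ E' ⊆ E := by
  induction hc with
  | refl => exact ⟨D, Relation.ReflTransGen.refl, h⟩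
  | tail _ hstep ih =>
    obtain ⟨E, hE, hsub⟩ := ih
    obtain ⟨F, hF, hsub'⟩ := pegMove_sim G hsub hstep
    exact ⟨F, hE.trans hF, hsub'⟩

theorem pegReach_mono {V : Type*} (G : SimpleGraph V) [DecidableEq V]
    (D D' : Finset V) (h : D' ⊆ D) :
    PegReach G D' ⊆ PegReach G D := by
  rintro t ⟨E', hc, ht⟩
  obtain ⟨E, hE, hsub⟩ := pegChain_sim G h hc
  exact ⟨E, hE, hsub ht⟩
end

section
/- For n ≥ 5, the pegging number of the cycle C_n is n − 2. -/
open SimpleGraph Finset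

variable {V : Type*} {W : Type*}

namespace PegCycleAux

/-- weight anchored just right of 0 -/
def wA (n : ℕ) (x : Fin n) : ℕ := Nat.fib (n + 1 - x.val)
/-- weight anchored just left of 0 -/
def wB (n : ℕ) (x : Fin n) : ℕ := Nat.fib (x.val + 1)

/-- Fin value lemmas -/
lemma val_add_one {m : ℕ} (v : Fin (m+5)) (h : v.val + 1 < m + 5) :
    (v + 1).val = v.val + 1 := by
  rw [Fin.add_def]
  simp only [Fin.val_one]
  exact Nat.mod_eq_of_lt h

lemma val_sub_one {m : ℕ} (v : Fin (m+5)) (h : 1 ≤ v.val) :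
    (v - 1).val = v.val - 1 := by
  rw [Fin.sub_def]
  simp only [Fin.val_one]
  have h2 : v.val < m + 5 := v.isLt
  have : (m + 5 - 1 + v.val) = (m+5) + (v.val - 1) := by omega
  rw [this, Nat.add_mod_left, Nat.mod_eq_of_lt (by omega)]

lemma ne_zero_iff {m : ℕ} (v : Fin (m+5)) : v ≠ 0 ↔ 1 ≤ v.val := by
  constructor
  · intro h
    rcases Nat.eq_zero_or_pos v.val with h0 | h1
    · exact absurd (Fin.ext h0) h
    · exact h1
  · intro h1 h0
    rw [h0] at h1; simp at h1

lemma sum_move {n : ℕ} (f : Fin n → ℕ) (D : Finset (Fin n)) (u v w : Fin n)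
    (hu : u ∈ D) (hv : v ∈ D) (hw : w ∉ D) (huv : u ≠ v)
    (hfw : f w ≤ f u + f v) :
    ∑ x ∈ insert w ((D.erase u).erase v), f x ≤ ∑ x ∈ D, f x := by
  have hw' : w ∉ (D.erase u).erase v := fun h => hw (Finset.mem_of_mem_erase (Finset.mem_of_mem_erase h))
  rw [Finset.sum_insert hw']
  have h1 : ∑ x ∈ (D.erase u).erase v, f x + f v = ∑ x ∈ D.erase u, f x :=
    Finset.sum_erase_add _ _ (Finset.mem_erase.mpr ⟨fun h => huv h.symm, hv⟩)
  have h2 : ∑ x ∈ D.erase u, f x + f u = ∑ x ∈ D, f x :=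
    Finset.sum_erase_add _ _ hu
  omega

lemma val_add_one_ne {m : ℕ} (v : Fin (m+5)) (h : ¬ (v.val + 1 < m + 5)) : v + 1 = 0 := by
  apply Fin.ext
  rw [Fin.add_def]
  simp only [Fin.val_one, Fin.val_zero]
  have : v.val < m + 5 := v.isLt
  have hv : v.val + 1 = m + 5 := by omega
  rw [hv, Nat.mod_self]

lemma wA_ineq {m : ℕ} (v u w : Fin (m+5)) (hv : v ≠ 0) (hu : u ≠ 0) (hw : w ≠ 0)
    (hcase : (u = v + 1 ∧ w = v - 1) ∨ (u = v - 1 ∧ w = v + 1)) :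
    wA (m+5) w ≤ wA (m+5) u + wA (m+5) v := by
  have hvlt : v.val < m+5 := v.isLt
  have hv1 : 1 ≤ v.val := (ne_zero_iff v).mp hv
  rcases hcase with ⟨hu', hw'⟩ | ⟨hu', hw'⟩
  · have hvn : v.val + 1 < m+5 := by
      by_contra hc
      exact hu (hu'.trans (val_add_one_ne v hc))
    have huval : u.val = v.val + 1 := by rw [hu']; exact val_add_one v hvn
    have hwval : w.val = v.val - 1 := by rw [hw']; exact val_sub_one v hv1
    have hw2 : 2 ≤ v.val := by
      have := (ne_zero_iff w).mp hw
      omega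
    unfold wA
    rw [huval, hwval]
    obtain ⟨b, hb⟩ : ∃ b, m+5 + 1 - (v.val + 1) = b := ⟨_, rfl⟩
    have e1 : m+5 + 1 - (v.val - 1) = b + 2 := by omega
    have e2 : m+5 + 1 - v.val = b + 1 := by omega
    rw [e1, e2, hb, Nat.fib_add_two]
  · have hvn : v.val + 1 < m+5 := by
      by_contra hc
      exact hw (hw'.trans (val_add_one_ne v hc))
    have hwval : w.val = v.val + 1 := by rw [hw']; exact val_add_one v hvn
    have hle : wA (m+5) w ≤ wA (m+5) v := by
      unfold wA
      exact Nat.fib_mono (by omega)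
    exact hle.trans (Nat.le_add_left _ _)

lemma wB_ineq {m : ℕ} (v u w : Fin (m+5)) (hv : v ≠ 0) (hu : u ≠ 0) (hw : w ≠ 0)
    (hcase : (u = v + 1 ∧ w = v - 1) ∨ (u = v - 1 ∧ w = v + 1)) :
    wB (m+5) w ≤ wB (m+5) u + wB (m+5) v := by
  have hv1 : 1 ≤ v.val := (ne_zero_iff v).mp hv
  rcases hcase with ⟨hu', hw'⟩ | ⟨hu', hw'⟩
  · have hwval : w.val = v.val - 1 := by rw [hw']; exact val_sub_one v hv1
    have hle : wB (m+5) w ≤ wB (m+5) v := by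
      unfold wB
      exact Nat.fib_mono (by omega)
    exact hle.trans (Nat.le_add_left _ _)
  · have huval : u.val = v.val - 1 := by rw [hu']; exact val_sub_one v hv1
    have hu2 : 2 ≤ v.val := by
      have := (ne_zero_iff u).mp hu
      omega
    have hvn : v.val + 1 < m+5 := by
      by_contra hc
      exact hw (hw'.trans (val_add_one_ne v hc))
    have hwval : w.val = v.val + 1 := by rw [hw']; exact val_add_one v hvn
    unfold wB
    rw [huval, hwval]
    obtain ⟨b, hb⟩ : ∃ b, v.val - 1 + 1 = b := ⟨_, rfl⟩
    have e1 : v.val + 1 + 1 = b + 2 := by omega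
    have e2 : v.val + 1 = b + 1 := by omega
    rw [e1, e2, hb, Nat.fib_add_two]

lemma adj_cases {m : ℕ} {u v : Fin (m+5)} (h : (cycleGraph (m+5)).Adj u v) :
    u = v + 1 ∨ u = v - 1 := by
  have h' : (cycleGraph (m+3+2)).Adj u v := h
  rw [cycleGraph_adj] at h'
  rcases h' with h1 | h1
  · left
    have h2 := sub_eq_iff_eq_add.mp h1
    rw [h2]; (open Fin.CommRing in ring)
  · right
    have h2 := sub_eq_iff_eq_add.mp h1
    rw [h2]; (open Fin.CommRing in ring)

/-- structure of a move not involving 0 -/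
lemma move_struct {m : ℕ} {u v w : Fin (m+5)}
    (h1 : (cycleGraph (m+5)).Adj u v) (h2 : (cycleGraph (m+5)).Adj v w)
    (hne : w ≠ u) :
    (u = v + 1 ∧ w = v - 1) ∨ (u = v - 1 ∧ w = v + 1) := by
  rcases adj_cases h1 with hu | hu
  · rcases adj_cases h2.symm with hw | hw
    · exact absurd (hw.trans hu.symm) hne
    · exact Or.inl ⟨hu, hw⟩
  · rcases adj_cases h2.symm with hw | hw
    · exact Or.inr ⟨hu, hw⟩
    · exact absurd (hw.trans hu.symm) hne

lemma neg_one_val {m : ℕ} : ((0 : Fin (m+5)) - 1).val = m + 4 := by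
  rw [Fin.sub_def]
  simp only [Fin.val_one, Fin.val_zero]
  rw [Nat.add_zero, Nat.mod_eq_of_lt (by omega)]
  omega

lemma final_move {m : ℕ} {D : Finset (Fin (m+5))} {u v : Fin (m+5)}
    (h1 : (cycleGraph (m+5)).Adj u v) (h2 : (cycleGraph (m+5)).Adj v 0)
    (hu : u ∈ D) (hv : v ∈ D) (h0 : (0 : Fin (m+5)) ∉ D) :
    Nat.fib (m+6) ≤ ∑ x ∈ D, wA (m+5) x ∨ Nat.fib (m+6) ≤ ∑ x ∈ D, wB (m+5) x := by
  have huv : u ≠ v := h1.ne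
  have hu0 : u ≠ 0 := fun h => h0 (h ▸ hu)
  have hpair : ∀ f : Fin (m+5) → ℕ, f u + f v ≤ ∑ x ∈ D, f x := by
    intro f
    have hsub : {u, v} ⊆ D := by
      intro x hx
      rcases Finset.mem_insert.mp hx with h | h
      · exact h ▸ hu
      · exact (Finset.mem_singleton.mp h) ▸ hv
    calc f u + f v = ∑ x ∈ ({u, v} : Finset (Fin (m+5))), f x := (Finset.sum_pair huv).symm
    _ ≤ ∑ x ∈ D, f x := Finset.sum_le_sum_of_subset hsub
  rcases adj_cases h2 with hv1 | hv1
  · -- v = 0 + 1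
    left
    have hvv : v.val = 1 := by
      rw [hv1, val_add_one 0 (by simp)]
      simp
    rcases adj_cases h1 with hu1 | hu1
    · have huu : u.val = 2 := by
        rw [hu1, val_add_one v (by omega)]
        omega
      have : wA (m+5) u + wA (m+5) v = Nat.fib (m+6) := by
        unfold wA
        rw [huu, hvv]
        have e1 : m + 5 + 1 - 2 = m + 4 := by omega
        have e2 : m + 5 + 1 - 1 = m + 5 := by omega
        rw [e1, e2]
        have h46 : Nat.fib (m+6) = Nat.fib (m+4) + Nat.fib (m+5) := Nat.fib_add_two
        omega
      rw [← this]
      exact hpair _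
    · exfalso
      apply hu0
      rw [hu1, hv1]
      (open Fin.CommRing in ring)
  · -- v = 0 - 1
    right
    have hvv : v.val = m + 4 := by rw [hv1, neg_one_val]
    rcases adj_cases h1 with hu1 | hu1
    · exfalso
      apply hu0
      rw [hu1, hv1]
      (open Fin.CommRing in ring)
    · have huu : u.val = m + 3 := by
        rw [hu1, val_sub_one v (by omega)]
        omega
      have : wB (m+5) u + wB (m+5) v = Nat.fib (m+6) := by
        unfold wB
        rw [huu, hvv, show m+3+1 = m+4 from rfl, show m+4+1 = m+5 from rfl]
        have h46 : Nat.fib (m+6) = Nat.fib (m+4) + Nat.fib (m+5) := Nat.fib_add_two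
        omega
      rw [← this]
      exact hpair _

lemma invariant {m : ℕ} {D0 D : Finset (Fin (m+5))}
    (h : Relation.ReflTransGen (PegMove (cycleGraph (m+5))) D0 D)
    (h0 : (0 : Fin (m+5)) ∉ D0)
    (hA : ∑ x ∈ D0, wA (m+5) x < Nat.fib (m+6))
    (hB : ∑ x ∈ D0, wB (m+5) x < Nat.fib (m+6)) :
    (0 : Fin (m+5)) ∉ D ∧ ∑ x ∈ D, wA (m+5) x < Nat.fib (m+6)
      ∧ ∑ x ∈ D, wB (m+5) x < Nat.fib (m+6) := by
  induction h with
  | refl => exact ⟨h0, hA, hB⟩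
  | tail hbc hmove ih =>
    rename_i b c
    obtain ⟨hb0, hbA, hbB⟩ := ih
    obtain ⟨u, v, w, h1, h2, hu, hv, hw, hc⟩ := hmove
    have hu0 : u ≠ 0 := fun h => hb0 (h ▸ hu)
    have hv0 : v ≠ 0 := fun h => hb0 (h ▸ hv)
    by_cases hw0 : w = 0
    · exfalso
      subst hw0
      rcases final_move h1 h2 hu hv hb0 with h | h
      · omega
      · omega
    · have hwu : w ≠ u := fun h => hw (h ▸ hu)
      have hstruct := move_struct h1 h2 hwu
      have huv : u ≠ v := h1.ne
      constructor
      · rw [hc]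
        intro hmem
        rcases Finset.mem_insert.mp hmem with h | h
        · exact hw0 h.symm
        · exact hb0 (Finset.mem_of_mem_erase (Finset.mem_of_mem_erase h))
      constructor
      · calc ∑ x ∈ c, wA (m+5) x
            ≤ ∑ x ∈ b, wA (m+5) x := by
              rw [hc]
              exact sum_move _ b u v w hu hv hw huv (wA_ineq v u w hv0 hu0 hw0 hstruct)
        _ < Nat.fib (m+6) := hbA
      · calc ∑ x ∈ c, wB (m+5) x
            ≤ ∑ x ∈ b, wB (m+5) x := by
              rw [hc]
              exact sum_move _ b u v w hu hv hw huv (wB_ineq v u w hv0 hu0 hw0 hstruct)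
        _ < Nat.fib (m+6) := hbB

lemma sumA (m : ℕ) : ∀ k, k ≤ m + 2 →
    (∑ j ∈ Finset.range k, Nat.fib (m+4-j)) + Nat.fib (m+6-k) = Nat.fib (m+6) := by
  intro k
  induction k with
  | zero => simp
  | succ k ih =>
    intro hk
    rw [Finset.sum_range_succ]
    have ih' := ih (by omega)
    obtain ⟨b, hb⟩ : ∃ b, m + 4 - k = b := ⟨_, rfl⟩
    have hb3 : 2 ≤ b := by omega
    have e1 : m + 6 - k = b + 2 := by omega
    have e2 : m + 6 - (k+1) = b + 1 := by omega
    have hfib : Nat.fib (b+2) = Nat.fib b + Nat.fib (b+1) := Nat.fib_add_two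
    rw [e1] at ih'
    rw [e2, hb]
    omega

lemma sumB : ∀ k, (∑ j ∈ Finset.range k, Nat.fib (j+3)) + 3 = Nat.fib (k+4) := by
  intro k
  induction k with
  | zero => simp [Nat.fib]
  | succ k ih =>
    rw [Finset.sum_range_succ]
    have hfib : Nat.fib (k+5) = Nat.fib (k+3) + Nat.fib (k+4) := Nat.fib_add_two
    rw [show k+1+4 = k+5 from rfl]
    omega

def D0 (m k : ℕ) : Finset (Fin (m+5)) :=
  (Finset.range k).image (fun j => (⟨(j+2) % (m+5), Nat.mod_lt _ (by omega)⟩ : Fin (m+5)))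

lemma D0_spec (m k : ℕ) (hk : k ≤ m + 2) :
    (D0 m k).card = k ∧ (0 : Fin (m+5)) ∉ D0 m k ∧
    ∑ x ∈ D0 m k, wA (m+5) x < Nat.fib (m+6) ∧
    ∑ x ∈ D0 m k, wB (m+5) x < Nat.fib (m+6) := by
  have hmod : ∀ j, j ∈ Finset.range k → (j+2) % (m+5) = j + 2 := by
    intro j hj
    rw [Finset.mem_range] at hj
    exact Nat.mod_eq_of_lt (by omega)
  have hinj : ∀ x ∈ Finset.range k, ∀ y ∈ Finset.range k,
      (fun j => (⟨(j+2) % (m+5), Nat.mod_lt _ (by omega)⟩ : Fin (m+5))) x =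
      (fun j => (⟨(j+2) % (m+5), Nat.mod_lt _ (by omega)⟩ : Fin (m+5))) y → x = y := by
    intro x hx y hy hxy
    simp only [Fin.mk.injEq] at hxy
    rw [hmod x hx, hmod y hy] at hxy
    omega
  refine ⟨?_, ?_, ?_, ?_⟩
  · rw [D0, Finset.card_image_of_injOn hinj, Finset.card_range]
  · rw [D0]
    intro hmem
    obtain ⟨j, hj, hj2⟩ := Finset.mem_image.mp hmem
    have := congrArg Fin.val hj2
    simp only [Fin.val_zero] at this
    rw [hmod j hj] at this
    omega
  · rw [D0, Finset.sum_image hinj]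
    have hcongr : ∑ j ∈ Finset.range k,
        wA (m+5) (⟨(j+2) % (m+5), Nat.mod_lt _ (by omega)⟩ : Fin (m+5)) =
        ∑ j ∈ Finset.range k, Nat.fib (m+4-j) := by
      apply Finset.sum_congr rfl
      intro j hj
      unfold wA
      simp only
      rw [hmod j hj]
      congr 1
      rw [Finset.mem_range] at hj
      omega
    rw [hcongr]
    have h1 := sumA m k hk
    have h2 : 0 < Nat.fib (m+6-k) := Nat.fib_pos.mpr (by omega)
    omega
  · rw [D0, Finset.sum_image hinj]
    have hcongr : ∑ j ∈ Finset.range k,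
        wB (m+5) (⟨(j+2) % (m+5), Nat.mod_lt _ (by omega)⟩ : Fin (m+5)) =
        ∑ j ∈ Finset.range k, Nat.fib (j+3) := by
      apply Finset.sum_congr rfl
      intro j hj
      unfold wB
      simp only
      rw [hmod j hj]
    rw [hcongr]
    have h1 := sumB k
    have h2 : Nat.fib (k+4) ≤ Nat.fib (m+6) := Nat.fib_mono (by omega)
    omega

lemma lower (m k : ℕ) (hk : k ≤ m + 2) :
    ∃ D : Finset (Fin (m+5)), D.card = k ∧ PegReach (cycleGraph (m+5)) D ≠ Set.univ := by
  obtain ⟨hcard, h0, hA, hB⟩ := D0_spec m k hk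
  refine ⟨D0 m k, hcard, fun huniv => ?_⟩
  have h0mem : (0 : Fin (m+5)) ∈ PegReach (cycleGraph (m+5)) (D0 m k) := by
    rw [huniv]; trivial
  obtain ⟨D', hrel, h0D'⟩ := h0mem
  exact (invariant hrel h0 hA hB).1 h0D'

lemma val_c2 {m : ℕ} : ((1 : Fin (m+5)) + 1).val = 2 := by
  rw [val_add_one 1 (by rw [Fin.val_one]; omega)]
  rw [Fin.val_one]

lemma val_cn2 {m : ℕ} : ((0 : Fin (m+5)) - 1 - 1).val = m + 3 := by
  rw [val_sub_one _ (by rw [neg_one_val]; omega), neg_one_val]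
  omega

lemma upper (m : ℕ) (D : Finset (Fin (m+5))) (hD : D.card = m+3) :
    PegReach (cycleGraph (m+5)) D = Set.univ := by
  apply Set.eq_univ_of_forall
  intro t
  by_cases ht : t ∈ D
  · exact ⟨D, Relation.ReflTransGen.refl, ht⟩
  have hcompl : Dᶜ.card = 2 := by
    rw [Finset.card_compl, Fintype.card_fin, hD]; omega
  have htc : t ∈ Dᶜ := Finset.mem_compl.mpr ht
  have h1 : (Dᶜ.erase t).card = 1 := by
    rw [Finset.card_erase_of_mem htc, hcompl]
  obtain ⟨s, hs⟩ := Finset.card_eq_one.mp h1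
  have hmem : ∀ x : Fin (m+5), x ≠ t → x ≠ s → x ∈ D := by
    intro x hxt hxs
    by_contra hx
    have hx1 : x ∈ Dᶜ.erase t := Finset.mem_erase.mpr ⟨hxt, Finset.mem_compl.mpr hx⟩
    rw [hs] at hx1
    exact hxs (Finset.mem_singleton.mp hx1)
  -- constants
  have key : ∀ c c' : Fin (m+5), c ≠ c' → t + c ≠ t + c' :=
    fun c c' h hc => h (add_left_cancel hc)
  have e_r1 : t + 1 = t + 1 := rfl
  have e_r2 : t + 1 + 1 = t + (1 + 1) := by (open Fin.CommRing in ring)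
  have e_l1 : t - 1 = t + (0 - 1) := by (open Fin.CommRing in ring)
  have e_l2 : t - 1 - 1 = t + (0 - 1 - 1) := by (open Fin.CommRing in ring)
  have e_t : t = t + 0 := by (open Fin.CommRing in ring)
  have hval : ∀ a b : Fin (m+5), a.val ≠ b.val → a ≠ b := fun a b h hc => h (by rw [hc])
  have c10 : (1 : Fin (m+5)) ≠ 0 := hval _ _ (by simp [Fin.val_one])
  have c20 : (1 : Fin (m+5)) + 1 ≠ 0 := hval _ _ (by rw [val_c2]; simp)
  have cn10 : (0 : Fin (m+5)) - 1 ≠ 0 := hval _ _ (by rw [neg_one_val]; simp)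
  have cn20 : (0 : Fin (m+5)) - 1 - 1 ≠ 0 := hval _ _ (by rw [val_cn2]; simp)
  have c1n1 : (1 : Fin (m+5)) ≠ 0 - 1 := hval _ _ (by rw [Fin.val_one, neg_one_val]; omega)
  have c1n2 : (1 : Fin (m+5)) ≠ 0 - 1 - 1 := hval _ _ (by rw [Fin.val_one, val_cn2]; omega)
  have c2n1 : (1 : Fin (m+5)) + 1 ≠ 0 - 1 := hval _ _ (by rw [val_c2, neg_one_val]; omega)
  have c2n2 : (1 : Fin (m+5)) + 1 ≠ 0 - 1 - 1 := hval _ _ (by rw [val_c2, val_cn2]; omega)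
  -- adjacencies
  have adjR1 : (cycleGraph (m+3+2)).Adj (t+1+1) (t+1) := by
    rw [cycleGraph_adj]
    left; (open Fin.CommRing in ring)
  have adjR2 : (cycleGraph (m+3+2)).Adj (t+1) t := by
    rw [cycleGraph_adj]
    left; (open Fin.CommRing in ring)
  have adjL1 : (cycleGraph (m+3+2)).Adj (t-1-1) (t-1) := by
    rw [cycleGraph_adj]
    right; (open Fin.CommRing in ring)
  have adjL2 : (cycleGraph (m+3+2)).Adj (t-1) t := by
    rw [cycleGraph_adj]
    right; (open Fin.CommRing in ring)
  by_cases hcase : s = t + 1 ∨ s = t + 1 + 1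
  · -- use left side : u = t-1-1, v = t-1, w = t
    have hsl1 : t - 1 ≠ s := by
      rcases hcase with h | h <;> rw [h, e_l1] <;>
        [exact key _ _ (Ne.symm c1n1); skip]
      rw [e_r2]
      exact key _ _ (Ne.symm c2n1)
    have hsl2 : t - 1 - 1 ≠ s := by
      rcases hcase with h | h <;> rw [h, e_l2] <;>
        [exact key _ _ (Ne.symm c1n2); skip]
      rw [e_r2]
      exact key _ _ (Ne.symm c2n2)
    have hv : t - 1 ∈ D := hmem _ (by rw [e_l1]; nth_rewrite 2 [e_t]; exact key _ _ cn10) hsl1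
    have hu : t - 1 - 1 ∈ D := hmem _ (by rw [e_l2]; nth_rewrite 2 [e_t]; exact key _ _ cn20) hsl2
    exact ⟨insert t ((D.erase (t-1-1)).erase (t-1)),
      Relation.ReflTransGen.single ⟨t-1-1, t-1, t, adjL1, adjL2, hu, hv, ht, rfl⟩,
      Finset.mem_insert_self _ _⟩
  · push_neg at hcase
    obtain ⟨hs1, hs2⟩ := hcase
    have hv : t + 1 ∈ D := hmem _ (by nth_rewrite 2 [e_t]; exact key _ _ c10)
      (fun h => hs1 h.symm)
    have hu : t + 1 + 1 ∈ D := hmem _ (by rw [e_r2]; nth_rewrite 2 [e_t]; exact key _ _ c20)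
      (fun h => hs2 h.symm)
    exact ⟨insert t ((D.erase (t+1+1)).erase (t+1)),
      Relation.ReflTransGen.single ⟨t+1+1, t+1, t, adjR1, adjR2, hu, hv, ht, rfl⟩,
      Finset.mem_insert_self _ _⟩

end PegCycleAux

theorem peggingNumber_cycleGraph (n : ℕ) (hn : 5 ≤ n) :
    PeggingNumber (SimpleGraph.cycleGraph n) = n - 2 := by
  obtain ⟨m, rfl⟩ : ∃ m, n = m + 5 := ⟨n - 5, by omega⟩
  have h2 : m + 5 - 2 = m + 3 := by omega
  rw [h2]
  unfold PeggingNumber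
  set S := {k | 0 < k ∧ ∀ D : Finset (Fin (m+5)), D.card = k →
    PegReach (cycleGraph (m+5)) D = Set.univ} with hS
  have hmem : (m + 3) ∈ S := ⟨by omega, fun D hD => PegCycleAux.upper m D hD⟩
  apply le_antisymm (Nat.sInf_le hmem)
  by_contra hlt
  push_neg at hlt
  have hne : S.Nonempty := ⟨m + 3, hmem⟩
  obtain ⟨hpos, hall⟩ := Nat.sInf_mem hne
  obtain ⟨D, hcard, hbad⟩ := PegCycleAux.lower m (sInf S) (by omega)
  exact hbad (hall D hcard)
end

section
/- For n ≥ 3, the optimal pegging number of the cycle C_n is ⌈n/2⌉. -/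
open SimpleGraph Finset

variable {V : Type*} {W : Type*}

namespace CyclePeg

open scoped Fin.NatCast Fin.CommRing

variable {m : ℕ}

/-- The chain predicate characterizing (a superset of) reachability. -/
def Pred (m : ℕ) (D : Finset (Fin (m+3))) (t : Fin (m+3)) : Prop :=
  t ∈ D ∨ ∃ (ε : Fin (m+3)) (k : ℕ), (ε = 1 ∨ ε = -1) ∧ 2*k+2 < m+3 ∧
    (∀ i ≤ k, t - ε*((2*i+1 : ℕ) : Fin (m+3)) ∈ D) ∧ t - ε*((2*k+2 : ℕ) : Fin (m+3)) ∈ D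

lemma castF_inj {a b : ℕ} (ha : a < m+3) (hb : b < m+3)
    (h : (a : Fin (m+3)) = b) : a = b := by
  have := congrArg Fin.val h
  rwa [Fin.val_cast_of_lt ha, Fin.val_cast_of_lt hb] at this

lemma pos_inj {t ε : Fin (m+3)} (hε : ε = 1 ∨ ε = -1) {a b : ℕ}
    (ha : a < m+3) (hb : b < m+3)
    (h : t - ε*(a : Fin (m+3)) = t - ε*(b : Fin (m+3))) : a = b := by
  have h1 : ε*(a : Fin (m+3)) = ε*b := by
    linear_combination -h
  have h2 : (a : Fin (m+3)) = b := by
    rcases hε with rfl | rfl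
    · simpa using h1
    · have := congrArg (fun x => (-1 : Fin (m+3)) * x) h1
      simpa using this
  exact castF_inj ha hb h2

lemma pred_step {D D' : Finset (Fin (m+3))} {t : Fin (m+3)}
    (h : PegMove (SimpleGraph.cycleGraph (m+3)) D D') (hp : Pred m D' t) : Pred m D t := by
  obtain ⟨u, v, w, huv, hvw, hu, hv, hw, hD'⟩ := h
  rw [cycleGraph_adj] at huv hvw
  -- extract the direction δ of the move: w = v + δ, u = v - δ
  obtain ⟨δ, hδ1, hwv, huv'⟩ :
      ∃ δ : Fin (m+3), (δ = 1 ∨ δ = -1) ∧ w = v + δ ∧ u = v - δ := by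
    rcases huv with h1 | h1 <;> rcases hvw with h2 | h2
    · -- u - v = 1, v - w = 1 : u = v + 1, w = v - 1
      exact ⟨-1, Or.inr rfl, by linear_combination -h2, by linear_combination h1⟩
    · -- u - v = 1, w - v = 1 : u = w, contradiction
      exact absurd (show u = w by linear_combination h1 - h2) (by rintro rfl; exact hw hu)
    · -- v - u = 1, v - w = 1 : u = w, contradiction
      exact absurd (show u = w by linear_combination h2 - h1) (by rintro rfl; exact hw hu)
    · -- v - u = 1, w - v = 1 : u = v - 1, w = v + 1
      exact ⟨1, Or.inl rfl, by linear_combination h2, by linear_combination -h1⟩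
  have hu' : u ∉ D' := by
    rw [hD']
    intro hc
    rcases Finset.mem_insert.mp hc with hc | hc
    · exact hw (hc ▸ hu)
    · exact (Finset.mem_erase.mp (Finset.mem_of_mem_erase hc)).1 rfl
  have hv' : v ∉ D' := by
    rw [hD']
    intro hc
    rcases Finset.mem_insert.mp hc with hc | hc
    · exact hw (hc ▸ hv)
    · exact (Finset.mem_erase.mp hc).1 rfl
  have memD : ∀ p, p ∈ D' → p ≠ w → p ∈ D := by
    intro p hp hpw
    rw [hD'] at hp
    rcases Finset.mem_insert.mp hp with hc | hc
    · exact absurd hc hpw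
    · exact Finset.mem_of_mem_erase (Finset.mem_of_mem_erase hc)
  rcases hp with ht | ⟨ε, k, hε, hk, hodd, hend⟩
  · -- t ∈ D'
    rcases Finset.mem_insert.mp (hD' ▸ ht) with rfl | ht'
    · -- t = w : witness (δ, 0)
      refine Or.inr ⟨δ, 0, hδ1, by omega, ?_, ?_⟩
      · intro i hi
        interval_cases i
        have : t - δ*((2*0+1 : ℕ) : Fin (m+3)) = v := by
          push_cast; linear_combination hwv
        rw [this]; exact hv
      · have : t - δ*((2*0+2 : ℕ) : Fin (m+3)) = u := by
          push_cast; linear_combination hwv - huv'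
        rw [this]; exact hu
    · exact Or.inl (Finset.mem_of_mem_erase (Finset.mem_of_mem_erase ht'))
  · have hδε : δ = ε ∨ δ = -ε := by
      rcases hδ1 with rfl | rfl <;> rcases hε with rfl | rfl
      · exact Or.inl rfl
      · exact Or.inr (by ring)
      · exact Or.inr (by ring)
      · exact Or.inl rfl
    by_cases hendw : t - ε*((2*k+2 : ℕ) : Fin (m+3)) = w
    · -- w is the chain end
      rcases hδε with rfl | rfl
      · -- δ = ε : extend the chain
        have hveq : v = t - δ*((2*k+3 : ℕ) : Fin (m+3)) := by
          push_cast
          push_cast at hendw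
          linear_combination -hendw - hwv
        have hueq : u = t - δ*((2*k+4 : ℕ) : Fin (m+3)) := by
          push_cast
          push_cast at hendw
          linear_combination huv' - hwv - hendw
        by_cases hsmall : 2*k+4 < m+3
        · refine Or.inr ⟨δ, k+1, hδ1, by omega, ?_, ?_⟩
          · intro i hi
            rcases Nat.lt_or_ge i (k+1) with hik | hik
            · have hik' : i ≤ k := by omega
              refine memD _ (hodd i hik') ?_
              intro hc
              have := pos_inj hδ1 (by omega) (by omega) (hc.trans hendw.symm)
              omega
            · have : i = k+1 := by omega
              subst this
              have : t - δ*((2*(k+1)+1 : ℕ) : Fin (m+3)) = v := by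
                rw [hveq]; push_cast; ring
              rw [this]; exact hv
          · have : t - δ*((2*(k+1)+2 : ℕ) : Fin (m+3)) = u := by
              rw [hueq]; push_cast; ring
            rw [this]; exact hu
        · -- wrap-around: 2k+4 = m+3 or m+4, so u = t or v = t
          rcases (show 2*k+4 = m+3 ∨ 2*k+3 = m+3 by omega) with hc | hc
          · have : u = t := by
              have h0 : ((2*k+4 : ℕ) : Fin (m+3)) = 0 := by
                rw [hc]; exact Fin.natCast_self (m+3)
              rw [hueq, h0]; ring
            exact Or.inl (this ▸ hu)
          · have : v = t := by
              rw [hveq]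
              have h0 : ((2*k+3 : ℕ) : Fin (m+3)) = 0 := by
                rw [hc]; exact Fin.natCast_self (m+3)
              rw [h0]; ring
            exact Or.inl (this ▸ hv)
      · -- δ = -ε : contradiction, v is a required odd position
        exfalso
        have : t - ε*((2*k+1 : ℕ) : Fin (m+3)) = v := by
          push_cast
          push_cast at hendw
          linear_combination hendw + hwv
        exact hv' (this ▸ hodd k le_rfl)
    · by_cases hoddw : ∃ j, j ≤ k ∧ t - ε*((2*j+1 : ℕ) : Fin (m+3)) = w
      · obtain ⟨j, hj, hjw⟩ := hoddw
        rcases hδε with rfl | rfl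
        · -- δ = ε
          rcases Nat.lt_or_ge j k with hjk | hjk
          · exfalso
            have : t - δ*((2*(j+1)+1 : ℕ) : Fin (m+3)) = u := by
              push_cast
              push_cast at hjw
              linear_combination hjw + hwv - huv'
            exact hu' (this ▸ hodd (j+1) (by omega))
          · exfalso
            have hjk' : j = k := by omega
            subst hjk'
            have : t - δ*((2*j+2 : ℕ) : Fin (m+3)) = v := by
              push_cast
              push_cast at hjw
              linear_combination hjw + hwv
            exact hv' (this ▸ hend)
        · -- δ = -ε
          rcases Nat.eq_zero_or_pos j with rfl | hj0
          · -- v = t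
            have : v = t := by
              push_cast at hjw
              linear_combination -hjw - hwv
            exact Or.inl (this ▸ hv)
          · exfalso
            obtain ⟨j', rfl⟩ : ∃ j', j = j'+1 := ⟨j-1, by omega⟩
            have : t - ε*((2*j'+1 : ℕ) : Fin (m+3)) = u := by
              push_cast
              push_cast at hjw
              linear_combination hjw + hwv - huv'
            exact hu' (this ▸ hodd j' (by omega))
      · -- w not among required positions: same witness works
        push_neg at hoddw
        exact Or.inr ⟨ε, k, hε, hk, fun i hi => memD _ (hodd i hi) (hoddw i hi),
          memD _ hend hendw⟩


lemma reach_pred {D : Finset (Fin (m+3))} {t : Fin (m+3)}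
    (h : t ∈ PegReach (SimpleGraph.cycleGraph (m+3)) D) : Pred m D t := by
  obtain ⟨D', hRT, ht⟩ := h
  induction hRT using Relation.ReflTransGen.head_induction_on with
  | refl => exact Or.inl ht
  | head h' _ ih => exact pred_step h' ih

lemma card_bound {D : Finset (Fin (m+3))} (hall : ∀ t, Pred m D t) :
    m + 3 ≤ 2 * D.card := by
  classical
  have key : ∀ t : Fin (m+3), t ∉ D → t + 1 ∉ D →
      ∃ k : ℕ, (∀ i ≤ k, t - ((2*i+1 : ℕ) : Fin (m+3)) ∈ D) ∧
        t - ((2*k+2 : ℕ) : Fin (m+3)) ∈ D := by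
    intro t h0 h1
    rcases hall t with ht | ⟨ε, k, hε, _, ho, he⟩
    · exact absurd ht h0
    rcases hε with rfl | rfl
    · exact ⟨k, fun i hi => by simpa using ho i hi, by simpa using he⟩
    · exfalso
      apply h1
      have := ho 0 (Nat.zero_le k)
      have heq : t - (-1)*((2*0+1 : ℕ) : Fin (m+3)) = t + 1 := by push_cast; ring
      rwa [heq] at this
  set f : Fin (m+3) → Fin (m+3) := fun t =>
    if h1 : t + 1 ∈ D then t + 1
    else if h0 : t ∈ D then t
    else t - ((2 * (key t h0 h1).choose + 1 : ℕ) : Fin (m+3)) with hf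
  have fval2 : ∀ t (h0 : t ∉ D) (h1 : t + 1 ∉ D),
      f t = t - ((2 * (key t h0 h1).choose + 1 : ℕ) : Fin (m+3)) := by
    intro t h0 h1
    simp only [hf, dif_neg h1, dif_neg h0]
  have hmaps : ∀ t ∈ Dᶜ, f t ∈ D := by
    intro t ht
    rw [Finset.mem_compl] at ht
    by_cases h1 : t + 1 ∈ D
    · simpa only [hf, dif_pos h1] using h1
    · rw [fval2 t ht h1]
      exact (key t ht h1).choose_spec.1 _ le_rfl
  -- core asymmetric class-2 injectivity
  have core : ∀ t t' : Fin (m+3), t ∉ D → t' ∉ D → (h1 : t + 1 ∉ D) → (h1' : t' + 1 ∉ D) →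
      ∀ (h0 : t ∉ D) (h0' : t' ∉ D),
      (key t h0 h1).choose ≤ (key t' h0' h1').choose →
      t - ((2 * (key t h0 h1).choose + 1 : ℕ) : Fin (m+3)) =
        t' - ((2 * (key t' h0' h1').choose + 1 : ℕ) : Fin (m+3)) → t = t' := by
    intro t t' _ _ h1 h1' h0 h0' hkk heq
    set k := (key t h0 h1).choose
    set k' := (key t' h0' h1').choose
    rcases Nat.eq_or_lt_of_le hkk with hk | hk
    · rw [← hk] at heq
      have : t - ((2*k+1:ℕ) : Fin (m+3)) + ((2*k+1:ℕ) : Fin (m+3)) =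
          t' - ((2*k+1:ℕ) : Fin (m+3)) + ((2*k+1:ℕ) : Fin (m+3)) := by rw [heq]
      simpa using this
    · exfalso
      apply h1
      obtain ⟨d, hd⟩ : ∃ d, k' = k + d + 1 := ⟨k' - k - 1, by omega⟩
      have heq2 : t + 1 = t' - ((2*d+1 : ℕ) : Fin (m+3)) := by
        rw [hd] at heq
        push_cast at heq ⊢
        linear_combination heq
      rw [heq2]
      exact (key t' h0' h1').choose_spec.1 d (by omega)
  have hinj : Set.InjOn f ↑(Dᶜ) := by
    intro t ht t' ht' heq
    rw [Finset.coe_compl, Set.mem_compl_iff, Finset.mem_coe] at ht ht'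
    by_cases h1 : t + 1 ∈ D <;> by_cases h1' : t' + 1 ∈ D
    · -- both class 1
      have e1 : f t = t + 1 := by simp only [hf, dif_pos h1]
      have e2 : f t' = t' + 1 := by simp only [hf, dif_pos h1']
      rw [e1, e2] at heq
      exact add_right_cancel heq
    · -- t class 1, t' class 2
      exfalso
      have e1 : f t = t + 1 := by simp only [hf, dif_pos h1]
      rw [e1, fval2 t' ht' h1'] at heq
      apply ht
      have : t = t' - ((2 * (key t' ht' h1').choose + 2 : ℕ) : Fin (m+3)) := by
        push_cast at heq ⊢
        linear_combination heq
      rw [this]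
      exact (key t' ht' h1').choose_spec.2
    · exfalso
      have e1 : f t' = t' + 1 := by simp only [hf, dif_pos h1']
      rw [e1, fval2 t ht h1] at heq
      apply ht'
      have : t' = t - ((2 * (key t ht h1).choose + 2 : ℕ) : Fin (m+3)) := by
        push_cast at heq ⊢
        linear_combination -heq
      rw [this]
      exact (key t ht h1).choose_spec.2
    · -- both class 2
      rw [fval2 t ht h1, fval2 t' ht' h1'] at heq
      rcases le_total (key t ht h1).choose (key t' ht' h1').choose with hkk | hkk
      · exact core t t' ht ht' h1 h1' ht ht' hkk heq
      · exact (core t' t ht' ht h1' h1 ht' ht hkk heq.symm).symm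
  have hcard := Finset.card_le_card_of_injOn f hmaps hinj
  have h1 : Dᶜ.card = (m+3) - D.card := by
    rw [Finset.card_compl]
    simp [Fintype.card_fin]
  have h2 : D.card ≤ m+3 := by
    simpa using Finset.card_le_univ D
  omega


/-- Intermediate states of the cascade: a peg at `2j` plus pegs at odd
positions `2i+1` for `j ≤ i < (m+2)/2`. -/
def T (m j : ℕ) : Finset (Fin (m+3)) :=
  insert ((2*j : ℕ) : Fin (m+3))
    ((Finset.Ico j ((m+2)/2)).image (fun i => ((2*i+1 : ℕ) : Fin (m+3))))

lemma mem_T {j : ℕ} {x : Fin (m+3)} :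
    x ∈ T m j ↔ x = ((2*j : ℕ) : Fin (m+3)) ∨
      ∃ i, j ≤ i ∧ i < (m+2)/2 ∧ x = ((2*i+1 : ℕ) : Fin (m+3)) := by
  simp only [T, Finset.mem_insert, Finset.mem_image, Finset.mem_Ico]
  constructor
  · rintro (h | ⟨i, ⟨hi1, hi2⟩, rfl⟩)
    · exact Or.inl h
    · exact Or.inr ⟨i, hi1, hi2, rfl⟩
  · rintro (h | ⟨i, hi1, hi2, rfl⟩)
    · exact Or.inl h
    · exact Or.inr ⟨i, ⟨hi1, hi2⟩, rfl⟩

lemma adjF {u v : Fin (m+3)} (h : u - v = 1 ∨ v - u = 1) :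
    (SimpleGraph.cycleGraph (m+3)).Adj u v := cycleGraph_adj.mpr h

lemma cascade_step {j : ℕ} (hj : 2*(j+1) ≤ m+1) :
    PegMove (SimpleGraph.cycleGraph (m+3)) (T m j) (T m (j+1)) := by
  have hjK : j < (m+2)/2 := by omega
  refine ⟨((2*j : ℕ) : Fin (m+3)), ((2*j+1 : ℕ) : Fin (m+3)), ((2*j+2 : ℕ) : Fin (m+3)),
    adjF (Or.inr ?_), adjF (Or.inr ?_), ?_, ?_, ?_, ?_⟩
  · push_cast; ring
  · push_cast; ring
  · exact mem_T.mpr (Or.inl rfl)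
  · exact mem_T.mpr (Or.inr ⟨j, le_rfl, hjK, rfl⟩)
  · rw [mem_T]
    push_neg
    constructor
    · intro hc
      have := castF_inj (by omega) (by omega) hc
      omega
    · intro i _ hiK hc
      have := castF_inj (by omega) (by omega) hc
      omega
  · -- the resulting set equals T m (j+1)
    have h1 : ((2*j : ℕ) : Fin (m+3)) ∉
        ((Finset.Ico j ((m+2)/2)).image (fun i => ((2*i+1 : ℕ) : Fin (m+3)))) := by
      simp only [Finset.mem_image, Finset.mem_Ico]
      rintro ⟨i, ⟨_, hiK⟩, hc⟩
      have := castF_inj (by omega) (by omega) hc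
      omega
    have h2 : ((T m j).erase ((2*j : ℕ) : Fin (m+3))) =
        ((Finset.Ico j ((m+2)/2)).image (fun i => ((2*i+1 : ℕ) : Fin (m+3)))) := by
      rw [T, Finset.erase_insert h1]
    rw [h2]
    have h3 : (((Finset.Ico j ((m+2)/2)).image
          (fun i => ((2*i+1 : ℕ) : Fin (m+3)))).erase ((2*j+1 : ℕ) : Fin (m+3))) =
        ((Finset.Ico (j+1) ((m+2)/2)).image (fun i => ((2*i+1 : ℕ) : Fin (m+3)))) := by
      ext x
      simp only [Finset.mem_erase, Finset.mem_image, Finset.mem_Ico]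
      constructor
      · rintro ⟨hne, i, ⟨hji, hiK⟩, rfl⟩
        refine ⟨i, ⟨?_, hiK⟩, rfl⟩
        rcases Nat.eq_or_lt_of_le hji with rfl | h
        · exact absurd rfl hne
        · omega
      · rintro ⟨i, ⟨hji, hiK⟩, rfl⟩
        refine ⟨?_, i, ⟨by omega, hiK⟩, rfl⟩
        intro hc
        have := castF_inj (by omega) (by omega) hc
        omega
    rw [h3, T]
    have h4 : 2*(j+1) = 2*j+2 := by omega
    rw [h4]

lemma cascade (j : ℕ) (hj : 2*j ≤ m+1) :
    Relation.ReflTransGen (PegMove (SimpleGraph.cycleGraph (m+3))) (T m 0) (T m j) := by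
  induction j with
  | zero => exact Relation.ReflTransGen.refl
  | succ j ih =>
      exact Relation.ReflTransGen.tail (ih (by omega)) (cascade_step (by omega))

lemma natCast_last : ((m+2 : ℕ) : Fin (m+3)) = -1 := by
  have h3 : ((m+2 : ℕ) : Fin (m+3)) + 1 = 0 := by
    have : ((m+3 : ℕ) : Fin (m+3)) = 0 := Fin.natCast_self (m+3)
    calc ((m+2 : ℕ) : Fin (m+3)) + 1 = ((m+3 : ℕ) : Fin (m+3)) := by push_cast; ring
    _ = 0 := this
  linear_combination h3

lemma last_reach :
    ((m+2 : ℕ) : Fin (m+3)) ∈ PegReach (SimpleGraph.cycleGraph (m+3)) (T m 0) := by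
  have h1 : ((1 : ℕ) : Fin (m+3)) ∈ T m 0 :=
    mem_T.mpr (Or.inr ⟨0, le_rfl, by omega, by norm_num⟩)
  have h0 : ((0 : ℕ) : Fin (m+3)) ∈ T m 0 := mem_T.mpr (Or.inl (by norm_num))
  have hw : ((m+2 : ℕ) : Fin (m+3)) ∉ T m 0 := by
    rw [mem_T]
    push_neg
    constructor
    · intro hc
      have := castF_inj (by omega) (by omega) hc
      omega
    · intro i _ hiK hc
      have := castF_inj (by omega) (by omega) hc
      omega
  refine ⟨insert ((m+2 : ℕ) : Fin (m+3)) (((T m 0).erase ((1:ℕ) : Fin (m+3))).erase ((0:ℕ) : Fin (m+3))),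
    Relation.ReflTransGen.single ⟨((1:ℕ) : Fin (m+3)), ((0:ℕ) : Fin (m+3)), ((m+2 : ℕ) : Fin (m+3)),
      adjF (Or.inl (by push_cast; ring)), adjF (Or.inl ?_), h1, h0, hw, rfl⟩,
    Finset.mem_insert_self _ _⟩
  rw [natCast_last]
  push_cast
  ring

lemma reach_univ :
    PegReach (SimpleGraph.cycleGraph (m+3)) (T m 0) = Set.univ := by
  apply Set.eq_univ_of_forall
  intro t
  have hself : ∀ D : Finset (Fin (m+3)), ∀ x ∈ D,
      x ∈ PegReach (SimpleGraph.cycleGraph (m+3)) D :=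
    fun D x hx => ⟨D, Relation.ReflTransGen.refl, hx⟩
  have ht : t = ((t.val : ℕ) : Fin (m+3)) := (Fin.cast_val_eq_self t).symm
  have hlt : t.val < m+3 := t.isLt
  rcases Nat.even_or_odd t.val with ⟨j, hj⟩ | ⟨i, hi⟩
  · -- even value 2j
    rcases Nat.lt_or_ge (2*j) (m+2) with hsm | hbig
    · -- 2j ≤ m+1 : cascade
      refine ⟨T m j, cascade j (by omega), ?_⟩
      rw [ht]
      exact mem_T.mpr (Or.inl (by rw [hj]; congr 1; omega))
    · -- 2j = m+2
      have : t.val = m+2 := by omega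
      rw [ht, this]
      exact last_reach
  · -- odd value 2i+1
    rcases Nat.lt_or_ge (2*i+1) (m+2) with hsm | hbig
    · refine hself _ _ ?_
      rw [ht]
      refine mem_T.mpr (Or.inr ⟨i, Nat.zero_le i, by omega, by rw [hi]⟩)
    · have : t.val = m+2 := by omega
      rw [ht, this]
      exact last_reach

lemma card_T0 : (T m 0).card = (m+4)/2 := by
  rw [T]
  rw [Finset.card_insert_of_notMem]
  · rw [Finset.card_image_of_injOn]
    · simp only [Nat.card_Ico]
      omega
    · intro a ha b hb hab
      simp only [Finset.coe_Ico, Set.mem_Ico] at ha hb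
      have := castF_inj (by omega) (by omega) hab
      omega
  · simp only [Finset.mem_image, Finset.mem_Ico]
    rintro ⟨i, ⟨_, hiK⟩, hc⟩
    have := castF_inj (by omega) (by omega) hc
    omega


end CyclePeg

theorem optPeggingNumber_cycleGraph (n : ℕ) (hn : 3 ≤ n) :
    OptPeggingNumber (SimpleGraph.cycleGraph n) = (n + 1) / 2 := by
  obtain ⟨m, rfl⟩ : ∃ m, n = m + 3 := ⟨n - 3, by omega⟩
  have hmem : (m + 3 + 1) / 2 ∈ {k | 0 < k ∧ ∃ D : Finset (Fin (m+3)),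
      D.card = k ∧ PegReach (SimpleGraph.cycleGraph (m+3)) D = Set.univ} := by
    refine ⟨by omega, CyclePeg.T m 0, ?_, CyclePeg.reach_univ⟩
    rw [CyclePeg.card_T0]
  rw [OptPeggingNumber]
  apply le_antisymm
  · exact Nat.sInf_le hmem
  · apply le_csInf ⟨_, hmem⟩
    rintro k ⟨hk0, D, hcard, hreach⟩
    have hall : ∀ t, CyclePeg.Pred m D t := fun t =>
      CyclePeg.reach_pred (by rw [hreach]; trivial)
    have hb := CyclePeg.card_bound hall
    omega
end

section
/- For n ≥ 4, the pegging number of the path P_n on n vertices is n − 1. -/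
open SimpleGraph Finset

variable {V : Type*} {W : Type*}

namespace PegAux

/-- Fibonacci weight on the path, with weight 0 at the left endpoint. -/
def wt (n : ℕ) (i : Fin n) : ℕ := if i.val = 0 then 0 else Nat.fib (n - 1 - i.val)

lemma wt_bound {n : ℕ} {u v w : Fin n} (huv : (pathGraph n).Adj u v)
    (hvw : (pathGraph n).Adj v w) (huw : u ≠ w) :
    wt n w ≤ wt n u + wt n v := by
  rw [pathGraph_adj] at huv hvw
  have hu := u.isLt
  have hv := v.isLt
  have hw := w.isLt
  have hne : u.val ≠ w.val := fun h => huw (Fin.ext h)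
  unfold wt
  rcases huv with h1 | h1 <;> rcases hvw with h2 | h2
  · -- u+1=v, v+1=w : rightward move
    refine le_trans ?_ (Nat.le_add_left _ _)
    simp only [if_neg (show ¬ w.val = 0 by omega), if_neg (show ¬ v.val = 0 by omega)]
    exact Nat.fib_mono (by omega)
  · omega
  · omega
  · -- v+1=u, w+1=v : leftward move
    by_cases h0 : w.val = 0
    · simp [h0]
    · have e1 : n - 1 - w.val = (n - 1 - u.val) + 2 := by omega
      have e2 : n - 1 - v.val = (n - 1 - u.val) + 1 := by omega
      simp only [if_neg h0, if_neg (show ¬ v.val = 0 by omega),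
        if_neg (show ¬ u.val = 0 by omega), e1, e2]
      rw [Nat.fib_add_two]

lemma phi_le {n : ℕ} {D D' : Finset (Fin n)}
    (h : Relation.ReflTransGen (PegMove (pathGraph n)) D D') :
    ∑ i ∈ D', wt n i ≤ ∑ i ∈ D, wt n i := by
  induction h with
  | refl => exact le_rfl
  | tail hab hbc ih =>
    refine le_trans ?_ ih
    rename_i b c
    obtain ⟨u, v, w, huv, hvw, hu, hv, hw, rfl⟩ := hbc
    have hvu : v ≠ u := huv.ne'
    have hwu : u ≠ w := fun h => hw (h ▸ hu)
    have hwE : w ∉ (b.erase u).erase v := fun h =>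
      hw (Finset.mem_of_mem_erase (Finset.mem_of_mem_erase h))
    have hvmem : v ∈ b.erase u := Finset.mem_erase.2 ⟨hvu, hv⟩
    rw [Finset.sum_insert hwE, ← Finset.add_sum_erase _ _ hu,
      ← Finset.add_sum_erase _ _ hvmem]
    have hb := wt_bound huv hvw hwu
    calc wt n w + ∑ i ∈ (b.erase u).erase v, wt n i
        ≤ (wt n u + wt n v) + ∑ i ∈ (b.erase u).erase v, wt n i :=
          Nat.add_le_add_right hb _
      _ = wt n u + (wt n v + ∑ i ∈ (b.erase u).erase v, wt n i) := by ring

lemma sum_fib (m : ℕ) : (∑ j ∈ Finset.range m, Nat.fib j) + 1 = Nat.fib (m + 1) := by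
  induction m with
  | zero => simp
  | succ k ih =>
    rw [Finset.sum_range_succ, Nat.fib_add_two]
    omega

lemma phi_bad {n : ℕ} (hn : 4 ≤ n) (D : Finset (Fin n))
    (h1 : ∀ i ∈ D, i.val ≠ 1) (h2 : ∀ i ∈ D, i.val ≠ 2) :
    ∑ i ∈ D, wt n i < Nat.fib (n - 2) := by
  set G : ℕ → ℕ := fun i => if i ≤ 2 then 0 else Nat.fib (n - 1 - i) with hG
  have key : ∑ i ∈ D, wt n i ≤ ∑ j ∈ Finset.range (n - 3), Nat.fib j := by
    have step1 : ∑ i ∈ D, wt n i = ∑ i ∈ D, G i.val := by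
      refine Finset.sum_congr rfl fun i hi => ?_
      have hi1 := h1 i hi
      have hi2 := h2 i hi
      unfold wt
      by_cases h0 : i.val = 0
      · simp [hG, h0]
      · have : ¬ i.val ≤ 2 := by omega
        simp [hG, h0, this]
    have step2 : ∑ i ∈ D, G i.val ≤ ∑ i : Fin n, G i.val :=
      Finset.sum_le_sum_of_subset (Finset.subset_univ D)
    have step3 : ∑ i : Fin n, G i.val = ∑ i ∈ Finset.range n, G i :=
      Fin.sum_univ_eq_sum_range G n
    have step4 : ∑ i ∈ Finset.range n, G i
        = ∑ j ∈ Finset.range (n - 3), Nat.fib j := by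
      rw [← Finset.sum_range_reflect G n]
      have hzero : ∀ j ∈ Finset.range n, j ∉ Finset.range (n - 3) →
          G (n - 1 - j) = 0 := by
        intro j hj hj'
        simp only [Finset.mem_range] at hj hj'
        have : n - 1 - j ≤ 2 := by omega
        simp [hG, this]
      rw [← Finset.sum_subset (Finset.range_subset_range.2 (by omega)) hzero]
      refine Finset.sum_congr rfl fun j hj => ?_
      simp only [Finset.mem_range] at hj
      have h1' : ¬ n - 1 - j ≤ 2 := by omega
      have h2' : n - 1 - (n - 1 - j) = j := by omega
      simp [hG, h1', h2']
    omega
  have hfs := sum_fib (n - 3)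
  have he : n - 3 + 1 = n - 2 := by omega
  rw [he] at hfs
  omega

lemma one_not_reach {n : ℕ} (hn : 4 ≤ n) (D : Finset (Fin n))
    (h1 : ∀ i ∈ D, i.val ≠ 1) (h2 : ∀ i ∈ D, i.val ≠ 2) :
    (⟨1, by omega⟩ : Fin n) ∉ PegReach (pathGraph n) D := by
  rintro ⟨D', hRT, hmem⟩
  have hb : ∑ i ∈ D, wt n i < Nat.fib (n - 2) := phi_bad hn D h1 h2
  have hwt1 : wt n (⟨1, by omega⟩ : Fin n) = Nat.fib (n - 2) := by
    unfold wt
    rw [if_neg (by simp)]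
    congr 1
  have hge : Nat.fib (n - 2) ≤ ∑ i ∈ D', wt n i := by
    rw [← hwt1]
    exact Finset.single_le_sum (fun i _ => Nat.zero_le _) hmem
  have := le_trans hge (phi_le hRT)
  omega

lemma full_reach {n : ℕ} (hn : 4 ≤ n) (D : Finset (Fin n)) (hD : D.card = n - 1) :
    PegReach (pathGraph n) D = Set.univ := by
  ext t
  simp only [Set.mem_univ, iff_true]
  by_cases ht : t ∈ D
  · exact ⟨D, Relation.ReflTransGen.refl, ht⟩
  · have hmem : ∀ s : Fin n, s ≠ t → s ∈ D := by
      intro s hs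
      have hsub : D ⊆ Finset.univ.erase t := fun x hx =>
        Finset.mem_erase.2 ⟨fun h => ht (h ▸ hx), Finset.mem_univ x⟩
      have hcard : (Finset.univ.erase t).card = n - 1 := by
        rw [Finset.card_erase_of_mem (Finset.mem_univ t)]
        simp
      have hEq : D = Finset.univ.erase t :=
        Finset.eq_of_subset_of_card_le hsub (by omega)
      rw [hEq]
      exact Finset.mem_erase.2 ⟨hs, Finset.mem_univ s⟩
    rcases Nat.lt_or_ge t.val (n - 2) with hcase | hcase
    · -- use u = t+2, v = t+1
      refine ⟨_, Relation.ReflTransGen.single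
        ⟨⟨t.val + 2, by omega⟩, ⟨t.val + 1, by omega⟩, t, ?_, ?_, ?_, ?_, ht, rfl⟩,
        Finset.mem_insert_self t _⟩
      · rw [pathGraph_adj]; right; simp
      · rw [pathGraph_adj]; right; simp
      · exact hmem _ (fun h => by
          have := congrArg Fin.val h; simp at this)
      · exact hmem _ (fun h => by
          have := congrArg Fin.val h; simp at this)
    · -- t.val ≥ n - 2 ≥ 2 : use u = t-2, v = t-1
      have ht2 : 2 ≤ t.val := by omega
      refine ⟨_, Relation.ReflTransGen.single
        ⟨⟨t.val - 2, by omega⟩, ⟨t.val - 1, by omega⟩, t, ?_, ?_, ?_, ?_, ht, rfl⟩,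
        Finset.mem_insert_self t _⟩
      · rw [pathGraph_adj]; left; simp; omega
      · rw [pathGraph_adj]; left; simp; omega
      · exact hmem _ (fun h => by
          have := congrArg Fin.val h; simp at this; omega)
      · exact hmem _ (fun h => by
          have := congrArg Fin.val h; simp at this; omega)

end PegAux

theorem peggingNumber_pathGraph (n : ℕ) (hn : 4 ≤ n) :
    PeggingNumber (SimpleGraph.pathGraph n) = n - 1 := by
  have hmem : (n - 1) ∈ {k | 0 < k ∧ ∀ D : Finset (Fin n), D.card = k →
      PegReach (SimpleGraph.pathGraph n) D = Set.univ} :=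
    ⟨by omega, fun D hD => PegAux.full_reach hn D hD⟩
  unfold PeggingNumber
  apply le_antisymm
  · exact Nat.sInf_le hmem
  · apply le_csInf ⟨_, hmem⟩
    rintro k ⟨hk0, hk⟩
    by_contra hlt
    push_neg at hlt
    -- k < n - 1, build a bad distribution
    set S : Finset (Fin n) := Finset.univ.filter (fun i : Fin n => i.val ≠ 1 ∧ i.val ≠ 2)
      with hS
    have hSeq : S = Finset.univ \ {(⟨1, by omega⟩ : Fin n), ⟨2, by omega⟩} := by
      ext i
      simp [hS, Fin.ext_iff]
    have hScard : S.card = n - 2 := by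
      rw [hSeq, Finset.card_sdiff_of_subset (Finset.subset_univ _)]
      rw [Finset.card_pair (by simp [Fin.ext_iff])]
      simp
    obtain ⟨D, hDsub, hDcard⟩ := Finset.exists_subset_card_eq (show k ≤ S.card by omega)
    have h1 : ∀ i ∈ D, i.val ≠ 1 := fun i hi => by
      have := hDsub hi
      rw [hS] at this
      simp at this
      exact this.1
    have h2 : ∀ i ∈ D, i.val ≠ 2 := fun i hi => by
      have := hDsub hi
      rw [hS] at this
      simp at this
      exact this.2
    have hnr := PegAux.one_not_reach hn D h1 h2
    have hfull := hk D hDcard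
    rw [hfull] at hnr
    exact hnr (Set.mem_univ _)
end

section
/- For n ≥ 3, the optimal pegging number of the path P_n on n vertices is ⌈n/2⌉. -/
open SimpleGraph Finset

variable {V : Type*} {W : Type*}

namespace PegAux


def Lk (D : Finset ℤ) (p q : ℤ) : Prop := p ∈ D ∧ q ∈ D ∧ |p - q| ≤ 2
def Conn (D : Finset ℤ) : ℤ → ℤ → Prop := Relation.ReflTransGen (Lk D)
def Act (D : Finset ℤ) (y : ℤ) : Prop :=
  y ∈ D ∧ ∃ u, u ∈ D ∧ u + 1 ∈ D ∧ Conn D y u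
def SP (D : Finset ℤ) (x : ℤ) : Prop := x ∈ D ∨ ∃ y, Act D y ∧ |x - y| = 1
def Mv (D D' : Finset ℤ) : Prop :=
  ∃ v : ℤ,
    (v - 1 ∈ D ∧ v ∈ D ∧ v + 1 ∉ D ∧ D' = insert (v+1) ((D.erase (v-1)).erase v))
    ∨ (v + 1 ∈ D ∧ v ∈ D ∧ v - 1 ∉ D ∧ D' = insert (v-1) ((D.erase (v+1)).erase v))

theorem lk_symm {D : Finset ℤ} {p q : ℤ} (h : Lk D p q) : Lk D q p :=
  ⟨h.2.1, h.1, by rw [abs_sub_comm]; exact h.2.2⟩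
theorem conn_symm {D : Finset ℤ} {p q : ℤ} (h : Conn D p q) : Conn D q p :=
  (@Relation.ReflTransGen.symmetric _ (Lk D) ⟨fun _ _ hl => lk_symm hl⟩).symm _ _ h

section MonoRight

variable {D : Finset ℤ} {v : ℤ}

theorem mem_D' {x : ℤ} :
    x ∈ insert (v+1) ((D.erase (v-1)).erase v) ↔
      (x = v + 1 ∨ (x ∈ D ∧ x ≠ v - 1 ∧ x ≠ v)) := by
  simp only [Finset.mem_insert, Finset.mem_erase]
  tauto

theorem lemB (ha : v - 1 ∈ D) (hv : v ∈ D) (hb : v + 1 ∉ D)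
    {w : ℤ} (hw : w ≠ v + 1) :
    ∀ y, Conn (insert (v+1) ((D.erase (v-1)).erase v)) y w →
      (y ≠ v + 1 → Conn D y w) ∧
      (y = v + 1 → ∃ p, (p = v + 2 ∨ p = v + 3) ∧ p ∈ D ∧ Conn D p w) := by
  intro y h
  induction h using Relation.ReflTransGen.head_induction_on with
  | refl =>
    exact ⟨fun _ => Relation.ReflTransGen.refl, fun hy => absurd hy hw⟩
  | @head s c hl hc ih =>
    obtain ⟨hs', hc', hd⟩ := hl
    rw [mem_D'] at hs' hc'
    replace hd := abs_le.mp hd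
    by_cases hsb : s = v + 1
    · subst hsb
      refine ⟨fun h => absurd rfl h, fun _ => ?_⟩
      by_cases hcb : c = v + 1
      · exact ih.2 hcb
      · rcases hc' with hcb' | ⟨hcD, hc1, hc2⟩
        · exact absurd hcb' hcb
        have hcval : c = v + 2 ∨ c = v + 3 := by omega
        exact ⟨c, hcval, hcD, ih.1 hcb⟩
    · rcases hs' with hsb' | ⟨hsD, hs1, hs2⟩
      · exact absurd hsb' hsb
      refine ⟨fun _ => ?_, fun h => absurd h hsb⟩
      by_cases hcb : c = v + 1
      · subst hcb
        obtain ⟨p, hp23, hpD, hpconn⟩ := ih.2 rfl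
        have hsval : s = v + 2 ∨ s = v + 3 := by clear * - hd hs1 hs2 hsb; omega
        have hlk : Lk D s p := by
          refine ⟨hsD, hpD, abs_le.mpr ?_⟩
          rcases hsval with h1 | h1 <;> rcases hp23 with h2 | h2 <;>
            rw [h1, h2] <;> constructor <;> linarith
        exact Relation.ReflTransGen.head hlk hpconn
      · rcases hc' with hcb' | ⟨hcD, _, _⟩
        · exact absurd hcb' hcb
        exact Relation.ReflTransGen.head ⟨hsD, hcD, abs_le.mpr (by omega)⟩ (ih.1 hcb)

theorem act_v (ha : v - 1 ∈ D) (hv : v ∈ D) : Act D v := by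
  refine ⟨hv, v - 1, ha, ?_, ?_⟩
  · have h : v - 1 + 1 = v := by ring
    rw [h]; exact hv
  · exact Relation.ReflTransGen.single ⟨hv, ha, abs_le.mpr (by omega)⟩

theorem conn_yv (hv : v ∈ D) (hv2 : v + 2 ∈ D) {p : ℤ}
    (hp23 : p = v + 2 ∨ p = v + 3) (hpD : p ∈ D) : Conn D p v := by
  rcases hp23 with h | h
  · subst h
    exact Relation.ReflTransGen.single ⟨hpD, hv, abs_le.mpr (by omega)⟩
  · subst h
    refine Relation.ReflTransGen.head ⟨hpD, hv2, abs_le.mpr (by omega)⟩ ?_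
    exact Relation.ReflTransGen.single ⟨hv2, hv, abs_le.mpr (by omega)⟩

theorem mono_right (ha : v - 1 ∈ D) (hv : v ∈ D) (hb : v + 1 ∉ D) {x : ℤ}
    (h : SP (insert (v+1) ((D.erase (v-1)).erase v)) x) : SP D x := by
  rcases h with hx | ⟨y, ⟨hyD', u, hu, hu1, hconn⟩, hdist⟩
  · rw [mem_D'] at hx
    rcases hx with hx | ⟨hxD, _, _⟩
    · subst hx
      exact Or.inr ⟨v, act_v ha hv, abs_eq (by norm_num : (0:ℤ) ≤ 1) |>.mpr (by omega)⟩
    · exact Or.inl hxD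
  · have hdist' : x = y + 1 ∨ x = y - 1 := by
      rcases (abs_eq (by norm_num : (0:ℤ) ≤ 1)).mp hdist with h | h
      · exact Or.inl (by omega)
      · exact Or.inr (by omega)
    by_cases hyb : y = v + 1
    · subst hyb
      have hxv : x = v + 2 ∨ x = v := by omega
      rcases hxv with hx | hx
      · subst hx
        by_cases hv2 : v + 2 ∈ D
        · exact Or.inl hv2
        · -- pair (u,u+1) can't be (v+1, v+2) nor (v, v+1)
          have hub : u ≠ v + 1 := by
            intro h
            subst h
            rw [mem_D'] at hu1
            rcases hu1 with h | ⟨h, _, _⟩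
            · omega
            · exact hv2 (by rwa [show v + 1 + 1 = v + 2 by ring] at h)
          have hu1b : u + 1 ≠ v + 1 := by
            intro h
            have huv : u = v := by omega
            subst huv
            rw [mem_D'] at hu
            rcases hu with h' | ⟨_, _, h'⟩
            · omega
            · exact h' rfl
          obtain ⟨p, hp23, hpD, hpconn⟩ := (lemB ha hv hb hub (v+1) hconn).2 rfl
          have hp3 : p = v + 3 := by
            rcases hp23 with h | h
            · exact absurd (h ▸ hpD) hv2
            · exact h
          have huD : u ∈ D := by
            rw [mem_D'] at hu; rcases hu with h | ⟨h, _, _⟩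
            · exact absurd h hub
            · exact h
          have hu1D : u + 1 ∈ D := by
            rw [mem_D'] at hu1; rcases hu1 with h | ⟨h, _, _⟩
            · exact absurd h hu1b
            · exact h
          refine Or.inr ⟨p, ⟨hpD, u, huD, hu1D, hpconn⟩,
            abs_eq (by norm_num : (0:ℤ) ≤ 1) |>.mpr (by omega)⟩
      · exact Or.inl (hx ▸ hv)
    · have hyD : y ∈ D := by
        rw [mem_D'] at hyD'; rcases hyD' with h | ⟨h, _, _⟩
        · exact absurd h hyb
        · exact h
      by_cases hub : u = v + 1
      · subst hub
        have hv2 : v + 2 ∈ D := by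
          rw [mem_D'] at hu1
          rcases hu1 with h | ⟨h, _, _⟩
          · omega
          · rwa [show v + 1 + 1 = v + 2 by ring] at h
        obtain ⟨p, hp23, hpD, hpconn⟩ :=
          (lemB ha hv hb hyb (v+1) (conn_symm hconn)).2 rfl
        have hyv : Conn D y v := (conn_symm hpconn).trans (conn_yv hv hv2 hp23 hpD)
        have hyv1 : Conn D y (v - 1) :=
          hyv.trans (Relation.ReflTransGen.single ⟨hv, ha, abs_le.mpr (by omega)⟩)
        refine Or.inr ⟨y, ⟨hyD, v - 1, ha, ?_, hyv1⟩, hdist⟩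
        rw [show v - 1 + 1 = v by ring]; exact hv
      · by_cases hu1b : u + 1 = v + 1
        · exfalso
          have huv : u = v := by omega
          subst huv
          rw [mem_D'] at hu
          rcases hu with h | ⟨_, _, h⟩
          · omega
          · exact h rfl
        · have huD : u ∈ D := by
            rw [mem_D'] at hu; rcases hu with h | ⟨h, _, _⟩
            · exact absurd h hub
            · exact h
          have hu1D : u + 1 ∈ D := by
            rw [mem_D'] at hu1; rcases hu1 with h | ⟨h, _, _⟩
            · exact absurd h hu1b
            · exact h
          exact Or.inr ⟨y, ⟨hyD, u, huD, hu1D, (lemB ha hv hb hub y hconn).1 hyb⟩, hdist⟩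

end MonoRight

/-- negation image -/
def negF (D : Finset ℤ) : Finset ℤ := D.image (fun x => -x)

theorem mem_negF {D : Finset ℤ} {x : ℤ} : x ∈ negF D ↔ -x ∈ D := by
  constructor
  · rintro h
    rw [negF, Finset.mem_image] at h
    obtain ⟨a, ha, rfl⟩ := h
    simpa using ha
  · intro h
    rw [negF, Finset.mem_image]
    exact ⟨-x, h, by ring⟩

theorem negF_negF {D : Finset ℤ} : negF (negF D) = D := by
  ext x
  simp [mem_negF]

theorem lk_neg {D : Finset ℤ} {p q : ℤ} (h : Lk D p q) : Lk (negF D) (-p) (-q) := by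
  refine ⟨mem_negF.mpr (by simpa using h.1), mem_negF.mpr (by simpa using h.2.1), ?_⟩
  rw [show -p - -q = -(p - q) by ring, abs_neg]
  exact h.2.2

theorem conn_neg {D : Finset ℤ} {p q : ℤ} (h : Conn D p q) :
    Conn (negF D) (-p) (-q) :=
  Relation.ReflTransGen.lift (fun x => -x) (fun _ _ hl => lk_neg hl) _ _ h

theorem act_neg {D : Finset ℤ} {y : ℤ} (h : Act D y) : Act (negF D) (-y) := by
  obtain ⟨hy, u, hu, hu1, hconn⟩ := h
  refine ⟨mem_negF.mpr (by simpa using hy), -(u+1),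
    mem_negF.mpr (by simpa using hu1), ?_, ?_⟩
  · rw [show -(u+1) + 1 = -u by ring]
    exact mem_negF.mpr (by simpa using hu)
  · refine (conn_neg hconn).trans (Relation.ReflTransGen.single ?_)
    refine ⟨mem_negF.mpr (by simpa using hu), ?_, ?_⟩
    · exact mem_negF.mpr (by simpa using hu1)
    · rw [show -u - -(u+1) = 1 by ring]
      norm_num

theorem sp_neg {D : Finset ℤ} {x : ℤ} (h : SP D x) : SP (negF D) (-x) := by
  rcases h with h | ⟨y, hy, hd⟩
  · exact Or.inl (mem_negF.mpr (by simpa using h))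
  · refine Or.inr ⟨-y, act_neg hy, ?_⟩
    rw [show -x - -y = -(x - y) by ring, abs_neg]
    exact hd

theorem negF_insert {D : Finset ℤ} {a : ℤ} : negF (insert a D) = insert (-a) (negF D) := by
  rw [negF, Finset.image_insert]; rfl

theorem negF_erase {D : Finset ℤ} {a : ℤ} : negF (D.erase a) = (negF D).erase (-a) := by
  rw [negF, Finset.image_erase (neg_injective)]
  rfl






theorem mono_left {D : Finset ℤ} {v : ℤ} (ha : v + 1 ∈ D) (hv : v ∈ D) (hb : v - 1 ∉ D) {x : ℤ}
    (h : SP (insert (v-1) ((D.erase (v+1)).erase v)) x) : SP D x := by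
  have ha' : -v - 1 ∈ negF D := mem_negF.mpr (by rwa [show -(-v - 1) = v + 1 by ring])
  have hv' : -v ∈ negF D := mem_negF.mpr (by simpa using hv)
  have hb' : -v + 1 ∉ negF D := by
    rw [mem_negF, show -(-v + 1) = v - 1 by ring]
    exact hb
  have hx' : SP (insert (-v+1) (((negF D).erase (-v-1)).erase (-v))) (-x) := by
    have := sp_neg h
    rwa [negF_insert, negF_erase, negF_erase, show -(v-1) = -v + 1 by ring,
      show -(v+1) = -v - 1 by ring] at this
  have := mono_right ha' hv' hb' hx'
  have := sp_neg this
  rwa [negF_negF, neg_neg] at this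

theorem mv_mono {D D' : Finset ℤ} (h : Mv D D') {x : ℤ} (hx : SP D' x) : SP D x := by
  obtain ⟨v, h | h⟩ := h
  · exact mono_right h.1 h.2.1 h.2.2.1 (h.2.2.2 ▸ hx)
  · exact mono_left h.1 h.2.1 h.2.2.1 (h.2.2.2 ▸ hx)

theorem rtg_mono {D D' : Finset ℤ} (h : Relation.ReflTransGen Mv D D') {x : ℤ}
    (hx : SP D' x) : SP D x := by
  induction h with
  | refl => exact hx
  | tail _ hmv ih => exact ih (mv_mono hmv hx)

theorem conn_below {D : Finset ℤ} {g : ℤ} (hg : g ∉ D) (hg1 : g + 1 ∉ D) {y u : ℤ}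
    (h : Conn D y u) : y ≤ g - 1 → u ≤ g - 1 ∧ Conn (D.filter (· ≤ g - 1)) y u := by
  induction h using Relation.ReflTransGen.head_induction_on with
  | refl => exact fun h => ⟨h, Relation.ReflTransGen.refl⟩
  | @head s c hl hc ih =>
    intro hs
    obtain ⟨hsD, hcD, hd⟩ := hl
    replace hd := abs_le.mp hd
    have hcg : c ≠ g := fun h => hg (h ▸ hcD)
    have hcg1 : c ≠ g + 1 := fun h => hg1 (h ▸ hcD)
    have hc' : c ≤ g - 1 := by omega
    obtain ⟨hu, hconn⟩ := ih hc'
    refine ⟨hu, Relation.ReflTransGen.head ?_ hconn⟩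
    exact ⟨Finset.mem_filter.mpr ⟨hsD, hs⟩, Finset.mem_filter.mpr ⟨hcD, hc'⟩,
      abs_le.mpr (by omega)⟩

theorem conn_above {D : Finset ℤ} {g : ℤ} (hg : g ∉ D) (hg1 : g + 1 ∉ D) {y u : ℤ}
    (h : Conn D y u) : g + 2 ≤ y → g + 2 ≤ u ∧ Conn (D.filter (fun x => g + 2 ≤ x)) y u := by
  induction h using Relation.ReflTransGen.head_induction_on with
  | refl => exact fun h => ⟨h, Relation.ReflTransGen.refl⟩
  | @head s c hl hc ih =>
    intro hs
    obtain ⟨hsD, hcD, hd⟩ := hl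
    replace hd := abs_le.mp hd
    have hcg : c ≠ g := fun h => hg (h ▸ hcD)
    have hcg1 : c ≠ g + 1 := fun h => hg1 (h ▸ hcD)
    have hc' : g + 2 ≤ c := by omega
    obtain ⟨hu, hconn⟩ := ih hc'
    refine ⟨hu, Relation.ReflTransGen.head ?_ hconn⟩
    exact ⟨Finset.mem_filter.mpr ⟨hsD, hs⟩, Finset.mem_filter.mpr ⟨hcD, hc'⟩,
      abs_le.mpr (by omega)⟩

theorem sp_below {D : Finset ℤ} {g x : ℤ} (hg : g ∉ D) (hg1 : g + 1 ∉ D) (hx : x ≤ g)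
    (h : SP D x) : SP (D.filter (· ≤ g - 1)) x := by
  rcases h with h | ⟨y, ⟨hyD, u, hu, hu1, hconn⟩, hd⟩
  · have : x ≠ g := fun h' => hg (h' ▸ h)
    exact Or.inl (Finset.mem_filter.mpr ⟨h, by omega⟩)
  · replace hd := (abs_eq (by norm_num : (0:ℤ) ≤ 1)).mp hd
    have hyg : y ≠ g := fun h' => hg (h' ▸ hyD)
    have hyg1 : y ≠ g + 1 := fun h' => hg1 (h' ▸ hyD)
    have hy : y ≤ g - 1 := by omega
    obtain ⟨hug, hconn'⟩ := conn_below hg hg1 hconn hy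
    have hu1g : u + 1 ≠ g := fun h' => hg (h' ▸ hu1)
    refine Or.inr ⟨y, ⟨Finset.mem_filter.mpr ⟨hyD, hy⟩, u,
      Finset.mem_filter.mpr ⟨hu, hug⟩,
      Finset.mem_filter.mpr ⟨hu1, by omega⟩, hconn'⟩, ?_⟩
    rw [abs_eq (by norm_num : (0:ℤ) ≤ 1)]
    omega

theorem sp_above {D : Finset ℤ} {g x : ℤ} (hg : g ∉ D) (hg1 : g + 1 ∉ D) (hx : g + 1 ≤ x)
    (h : SP D x) : SP (D.filter (fun z => g + 2 ≤ z)) x := by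
  rcases h with h | ⟨y, ⟨hyD, u, hu, hu1, hconn⟩, hd⟩
  · have : x ≠ g + 1 := fun h' => hg1 (h' ▸ h)
    exact Or.inl (Finset.mem_filter.mpr ⟨h, by omega⟩)
  · replace hd := (abs_eq (by norm_num : (0:ℤ) ≤ 1)).mp hd
    have hyg : y ≠ g := fun h' => hg (h' ▸ hyD)
    have hyg1 : y ≠ g + 1 := fun h' => hg1 (h' ▸ hyD)
    have hy : g + 2 ≤ y := by omega
    obtain ⟨hug, hconn'⟩ := conn_above hg hg1 hconn hy
    have hu4 : g + 2 ≤ u + 1 := by omega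
    refine Or.inr ⟨y, ⟨Finset.mem_filter.mpr ⟨hyD, hy⟩, u,
      Finset.mem_filter.mpr ⟨hu, hug⟩,
      Finset.mem_filter.mpr ⟨hu1, hu4⟩, hconn'⟩, ?_⟩
    rw [abs_eq (by norm_num : (0:ℤ) ≤ 1)]
    omega

theorem dense_count : ∀ (len : ℕ) (a b : ℤ) (D : Finset ℤ), b + 1 - a ≤ (len : ℤ) →
    D ⊆ Finset.Icc a b →
    (∀ g, a ≤ g → g + 1 ≤ b → (g ∈ D ∨ g + 1 ∈ D)) →
    (a ∈ D ∨ a + 1 ∈ D) → (b ∈ D ∨ b - 1 ∈ D) →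
    (∃ u, u ∈ D ∧ u + 1 ∈ D) →
    b + 1 - a ≤ 2 * D.card := by
  intro len
  induction len using Nat.strong_induction_on with
  | _ len ih =>
  rintro a b D hlen hsub hdense hacov hbcov ⟨u, hu, hu1⟩
  by_cases hsmall : b + 1 - a ≤ 4
  · have h2 : 2 ≤ D.card := by
      have : 1 < D.card := Finset.one_lt_card.mpr ⟨u, hu, u + 1, hu1, by omega⟩
      omega
    have : (2 : ℤ) ≤ (D.card : ℤ) := by exact_mod_cast h2
    omega
  · have hb5 : a + 4 ≤ b := by omega
    have hlen5 : 5 ≤ len := by omega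
    by_cases hur : u + 1 ≤ b - 2
    · -- strip right two cells
      obtain ⟨t, htD, htgt⟩ : ∃ t, t ∈ D ∧ b - 2 < t := by
        rcases hbcov with h | h
        exacts [⟨b, h, by omega⟩, ⟨b - 1, h, by omega⟩]
      have key := ih (len - 2) (by omega) a (b - 2) (D.filter (· ≤ b - 2))
        (by omega)
        (fun x hx => by
          rw [Finset.mem_filter] at hx
          have := Finset.mem_Icc.mp (hsub hx.1)
          rw [Finset.mem_Icc]
          omega)
        (fun g hga hgb => by
          rcases hdense g hga (by omega) with h | h
          · exact Or.inl (Finset.mem_filter.mpr ⟨h, by omega⟩)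
          · exact Or.inr (Finset.mem_filter.mpr ⟨h, by omega⟩))
        (by
          rcases hacov with h | h
          · exact Or.inl (Finset.mem_filter.mpr ⟨h, by omega⟩)
          · exact Or.inr (Finset.mem_filter.mpr ⟨h, by omega⟩))
        (by
          rcases hdense (b - 3) (by omega) (by omega) with h | h
          · exact Or.inr (Finset.mem_filter.mpr
              ⟨by rwa [show b - 2 - 1 = b - 3 by ring], by omega⟩)
          · exact Or.inl (Finset.mem_filter.mpr
              ⟨by rwa [show b - 3 + 1 = b - 2 by ring] at h, by omega⟩))
        ⟨u, Finset.mem_filter.mpr ⟨hu, by omega⟩, Finset.mem_filter.mpr ⟨hu1, by omega⟩⟩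
      have hcard : (D.filter (· ≤ b - 2)).card + 1 ≤ D.card := by
        have hsub2 : D.filter (· ≤ b - 2) ⊆ D.erase t := by
          intro x hx
          rw [Finset.mem_filter] at hx
          exact Finset.mem_erase.mpr ⟨by omega, hx.1⟩
        have h1 := Finset.card_le_card hsub2
        have h2 := Finset.card_erase_of_mem htD
        have h3 : 1 ≤ D.card := Finset.card_pos.mpr ⟨t, htD⟩
        omega
      have hc' : ((D.filter (· ≤ b - 2)).card : ℤ) + 1 ≤ (D.card : ℤ) := by exact_mod_cast hcard
      omega
    · by_cases hul : a + 2 ≤ u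
      · -- strip left two cells
        obtain ⟨t, htD, htlt⟩ : ∃ t, t ∈ D ∧ t < a + 2 := by
          rcases hacov with h | h
          exacts [⟨a, h, by omega⟩, ⟨a + 1, h, by omega⟩]
        have key := ih (len - 2) (by omega) (a + 2) b (D.filter (fun z => a + 2 ≤ z))
          (by omega)
          (fun x hx => by
            rw [Finset.mem_filter] at hx
            have := Finset.mem_Icc.mp (hsub hx.1)
            rw [Finset.mem_Icc]
            omega)
          (fun g hga hgb => by
            rcases hdense g (by omega) hgb with h | h
            · exact Or.inl (Finset.mem_filter.mpr ⟨h, by omega⟩)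
            · exact Or.inr (Finset.mem_filter.mpr ⟨h, by omega⟩))
          (by
            rcases hdense (a + 2) (by omega) (by omega) with h | h
            · exact Or.inl (Finset.mem_filter.mpr ⟨h, by omega⟩)
            · exact Or.inr (Finset.mem_filter.mpr
                ⟨h, by omega⟩))
          (by
            rcases hbcov with h | h
            · exact Or.inl (Finset.mem_filter.mpr ⟨h, by omega⟩)
            · exact Or.inr (Finset.mem_filter.mpr ⟨h, by omega⟩))
          ⟨u, Finset.mem_filter.mpr ⟨hu, by omega⟩, Finset.mem_filter.mpr ⟨hu1, by omega⟩⟩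
        have hcard : (D.filter (fun z => a + 2 ≤ z)).card + 1 ≤ D.card := by
          have hsub2 : D.filter (fun z => a + 2 ≤ z) ⊆ D.erase t := by
            intro x hx
            rw [Finset.mem_filter] at hx
            exact Finset.mem_erase.mpr ⟨by omega, hx.1⟩
          have h1 := Finset.card_le_card hsub2
          have h2 := Finset.card_erase_of_mem htD
          have h3 : 1 ≤ D.card := Finset.card_pos.mpr ⟨t, htD⟩
          omega
        have hc' : ((D.filter (fun z => a + 2 ≤ z)).card : ℤ) + 1 ≤ (D.card : ℤ) := by
          exact_mod_cast hcard
        omega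
      · omega

theorem main_count : ∀ (len : ℕ) (a b : ℤ) (D : Finset ℤ), b + 1 - a ≤ (len : ℤ) →
    (∀ x, a ≤ x → x ≤ b → SP D x) → D ⊆ Finset.Icc a b → b + 1 - a ≤ 2 * D.card := by
  intro len
  induction len using Nat.strong_induction_on with
  | _ len ih =>
  intro a b D hlen hsp hsub
  by_cases htriv : b + 1 - a ≤ 0
  · have : (0:ℤ) ≤ 2 * (D.card : ℤ) := by positivity
    omega
  have hab : a ≤ b := by omega
  by_cases hgap : ∃ g, a ≤ g ∧ g + 1 ≤ b ∧ g ∉ D ∧ g + 1 ∉ D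
  · obtain ⟨g, hga, hgb, hg, hg1⟩ := hgap
    have hlenpos : 1 ≤ len := by omega
    have hleft := ih (len - 1) (by omega) a g (D.filter (· ≤ g - 1))
      (by omega)
      (fun x hxa hxb => sp_below hg hg1 hxb (hsp x hxa (by omega)))
      (fun x hx => by
        rw [Finset.mem_filter] at hx
        have := Finset.mem_Icc.mp (hsub hx.1)
        rw [Finset.mem_Icc]
        omega)
    have hright := ih (len - 1) (by omega) (g + 1) b (D.filter (fun z => g + 2 ≤ z))
      (by omega)
      (fun x hxa hxb => sp_above hg hg1 hxa (hsp x (by omega) hxb))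
      (fun x hx => by
        rw [Finset.mem_filter] at hx
        have := Finset.mem_Icc.mp (hsub hx.1)
        rw [Finset.mem_Icc]
        omega)
    have hdisj : Disjoint (D.filter (· ≤ g - 1)) (D.filter (fun z => g + 2 ≤ z)) := by
      rw [Finset.disjoint_left]
      intro x hx hx'
      rw [Finset.mem_filter] at hx hx'
      omega
    have hcards : (D.filter (· ≤ g - 1)).card + (D.filter (fun z => g + 2 ≤ z)).card ≤ D.card := by
      have := Finset.card_union_of_disjoint hdisj
      have hsub2 : (D.filter (· ≤ g - 1)) ∪ (D.filter (fun z => g + 2 ≤ z)) ⊆ D :=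
        Finset.union_subset (Finset.filter_subset _ _) (Finset.filter_subset _ _)
      have := Finset.card_le_card hsub2
      omega
    have hc1 : ((D.filter (· ≤ g - 1)).card : ℤ) + ((D.filter (fun z => g + 2 ≤ z)).card : ℤ)
        ≤ (D.card : ℤ) := by exact_mod_cast hcards
    omega
  · push_neg at hgap
    replace hgap : ∀ g, a ≤ g → g + 1 ≤ b → (g ∈ D ∨ g + 1 ∈ D) := by
      intro g h1 h2
      by_contra hc
      push_neg at hc
      exact hc.2 ((hgap g h1 h2 hc.1))
    by_cases hfull : ∀ x, a ≤ x → x ≤ b → x ∈ D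
    · have hIcc : Finset.Icc a b ⊆ D := by
        intro x hx
        rw [Finset.mem_Icc] at hx
        exact hfull x hx.1 hx.2
      have h1 := Finset.card_le_card hIcc
      rw [Int.card_Icc] at h1
      have h2 : (b + 1 - a).toNat ≤ D.card := h1
      omega
    · push_neg at hfull
      obtain ⟨x0, hx0a, hx0b, hx0⟩ := hfull
      have hpair : ∃ u, u ∈ D ∧ u + 1 ∈ D := by
        rcases hsp x0 hx0a hx0b with h | ⟨y, ⟨_, u, hu, hu1, _⟩, _⟩
        · exact absurd h hx0
        · exact ⟨u, hu, hu1⟩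
      have hacov : a ∈ D ∨ a + 1 ∈ D := by
        rcases hsp a le_rfl hab with h | ⟨y, ⟨hyD, _⟩, hd⟩
        · exact Or.inl h
        · have hy := Finset.mem_Icc.mp (hsub hyD)
          replace hd := (abs_eq (by norm_num : (0:ℤ) ≤ 1)).mp hd
          have : y = a + 1 := by omega
          exact Or.inr (this ▸ hyD)
      have hbcov : b ∈ D ∨ b - 1 ∈ D := by
        rcases hsp b hab le_rfl with h | ⟨y, ⟨hyD, _⟩, hd⟩
        · exact Or.inl h
        · have hy := Finset.mem_Icc.mp (hsub hyD)
          replace hd := (abs_eq (by norm_num : (0:ℤ) ≤ 1)).mp hd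
          have : y = b - 1 := by omega
          exact Or.inr (this ▸ hyD)
      exact dense_count len a b D hlen hsub hgap hacov hbcov hpair


def emb (n : ℕ) : Fin n ↪ ℤ :=
  ⟨fun x => (x : ℤ), fun a b h => Fin.ext (by simpa using h)⟩

theorem emb_apply {n : ℕ} (x : Fin n) : emb n x = (x : ℤ) := rfl

theorem move_transfer {n : ℕ} {D E : Finset (Fin n)}
    (h : PegMove (SimpleGraph.pathGraph n) D E) :
    Mv (D.map (emb n)) (E.map (emb n)) := by
  obtain ⟨u, v, w, huv, hvw, hu, hv, hw, hE⟩ := h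
  rw [SimpleGraph.pathGraph_adj] at huv hvw
  have hne : u ≠ w := fun h => hw (h ▸ hu)
  have hne' : (u : ℕ) ≠ (w : ℕ) := fun h => hne (Fin.ext h)
  have hEmap : E.map (emb n) = insert (emb n w) (((D.map (emb n)).erase (emb n u)).erase (emb n v)) := by
    rw [hE, Finset.map_insert, Finset.map_erase, Finset.map_erase]
  have hwmem : emb n w ∉ D.map (emb n) := by
    rw [Finset.mem_map']
    exact hw
  refine ⟨(v : ℤ), ?_⟩
  rcases huv with h1 | h1 <;> rcases hvw with h2 | h2
  · -- u + 1 = v, v + 1 = w : right move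
    left
    have heu : (v:ℤ) - 1 = emb n u := by rw [emb_apply]; push_cast; omega
    have hev : (v:ℤ) = emb n v := rfl
    have hew : (v:ℤ) + 1 = emb n w := by rw [emb_apply]; push_cast; omega
    refine ⟨?_, ?_, ?_, ?_⟩
    · rw [heu, Finset.mem_map']; exact hu
    · rw [hev, Finset.mem_map']; exact hv
    · rw [hew]; exact hwmem
    · rw [hEmap, ← heu, ← hev, ← hew]
  · -- u + 1 = v, w + 1 = v : u = w contradiction
    exact absurd (by omega : (u:ℕ) = (w:ℕ)) hne'
  · -- v + 1 = u, v + 1 = w : u = w contradiction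
    exact absurd (by omega : (u:ℕ) = (w:ℕ)) hne'
  · -- v + 1 = u, w + 1 = v : left move
    right
    have heu : (v:ℤ) + 1 = emb n u := by rw [emb_apply]; push_cast; omega
    have hev : (v:ℤ) = emb n v := rfl
    have hew : (v:ℤ) - 1 = emb n w := by rw [emb_apply]; push_cast; omega
    refine ⟨?_, ?_, ?_, ?_⟩
    · rw [heu, Finset.mem_map']; exact hu
    · rw [hev, Finset.mem_map']; exact hv
    · rw [hew]; exact hwmem
    · rw [hEmap, ← heu, ← hev, ← hew]


variable (n : ℕ)

def A (i : ℕ) : Finset (Fin n) :=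
  Finset.univ.filter (fun x : Fin n => (x : ℕ) = 2*i+1 ∨ (2 ∣ (x:ℕ) ∧ 2*i+2 ≤ (x:ℕ)))

theorem mem_A {i : ℕ} {x : Fin n} :
    x ∈ A n i ↔ ((x : ℕ) = 2*i+1 ∨ (2 ∣ (x:ℕ) ∧ 2*i+2 ≤ (x:ℕ))) := by
  simp [A]

theorem adj_of {a b : ℕ} (ha : a < n) (hb : b < n) (h : a + 1 = b ∨ b + 1 = a) :
    (SimpleGraph.pathGraph n).Adj ⟨a, ha⟩ ⟨b, hb⟩ := by
  rw [SimpleGraph.pathGraph_adj]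
  simpa using h

theorem step (i : ℕ) (h : 2*i+3 < n) :
    PegMove (SimpleGraph.pathGraph n) (A n i) (A n (i+1)) := by
  refine ⟨⟨2*i+1, by omega⟩, ⟨2*i+2, by omega⟩, ⟨2*i+3, by omega⟩,
    adj_of n _ _ (by omega), adj_of n _ _ (by omega), ?_, ?_, ?_, ?_⟩
  · exact (mem_A n).mpr (Or.inl rfl)
  · exact (mem_A n).mpr (Or.inr ⟨⟨i+1, by ring⟩, le_refl _⟩)
  · rw [mem_A]; simp only [Fin.val_mk]; omega
  · ext x
    rcases x with ⟨m, hmn⟩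
    rw [mem_A, Finset.mem_insert, Finset.mem_erase, Finset.mem_erase, mem_A]
    simp only [ne_eq, Fin.ext_iff, Fin.val_mk]
    omega

theorem rtg_A (i : ℕ) (h : 2*i+1 < n) :
    Relation.ReflTransGen (PegMove (SimpleGraph.pathGraph n)) (A n 0) (A n i) := by
  induction i with
  | zero => exact Relation.ReflTransGen.refl
  | succ k ih =>
    have hk : 2*k+1 < n := by omega
    exact (ih hk).tail (step n k (by omega))

theorem reach_univ (hn : 3 ≤ n) : PegReach (SimpleGraph.pathGraph n) (A n 0) = Set.univ := by
  rw [Set.eq_univ_iff_forall]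
  intro t
  by_cases ht : t ∈ A n 0
  · exact ⟨A n 0, Relation.ReflTransGen.refl, ht⟩
  · rw [mem_A] at ht
    push_neg at ht
    obtain ⟨h1, h2⟩ := ht
    by_cases ht0 : (t : ℕ) = 0
    · refine ⟨insert t (((A n 0).erase ⟨2, by omega⟩).erase ⟨1, by omega⟩), ?_, by simp⟩
      have htt : t = ⟨0, by omega⟩ := Fin.ext ht0
      refine Relation.ReflTransGen.single
        ⟨⟨2, by omega⟩, ⟨1, by omega⟩, t, adj_of n _ _ (by omega), ?_, ?_, ?_, ?_, rfl⟩
      · rw [htt]; exact adj_of n _ _ (by omega)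
      · exact (mem_A n).mpr (Or.inr ⟨⟨1, by norm_num⟩, by norm_num⟩)
      · exact (mem_A n).mpr (Or.inl (by norm_num))
      · rw [mem_A, ht0]; omega
    · have hodd : ¬ (2 ∣ (t:ℕ)) := fun hdvd => by
        have := h2 hdvd
        omega
      obtain ⟨i, hi⟩ : ∃ i, (t : ℕ) = 2*i+1 := ⟨(t:ℕ)/2, by omega⟩
      exact ⟨A n i, rtg_A n i (hi ▸ t.isLt), by rw [mem_A]; left; exact hi⟩

theorem card_A0 (hn : 3 ≤ n) : (A n 0).card = (n + 1) / 2 := by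
  have h1 : A n 0 = insert ⟨1, by omega⟩
      (Finset.univ.filter (fun x : Fin n => 2 ∣ (x:ℕ) ∧ 2 ≤ (x:ℕ))) := by
    ext x
    rw [mem_A, Finset.mem_insert, Finset.mem_filter]
    simp only [Fin.ext_iff, Fin.val_mk, Finset.mem_univ, true_and]
  rw [h1, Finset.card_insert_of_notMem (by
    rw [Finset.mem_filter]
    simp only [Fin.val_mk]
    omega)]
  have h2 : (Finset.univ.filter (fun x : Fin n => 2 ∣ (x:ℕ) ∧ 2 ≤ (x:ℕ))).card
      = (Finset.range ((n-1)/2)).card := by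
    refine Finset.card_bij (fun (x : Fin n) _ => ((x : ℕ) - 2)/2) ?_ ?_ ?_
    · intro x hx
      rw [Finset.mem_filter] at hx
      show ((x:ℕ) - 2)/2 ∈ Finset.range ((n-1)/2)
      rw [Finset.mem_range]
      have := x.isLt
      omega
    · intro x hx y hy hxy
      rw [Finset.mem_filter] at hx hy
      have hxy' : ((x:ℕ) - 2)/2 = ((y:ℕ) - 2)/2 := hxy
      exact Fin.ext (by omega)
    · intro j hj
      rw [Finset.mem_range] at hj
      refine ⟨⟨2*j+2, by omega⟩, ?_, ?_⟩
      · rw [Finset.mem_filter]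
        refine ⟨Finset.mem_univ _, ⟨j+1, by ring⟩, by simp⟩
      · show ((((⟨2*j+2, by omega⟩ : Fin n)):ℕ) - 2)/2 = j
        simp only [Fin.val_mk]
        omega
  rw [h2, Finset.card_range]
  omega


theorem reach_sp {n : ℕ} {D : Finset (Fin n)} {t : Fin n}
    (h : t ∈ PegReach (SimpleGraph.pathGraph n) D) :
    SP (D.map (emb n)) ((t : ℕ) : ℤ) := by
  obtain ⟨D', hrtg, ht⟩ := h
  have hlift : Relation.ReflTransGen Mv (D.map (emb n)) (D'.map (emb n)) :=
    Relation.ReflTransGen.lift (fun s : Finset (Fin n) => s.map (emb n))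
      (fun _ _ hm => move_transfer hm) _ _ hrtg
  exact rtg_mono hlift (Or.inl ((Finset.mem_map' (emb n)).mpr ht))

theorem lower_bound {n : ℕ} (hn : 3 ≤ n) {D : Finset (Fin n)}
    (h : PegReach (SimpleGraph.pathGraph n) D = Set.univ) : (n + 1) / 2 ≤ D.card := by
  have hsp : ∀ x : ℤ, 0 ≤ x → x ≤ (n : ℤ) - 1 → SP (D.map (emb n)) x := by
    intro x h0 h1
    have hx : x.toNat < n := by omega
    have ht : (⟨x.toNat, hx⟩ : Fin n) ∈ PegReach (SimpleGraph.pathGraph n) D := by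
      rw [h]; trivial
    have := reach_sp ht
    have hval : (((⟨x.toNat, hx⟩ : Fin n) : ℕ) : ℤ) = x := by
      simp only [Fin.val_mk]
      omega
    rwa [hval] at this
  have hsub : D.map (emb n) ⊆ Finset.Icc 0 ((n : ℤ) - 1) := by
    intro x hx
    rw [Finset.mem_map] at hx
    obtain ⟨d, _, rfl⟩ := hx
    rw [Finset.mem_Icc]
    have := d.isLt
    constructor
    · exact Int.natCast_nonneg _
    · rw [emb_apply]
      omega
  have hmain := main_count n 0 ((n : ℤ) - 1) (D.map (emb n)) (by omega)
    (fun x hx h1 => hsp x hx h1) hsub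
  rw [Finset.card_map] at hmain
  omega

end PegAux

theorem optPeggingNumber_pathGraph (n : ℕ) (hn : 3 ≤ n) :
    OptPeggingNumber (SimpleGraph.pathGraph n) = (n + 1) / 2 := by
  have hmem : (n + 1) / 2 ∈
      {k | 0 < k ∧ ∃ D : Finset (Fin n), D.card = k ∧
        PegReach (SimpleGraph.pathGraph n) D = Set.univ} :=
    ⟨by omega, PegAux.A n 0, PegAux.card_A0 n hn, PegAux.reach_univ n hn⟩
  refine le_antisymm (Nat.sInf_le hmem) (le_csInf ⟨_, hmem⟩ ?_)
  rintro k ⟨_, D, rfl, hD⟩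
  exact PegAux.lower_bound hn hD
end

section
/- For any two graphs G and H each having at least one vertex, the join G + H satisfies p(G + H) = 2 and P(G + H) = max(α(G), α(H)) + 1. -/
open SimpleGraph Finset

variable {V : Type*} {W : Type*}

/-- The join of two graphs: all cross edges are present. -/
def GraphJoin {V W : Type*} (G : SimpleGraph V) (H : SimpleGraph W) : SimpleGraph (V ⊕ W) where
  Adj x y := match x, y with
    | Sum.inl a, Sum.inl b => G.Adj a b
    | Sum.inr a, Sum.inr b => H.Adj a b
    | Sum.inl _, Sum.inr _ => True
    | Sum.inr _, Sum.inl _ => True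
  symm := ⟨by rintro (a | a) (b | b) h <;> first | exact h.symm | trivial⟩
  loopless := ⟨by rintro (a | a) h <;> exact (SimpleGraph.irrefl _) h⟩

/-- The independence number of a graph. -/
noncomputable def indepNum {V : Type*} (G : SimpleGraph V) : ℕ :=
  sSup {n | ∃ s : Finset V, s.card = n ∧ ∀ u ∈ s, ∀ v ∈ s, ¬ G.Adj u v}

section Helpers

variable {X : Type*} [DecidableEq X]

lemma rtg_fix {J : SimpleGraph X} {D D' : Finset X}
    (h : ∀ u ∈ D, ∀ v ∈ D, ¬ J.Adj u v)
    (hr : Relation.ReflTransGen (PegMove J) D D') : D' = D := by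
  induction hr with
  | refl => rfl
  | tail _ h2 ih =>
    rw [ih] at h2
    obtain ⟨u, v, w, huv, _, hu, hv, _, _⟩ := h2
    exact ((h u hu v hv) huv).elim

lemma reach_of_indep {J : SimpleGraph X} {D : Finset X}
    (h : ∀ u ∈ D, ∀ v ∈ D, ¬ J.Adj u v) : PegReach J D = ↑D := by
  ext t
  constructor
  · rintro ⟨D', hr, ht⟩
    rwa [rtg_fix h hr] at ht
  · intro ht
    exact ⟨D, Relation.ReflTransGen.refl, ht⟩

end Helpers

section Indep

variable {V : Type*} [Fintype V] [DecidableEq V]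

lemma indep_bdd (G : SimpleGraph V) :
    BddAbove {n | ∃ s : Finset V, s.card = n ∧ ∀ u ∈ s, ∀ v ∈ s, ¬ G.Adj u v} := by
  refine ⟨Fintype.card V, ?_⟩
  rintro n ⟨s, rfl, -⟩
  exact s.card_le_univ.trans_eq Finset.card_univ

lemma indep_card_le (G : SimpleGraph V) (s : Finset V)
    (h : ∀ u ∈ s, ∀ v ∈ s, ¬ G.Adj u v) : s.card ≤ _root_.indepNum G :=
  le_csSup (indep_bdd G) ⟨s, rfl, h⟩

lemma exists_indep (G : SimpleGraph V) :
    ∃ s : Finset V, s.card = _root_.indepNum G ∧ ∀ u ∈ s, ∀ v ∈ s, ¬ G.Adj u v := by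
  have hne : {n | ∃ s : Finset V, s.card = n ∧ ∀ u ∈ s, ∀ v ∈ s, ¬ G.Adj u v}.Nonempty :=
    ⟨0, ∅, by simp⟩
  have h := Nat.sSup_mem hne (indep_bdd G)
  obtain ⟨s, hs, hi⟩ := h
  exact ⟨s, hs, hi⟩

lemma one_le_indepNum [Nonempty V] (G : SimpleGraph V) : 1 ≤ _root_.indepNum G := by
  have := indep_card_le G {Classical.arbitrary V} (by
    intro u hu v hv hA
    simp only [Finset.mem_singleton] at hu hv
    subst hu; subst hv
    exact G.irrefl hA)
  simpa using this

end Indep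

section Join

variable {V W : Type*} [Fintype V] [Fintype W] [DecidableEq V] [DecidableEq W]

lemma card_le_indep_inl (G : SimpleGraph V) (H : SimpleGraph W) (D : Finset (V ⊕ W))
    (hmem : ∀ x ∈ D, ∃ a, x = Sum.inl a)
    (hind : ∀ u ∈ D, ∀ v ∈ D, ¬ (GraphJoin G H).Adj u v) : D.card ≤ _root_.indepNum G := by
  classical
  set s : Finset V := D.preimage Sum.inl (Sum.inl_injective.injOn) with hs
  have himg : s.image Sum.inl = D := by
    ext x
    simp only [Finset.mem_image, hs, Finset.mem_preimage]
    constructor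
    · rintro ⟨a, ha, rfl⟩; exact ha
    · intro hx; obtain ⟨a, rfl⟩ := hmem x hx; exact ⟨a, hx, rfl⟩
  have hcard : s.card = D.card := by
    rw [← himg, Finset.card_image_of_injective _ Sum.inl_injective]
  rw [← hcard]
  apply indep_card_le
  intro u hu v hv hA
  exact hind _ (Finset.mem_preimage.mp hu) _ (Finset.mem_preimage.mp hv) hA

lemma card_le_indep_inr (G : SimpleGraph V) (H : SimpleGraph W) (D : Finset (V ⊕ W))
    (hmem : ∀ x ∈ D, ∃ b, x = Sum.inr b)
    (hind : ∀ u ∈ D, ∀ v ∈ D, ¬ (GraphJoin G H).Adj u v) : D.card ≤ _root_.indepNum H := by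
  classical
  set s : Finset W := D.preimage Sum.inr (Sum.inr_injective.injOn) with hs
  have himg : s.image Sum.inr = D := by
    ext x
    simp only [Finset.mem_image, hs, Finset.mem_preimage]
    constructor
    · rintro ⟨a, ha, rfl⟩; exact ha
    · intro hx; obtain ⟨a, rfl⟩ := hmem x hx; exact ⟨a, hx, rfl⟩
  have hcard : s.card = D.card := by
    rw [← himg, Finset.card_image_of_injective _ Sum.inr_injective]
  rw [← hcard]
  apply indep_card_le
  intro u hu v hv hA
  exact hind _ (Finset.mem_preimage.mp hu) _ (Finset.mem_preimage.mp hv) hA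

lemma join_full_of_cross (G : SimpleGraph V) (H : SimpleGraph W) (D : Finset (V ⊕ W))
    {a : V} {b : W} (ha : Sum.inl a ∈ D) (hb : Sum.inr b ∈ D) :
    PegReach (GraphJoin G H) D = Set.univ := by
  rw [Set.eq_univ_iff_forall]
  intro t
  by_cases ht : t ∈ D
  · exact ⟨D, Relation.ReflTransGen.refl, ht⟩
  · cases t with
    | inl c =>
      exact ⟨insert (Sum.inl c) ((D.erase (Sum.inl a)).erase (Sum.inr b)),
        Relation.ReflTransGen.single
          ⟨Sum.inl a, Sum.inr b, Sum.inl c, trivial, trivial, ha, hb, ht, rfl⟩,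
        Finset.mem_insert_self _ _⟩
    | inr c =>
      exact ⟨insert (Sum.inr c) ((D.erase (Sum.inr b)).erase (Sum.inl a)),
        Relation.ReflTransGen.single
          ⟨Sum.inr b, Sum.inl a, Sum.inr c, trivial, trivial, hb, ha, ht, rfl⟩,
        Finset.mem_insert_self _ _⟩

lemma join_full_left [Nonempty V] [Nonempty W] (G : SimpleGraph V) (H : SimpleGraph W)
    (D : Finset (V ⊕ W)) (hD : D.card = max (_root_.indepNum G) (_root_.indepNum H) + 1)
    (hmem : ∀ x ∈ D, ∃ a, x = Sum.inl a) :
    PegReach (GraphJoin G H) D = Set.univ := by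
  classical
  have hadj : ∃ a b, Sum.inl a ∈ D ∧ Sum.inl b ∈ D ∧ G.Adj a b := by
    by_contra hc
    push_neg at hc
    have hind : ∀ u ∈ D, ∀ v ∈ D, ¬ (GraphJoin G H).Adj u v := by
      intro u hu v hv hA
      obtain ⟨p, rfl⟩ := hmem u hu
      obtain ⟨q, rfl⟩ := hmem v hv
      exact hc p q hu hv hA
    have hle := card_le_indep_inl G H D hmem hind
    have := le_max_left (_root_.indepNum G) (_root_.indepNum H)
    omega
  obtain ⟨a, b, ha, hb, hab⟩ := hadj
  rw [Set.eq_univ_iff_forall]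
  intro t
  by_cases ht : t ∈ D
  · exact ⟨D, Relation.ReflTransGen.refl, ht⟩
  cases t with
  | inr c =>
    exact ⟨insert (Sum.inr c) ((D.erase (Sum.inl a)).erase (Sum.inl b)),
      Relation.ReflTransGen.single
        ⟨Sum.inl a, Sum.inl b, Sum.inr c, hab, trivial, ha, hb, ht, rfl⟩,
      Finset.mem_insert_self _ _⟩
  | inl c =>
    by_cases h2 : 2 ≤ max (_root_.indepNum G) (_root_.indepNum H)
    · -- two-move plan via a third peg
      have hne : a ≠ b := hab.ne
      have hb' : Sum.inl b ∈ D.erase (Sum.inl a) := by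
        rw [Finset.mem_erase]
        exact ⟨by simpa using hne.symm, hb⟩
      have hcard2 : ((D.erase (Sum.inl a)).erase (Sum.inl b)).card = D.card - 2 := by
        rw [Finset.card_erase_of_mem hb', Finset.card_erase_of_mem ha]; omega
      have hpos : 0 < ((D.erase (Sum.inl a)).erase (Sum.inl b)).card := by omega
      obtain ⟨z, hz⟩ := Finset.card_pos.mp hpos
      have hzD : z ∈ D := Finset.mem_of_mem_erase (Finset.mem_of_mem_erase hz)
      obtain ⟨z₀, rfl⟩ := hmem z hzD
      obtain ⟨w₀⟩ := ‹Nonempty W›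
      have hw : Sum.inr w₀ ∉ D := by
        intro h
        obtain ⟨p, hp⟩ := hmem _ h
        exact absurd hp (by simp)
      set D1 : Finset (V ⊕ W) :=
        insert (Sum.inr w₀) ((D.erase (Sum.inl a)).erase (Sum.inl b)) with hD1
      have move1 : PegMove (GraphJoin G H) D D1 :=
        ⟨Sum.inl a, Sum.inl b, Sum.inr w₀, hab, trivial, ha, hb, hw, rfl⟩
      have hz1 : Sum.inl z₀ ∈ D1 := Finset.mem_insert_of_mem hz
      have hw1 : Sum.inr w₀ ∈ D1 := Finset.mem_insert_self _ _
      have hc1 : Sum.inl c ∉ D1 := by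
        intro h
        rcases Finset.mem_insert.mp h with h | h
        · exact absurd h (by simp)
        · exact ht (Finset.mem_of_mem_erase (Finset.mem_of_mem_erase h))
      have move2 : PegMove (GraphJoin G H) D1
          (insert (Sum.inl c) ((D1.erase (Sum.inl z₀)).erase (Sum.inr w₀))) :=
        ⟨Sum.inl z₀, Sum.inr w₀, Sum.inl c, trivial, trivial, hz1, hw1, hc1, rfl⟩
      exact ⟨_, (Relation.ReflTransGen.single move1).tail move2, Finset.mem_insert_self _ _⟩
    · -- max independence number is 1
      have h1 : _root_.indepNum G = 1 := by
        have := one_le_indepNum G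
        have := le_max_left (_root_.indepNum G) (_root_.indepNum H)
        omega
      have hcb : c ≠ b := by
        intro h; exact ht (h ▸ hb)
      have hbc : G.Adj b c := by
        by_contra hbc
        have : ({b, c} : Finset V).card ≤ _root_.indepNum G := by
          apply indep_card_le
          intro u hu v hv hA
          simp only [Finset.mem_insert, Finset.mem_singleton] at hu hv
          rcases hu with rfl | rfl <;> rcases hv with rfl | rfl
          · exact G.irrefl hA
          · exact hbc hA
          · exact hbc hA.symm
          · exact G.irrefl hA
        rw [Finset.card_pair (Ne.symm hcb)] at this
        omega
      exact ⟨insert (Sum.inl c) ((D.erase (Sum.inl a)).erase (Sum.inl b)),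
        Relation.ReflTransGen.single
          ⟨Sum.inl a, Sum.inl b, Sum.inl c, hab, hbc, ha, hb, ht, rfl⟩,
        Finset.mem_insert_self _ _⟩

lemma join_full_right [Nonempty V] [Nonempty W] (G : SimpleGraph V) (H : SimpleGraph W)
    (D : Finset (V ⊕ W)) (hD : D.card = max (_root_.indepNum G) (_root_.indepNum H) + 1)
    (hmem : ∀ x ∈ D, ∃ b, x = Sum.inr b) :
    PegReach (GraphJoin G H) D = Set.univ := by
  classical
  have hadj : ∃ a b, Sum.inr a ∈ D ∧ Sum.inr b ∈ D ∧ H.Adj a b := by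
    by_contra hc
    push_neg at hc
    have hind : ∀ u ∈ D, ∀ v ∈ D, ¬ (GraphJoin G H).Adj u v := by
      intro u hu v hv hA
      obtain ⟨p, rfl⟩ := hmem u hu
      obtain ⟨q, rfl⟩ := hmem v hv
      exact hc p q hu hv hA
    have hle := card_le_indep_inr G H D hmem hind
    have := le_max_right (_root_.indepNum G) (_root_.indepNum H)
    omega
  obtain ⟨a, b, ha, hb, hab⟩ := hadj
  rw [Set.eq_univ_iff_forall]
  intro t
  by_cases ht : t ∈ D
  · exact ⟨D, Relation.ReflTransGen.refl, ht⟩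
  cases t with
  | inl c =>
    exact ⟨insert (Sum.inl c) ((D.erase (Sum.inr a)).erase (Sum.inr b)),
      Relation.ReflTransGen.single
        ⟨Sum.inr a, Sum.inr b, Sum.inl c, hab, trivial, ha, hb, ht, rfl⟩,
      Finset.mem_insert_self _ _⟩
  | inr c =>
    by_cases h2 : 2 ≤ max (_root_.indepNum G) (_root_.indepNum H)
    · have hne : a ≠ b := hab.ne
      have hb' : Sum.inr b ∈ D.erase (Sum.inr a) := by
        rw [Finset.mem_erase]
        exact ⟨by simpa using hne.symm, hb⟩
      have hcard2 : ((D.erase (Sum.inr a)).erase (Sum.inr b)).card = D.card - 2 := by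
        rw [Finset.card_erase_of_mem hb', Finset.card_erase_of_mem ha]; omega
      have hpos : 0 < ((D.erase (Sum.inr a)).erase (Sum.inr b)).card := by omega
      obtain ⟨z, hz⟩ := Finset.card_pos.mp hpos
      have hzD : z ∈ D := Finset.mem_of_mem_erase (Finset.mem_of_mem_erase hz)
      obtain ⟨z₀, rfl⟩ := hmem z hzD
      obtain ⟨w₀⟩ := ‹Nonempty V›
      have hw : Sum.inl w₀ ∉ D := by
        intro h
        obtain ⟨p, hp⟩ := hmem _ h
        exact absurd hp (by simp)
      set D1 : Finset (V ⊕ W) :=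
        insert (Sum.inl w₀) ((D.erase (Sum.inr a)).erase (Sum.inr b)) with hD1
      have move1 : PegMove (GraphJoin G H) D D1 :=
        ⟨Sum.inr a, Sum.inr b, Sum.inl w₀, hab, trivial, ha, hb, hw, rfl⟩
      have hz1 : Sum.inr z₀ ∈ D1 := Finset.mem_insert_of_mem hz
      have hw1 : Sum.inl w₀ ∈ D1 := Finset.mem_insert_self _ _
      have hc1 : Sum.inr c ∉ D1 := by
        intro h
        rcases Finset.mem_insert.mp h with h | h
        · exact absurd h (by simp)
        · exact ht (Finset.mem_of_mem_erase (Finset.mem_of_mem_erase h))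
      have move2 : PegMove (GraphJoin G H) D1
          (insert (Sum.inr c) ((D1.erase (Sum.inr z₀)).erase (Sum.inl w₀))) :=
        ⟨Sum.inr z₀, Sum.inl w₀, Sum.inr c, trivial, trivial, hz1, hw1, hc1, rfl⟩
      exact ⟨_, (Relation.ReflTransGen.single move1).tail move2, Finset.mem_insert_self _ _⟩
    · have h1 : _root_.indepNum H = 1 := by
        have := one_le_indepNum H
        have := le_max_right (_root_.indepNum G) (_root_.indepNum H)
        omega
      have hcb : c ≠ b := by
        intro h; exact ht (h ▸ hb)
      have hbc : H.Adj b c := by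
        by_contra hbc
        have : ({b, c} : Finset W).card ≤ _root_.indepNum H := by
          apply indep_card_le
          intro u hu v hv hA
          simp only [Finset.mem_insert, Finset.mem_singleton] at hu hv
          rcases hu with rfl | rfl <;> rcases hv with rfl | rfl
          · exact H.irrefl hA
          · exact hbc hA
          · exact hbc hA.symm
          · exact H.irrefl hA
        rw [Finset.card_pair (Ne.symm hcb)] at this
        omega
      exact ⟨insert (Sum.inr c) ((D.erase (Sum.inr a)).erase (Sum.inr b)),
        Relation.ReflTransGen.single
          ⟨Sum.inr a, Sum.inr b, Sum.inr c, hab, hbc, ha, hb, ht, rfl⟩,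
        Finset.mem_insert_self _ _⟩

lemma join_full [Nonempty V] [Nonempty W] (G : SimpleGraph V) (H : SimpleGraph W)
    (D : Finset (V ⊕ W)) (hD : D.card = max (_root_.indepNum G) (_root_.indepNum H) + 1) :
    PegReach (GraphJoin G H) D = Set.univ := by
  by_cases hl : ∃ a, Sum.inl a ∈ D
  · by_cases hr : ∃ b, Sum.inr b ∈ D
    · obtain ⟨a, ha⟩ := hl
      obtain ⟨b, hb⟩ := hr
      exact join_full_of_cross G H D ha hb
    · apply join_full_left G H D hD
      intro x hx
      cases x with
      | inl a => exact ⟨a, rfl⟩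
      | inr b => exact absurd ⟨b, hx⟩ hr
  · apply join_full_right G H D hD
    intro x hx
    cases x with
    | inl a => exact absurd ⟨a, hx⟩ hl
    | inr b => exact ⟨b, rfl⟩

end Join

theorem pegging_join {V W : Type*} [Fintype V] [Fintype W] [DecidableEq V] [DecidableEq W]
    [Nonempty V] [Nonempty W] (G : SimpleGraph V) (H : SimpleGraph W) :
    OptPeggingNumber (GraphJoin G H) = 2 ∧
      PeggingNumber (GraphJoin G H) = max (_root_.indepNum G) (_root_.indepNum H) + 1 := by
  classical
  obtain ⟨a₀⟩ := ‹Nonempty V›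
  obtain ⟨b₀⟩ := ‹Nonempty W›
  constructor
  · -- optimal pegging number is 2
    have h2 : 2 ∈ {k | 0 < k ∧ ∃ D : Finset (V ⊕ W), D.card = k ∧
        PegReach (GraphJoin G H) D = Set.univ} := by
      refine ⟨by norm_num, {Sum.inl a₀, Sum.inr b₀}, ?_, ?_⟩
      · rw [Finset.card_pair (by simp)]
      · exact join_full_of_cross G H _ (a := a₀) (b := b₀) (by simp) (by simp)
    apply le_antisymm
    · exact Nat.sInf_le h2
    · apply le_csInf ⟨2, h2⟩
      rintro m ⟨hm, D, hcard, hreach⟩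
      by_contra hlt
      have hm1 : m = 1 := by omega
      subst hm1
      have hind : ∀ u ∈ D, ∀ v ∈ D, ¬ (GraphJoin G H).Adj u v := by
        intro u hu v hv hA
        have huv : u = v := Finset.card_le_one.mp (le_of_eq hcard) u hu v hv
        subst huv
        exact (GraphJoin G H).irrefl hA
      rw [reach_of_indep hind] at hreach
      have h1 : Sum.inl a₀ ∈ D := by
        have := hreach ▸ Set.mem_univ (Sum.inl a₀ : V ⊕ W)
        exact_mod_cast (Set.ext_iff.mp hreach (Sum.inl a₀)).mpr (Set.mem_univ _)
      have hr : Sum.inr b₀ ∈ D := by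
        exact_mod_cast (Set.ext_iff.mp hreach (Sum.inr b₀)).mpr (Set.mem_univ _)
      have : 1 < D.card := Finset.one_lt_card.mpr ⟨_, h1, _, hr, by simp⟩
      omega
  · -- pegging number is max(α(G), α(H)) + 1
    have hmem : max (_root_.indepNum G) (_root_.indepNum H) + 1 ∈ {k | 0 < k ∧
        ∀ D : Finset (V ⊕ W), D.card = k → PegReach (GraphJoin G H) D = Set.univ} :=
      ⟨by omega, fun D hD => join_full G H D hD⟩
    apply le_antisymm
    · exact Nat.sInf_le hmem
    · apply le_csInf ⟨_, hmem⟩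
      rintro m ⟨hm, hall⟩
      by_contra hlt
      push_neg at hlt
      have hmle : m ≤ max (_root_.indepNum G) (_root_.indepNum H) := by omega
      -- build an independent distribution of size m
      rcases le_total (_root_.indepNum H) (_root_.indepNum G) with hGH | hGH
      · obtain ⟨I, hI, hInd⟩ := exists_indep G
        have hmI : m ≤ I.card := by rw [hI]; omega
        obtain ⟨s, hsI, hs⟩ := Finset.exists_subset_card_eq hmI
        set D : Finset (V ⊕ W) := s.image Sum.inl with hDdef
        have hDcard : D.card = m := by
          rw [hDdef, Finset.card_image_of_injective _ Sum.inl_injective, hs]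
        have hind : ∀ u ∈ D, ∀ v ∈ D, ¬ (GraphJoin G H).Adj u v := by
          intro u hu v hv hA
          rw [hDdef, Finset.mem_image] at hu hv
          obtain ⟨p, hp, rfl⟩ := hu
          obtain ⟨q, hq, rfl⟩ := hv
          exact hInd p (hsI hp) q (hsI hq) hA
        have hreach := hall D hDcard
        rw [reach_of_indep hind] at hreach
        have : (Sum.inr b₀ : V ⊕ W) ∈ D :=
          (Set.ext_iff.mp hreach (Sum.inr b₀)).mpr (Set.mem_univ _)
        rw [hDdef, Finset.mem_image] at this
        obtain ⟨p, -, hp⟩ := this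
        exact absurd hp (by simp)
      · obtain ⟨I, hI, hInd⟩ := exists_indep H
        have hmI : m ≤ I.card := by rw [hI]; omega
        obtain ⟨s, hsI, hs⟩ := Finset.exists_subset_card_eq hmI
        set D : Finset (V ⊕ W) := s.image Sum.inr with hDdef
        have hDcard : D.card = m := by
          rw [hDdef, Finset.card_image_of_injective _ Sum.inr_injective, hs]
        have hind : ∀ u ∈ D, ∀ v ∈ D, ¬ (GraphJoin G H).Adj u v := by
          intro u hu v hv hA
          rw [hDdef, Finset.mem_image] at hu hv
          obtain ⟨p, hp, rfl⟩ := hu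
          obtain ⟨q, hq, rfl⟩ := hv
          exact hInd p (hsI hp) q (hsI hq) hA
        have hreach := hall D hDcard
        rw [reach_of_indep hind] at hreach
        have : (Sum.inl a₀ : V ⊕ W) ∈ D :=
          (Set.ext_iff.mp hreach (Sum.inl a₀)).mpr (Set.mem_univ _)
        rw [hDdef, Finset.mem_image] at this
        obtain ⟨p, -, hp⟩ := this
        exact absurd hp (by simp)
end

section
/- For any complete multipartite graph G with at least two partite sets, p(G) = 2 and P(G) equals one more than the size of the largest partite set of G. -/
open SimpleGraph Finset

variable {V : Type*} {W : Type*}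

lemma reach_of_no_move {V : Type*} (G : SimpleGraph V) [DecidableEq V] (D : Finset V)
    (h : ∀ D', ¬ PegMove G D D') : PegReach G D = ↑D := by
  ext t
  constructor
  · rintro ⟨D', hD', ht⟩
    rcases hD'.cases_head with rfl | ⟨b, hb, -⟩
    · exact ht
    · exact absurd hb (h b)
  · exact fun ht => ⟨D, .refl, ht⟩

lemma full_reach {ι : Type*} [DecidableEq ι] {P : ι → Type*}
    [∀ i, DecidableEq (P i)] (D : Finset (Σ i, P i))
    (h : ∀ t : Σ i, P i, t ∉ D → ∃ v ∈ D, v.1 ≠ t.1 ∧ ∃ u ∈ D, u.1 ≠ v.1) :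
    PegReach (SimpleGraph.completeMultipartiteGraph P) D = Set.univ := by
  ext t
  simp only [Set.mem_univ, iff_true]
  by_cases ht : t ∈ D
  · exact ⟨D, .refl, ht⟩
  · obtain ⟨v, hv, hvt, u, hu, huv⟩ := h t ht
    refine ⟨insert t ((D.erase u).erase v), Relation.ReflTransGen.single ?_, mem_insert_self _ _⟩
    exact ⟨u, v, t, huv, fun e => hvt e, hu, hv, ht, rfl⟩

theorem pegging_completeMultipartite {ι : Type*} [Fintype ι] [DecidableEq ι]
    (P : ι → Type*) [∀ i, Fintype (P i)] [∀ i, DecidableEq (P i)] [∀ i, Nonempty (P i)]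
    (hι : 2 ≤ Fintype.card ι) :
    OptPeggingNumber (SimpleGraph.completeMultipartiteGraph P) = 2 ∧
      PeggingNumber (SimpleGraph.completeMultipartiteGraph P) =
        (Finset.univ.sup fun i => Fintype.card (P i)) + 1 := by
  classical
  have hne : Nonempty ι := Fintype.card_pos_iff.mp (by omega)
  set G := SimpleGraph.completeMultipartiteGraph P with hG
  set m := (Finset.univ.sup fun i => Fintype.card (P i)) with hm
  have hsup : ∀ i, Fintype.card (P i) ≤ m := fun i => by rw [hm]; exact Finset.le_sup (f := fun i => Fintype.card (P i)) (mem_univ i)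
  -- the finset of vertices in part `i`
  have spart : ∀ i : ι, ∃ s : Finset (Σ i, P i), s.card = Fintype.card (P i) ∧
      ∀ x : Σ j, P j, x ∈ s ↔ x.1 = i := by
    intro i
    refine ⟨Finset.univ.map ⟨Sigma.mk i, sigma_mk_injective⟩, by simp, fun x => ?_⟩
    constructor
    · intro hx
      obtain ⟨a, -, rfl⟩ := Finset.mem_map.mp hx
      rfl
    · obtain ⟨j, b⟩ := x
      rintro rfl
      exact Finset.mem_map.mpr ⟨b, Finset.mem_univ _, rfl⟩
  -- no move is possible from a distribution inside one part
  have noMove : ∀ (i : ι) (D : Finset (Σ i, P i)), (∀ x ∈ D, x.1 = i) →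
      PegReach G D = ↑D := by
    intro i D hD
    apply reach_of_no_move
    rintro D' ⟨u, v, w, huv, -, hu, hv, -, -⟩
    exact huv ((hD u hu).trans (hD v hv).symm)
  -- a vertex outside a given part
  have other : ∀ i : ι, ∃ y : Σ j, P j, y.1 ≠ i := by
    intro i
    obtain ⟨j, hj⟩ := Fintype.exists_ne_of_one_lt_card (by omega) i
    exact ⟨⟨j, Classical.arbitrary _⟩, hj⟩
  -- pigeonhole
  have pig : ∀ (D : Finset (Σ i, P i)), D.card = m + 1 → ∀ i, ∃ x ∈ D, x.1 ≠ i := by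
    intro D hD i
    by_contra hc
    push_neg at hc
    obtain ⟨s, hs, hsi⟩ := spart i
    have hsub : D ⊆ s := fun x hx => (hsi x).mpr (hc x hx)
    have := Finset.card_le_card hsub
    rw [hD, hs] at this
    have := hsup i
    omega
  constructor
  · -- OptPeggingNumber = 2
    obtain ⟨i₁, i₂, h12⟩ : ∃ i₁ i₂ : ι, i₁ ≠ i₂ := Fintype.exists_pair_of_one_lt_card (by omega)
    set u : Σ i, P i := ⟨i₁, Classical.arbitrary _⟩ with hu
    set v : Σ i, P i := ⟨i₂, Classical.arbitrary _⟩ with hv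
    have huv : u ≠ v := fun h => h12 (congrArg Sigma.fst h)
    have h2 : 2 ∈ {k | 0 < k ∧ ∃ D : Finset (Σ i, P i), D.card = k ∧ PegReach G D = Set.univ} := by
      refine ⟨by norm_num, {u, v}, ?_, ?_⟩
      · rw [Finset.card_insert_of_notMem (by simpa using huv), Finset.card_singleton]
      · apply full_reach
        intro t ht
        by_cases h : (i₂ : ι) = t.1
        · exact ⟨u, Finset.mem_insert_self _ _, h ▸ h12,
            v, Finset.mem_insert_of_mem (Finset.mem_singleton_self _), fun e => h12 e.symm⟩
        · exact ⟨v, Finset.mem_insert_of_mem (Finset.mem_singleton_self _), h,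
            u, Finset.mem_insert_self _ _, h12⟩
    refine le_antisymm (Nat.sInf_le h2) (le_csInf ⟨2, h2⟩ ?_)
    rintro k ⟨hk0, D, hcard, hreach⟩
    by_contra hlt
    push_neg at hlt
    interval_cases k
    obtain ⟨x, rfl⟩ := Finset.card_eq_one.mp hcard
    have : PegReach G {x} = ↑({x} : Finset (Σ i, P i)) := by
      apply reach_of_no_move
      rintro D' ⟨a, b, c, hab, -, ha, hb, -, -⟩
      rw [Finset.mem_singleton] at ha hb
      subst ha; subst hb
      exact hab rfl
    rw [this] at hreach
    obtain ⟨y, hy⟩ := other x.1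
    have : y ∈ (↑({x} : Finset (Σ i, P i)) : Set (Σ i, P i)) := hreach ▸ Set.mem_univ y
    rw [Finset.coe_singleton, Set.mem_singleton_iff] at this
    exact hy (congrArg Sigma.fst this)
  · -- PeggingNumber = m + 1
    have hfull : (m + 1) ∈ {k | 0 < k ∧ ∀ D : Finset (Σ i, P i), D.card = k →
        PegReach G D = Set.univ} := by
      refine ⟨Nat.succ_pos _, fun D hD => full_reach D fun t ht => ?_⟩
      obtain ⟨v, hv, hvt⟩ := pig D hD t.1
      obtain ⟨w, hw, hwv⟩ := pig D hD v.1
      exact ⟨v, hv, hvt, w, hw, hwv⟩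
    refine le_antisymm (Nat.sInf_le hfull) (le_csInf ⟨m + 1, hfull⟩ ?_)
    rintro k ⟨hk0, hall⟩
    by_contra hlt
    push_neg at hlt
    have hkm : k ≤ m := by omega
    obtain ⟨i₀, -, hi₀⟩ := Finset.exists_mem_eq_sup Finset.univ Finset.univ_nonempty
      (fun i => Fintype.card (P i))
    obtain ⟨s, hs, hsi⟩ := spart i₀
    have hks : k ≤ s.card := by rw [hs]; omega
    obtain ⟨E, hEs, hEk⟩ := Finset.exists_subset_card_eq hks
    have hreach := hall E hEk
    rw [noMove i₀ E (fun x hx => (hsi x).mp (hEs hx))] at hreach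
    obtain ⟨y, hy⟩ := other i₀
    have : y ∈ (↑E : Set (Σ i, P i)) := hreach ▸ Set.mem_univ y
    have hyE : y ∈ E := by exact_mod_cast this
    exact hy ((hsi y).mp (hEs hyE))
end

section
/- For positive integers m and n, not both 1, the pegging number of the Cartesian product K_m × K_n is min{m, n} + 1. -/
open SimpleGraph Finset

variable {V : Type*} {W : Type*}

section Aux

variable {V : Type*} [DecidableEq V] {G : SimpleGraph V} {D D' : Finset V} {t : V}

lemma reach_self (ht : t ∈ D) : t ∈ PegReach G D :=
  ⟨D, Relation.ReflTransGen.refl, ht⟩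

lemma reach_step (h : PegMove G D D') (ht : t ∈ PegReach G D') : t ∈ PegReach G D := by
  obtain ⟨E, hE, htE⟩ := ht
  exact ⟨E, Relation.ReflTransGen.head h hE, htE⟩

lemma reach_move {u v w : V} (huv : G.Adj u v) (hvw : G.Adj v w)
    (hu : u ∈ D) (hv : v ∈ D) (hw : w ∉ D) : w ∈ PegReach G D :=
  reach_step ⟨u, v, w, huv, hvw, hu, hv, hw, rfl⟩ (reach_self (mem_insert_self _ _))

end Aux

section KK

variable {m n : ℕ}

abbrev KK (m n : ℕ) : SimpleGraph (Fin m × Fin n) :=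
  (⊤ : SimpleGraph (Fin m)) □ (⊤ : SimpleGraph (Fin n))

lemma kk_adj {x y : Fin m × Fin n} :
    (KK m n).Adj x y ↔ (x.1 ≠ y.1 ∧ x.2 = y.2) ∨ (x.2 ≠ y.2 ∧ x.1 = y.1) := by
  simp [SimpleGraph.boxProd_adj]

lemma two_in_row {D : Finset (Fin m × Fin n)} {a : Fin m} {j1 j2 b : Fin n}
    (hj : j1 ≠ j2) (h1 : (a, j1) ∈ D) (h2 : (a, j2) ∈ D) :
    (a, b) ∈ PegReach (KK m n) D := by
  by_cases hb : (a, b) ∈ D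
  · exact reach_self hb
  · have hb2 : j2 ≠ b := fun h => hb (h ▸ h2)
    exact reach_move (u := (a, j1)) (v := (a, j2))
      (by simp [kk_adj, hj]) (by simp [kk_adj, hb2]) h1 h2 hb

lemma two_in_col {D : Finset (Fin m × Fin n)} {i1 i2 a : Fin m} {b : Fin n}
    (hi : i1 ≠ i2) (h1 : (i1, b) ∈ D) (h2 : (i2, b) ∈ D) :
    (a, b) ∈ PegReach (KK m n) D := by
  by_cases hb : (a, b) ∈ D
  · exact reach_self hb
  · have hb2 : i2 ≠ a := fun h => hb (h ▸ h2)
    exact reach_move (u := (i1, b)) (v := (i2, b))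
      (by simp [kk_adj, hi]) (by simp [kk_adj, hb2]) h1 h2 hb

end KK

lemma kk_upper {m n : ℕ} (D : Finset (Fin m × Fin n)) (hD : D.card = m + 1) :
    PegReach (KK m n) D = Set.univ := by
  ext t
  simp only [Set.mem_univ, iff_true]
  obtain ⟨a, b⟩ := t
  by_cases ht : (a, b) ∈ D
  · exact reach_self ht
  by_cases hrow : ∃ j1 j2 : Fin n, j1 ≠ j2 ∧ (a, j1) ∈ D ∧ (a, j2) ∈ D
  · obtain ⟨j1, j2, hj, h1, h2⟩ := hrow
    exact two_in_row hj h1 h2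
  by_cases hcol : ∃ i1 i2 : Fin m, i1 ≠ i2 ∧ (i1, b) ∈ D ∧ (i2, b) ∈ D
  · obtain ⟨i1, i2, hi, h1, h2⟩ := hcol
    exact two_in_col hi h1 h2
  push_neg at hrow hcol
  -- pigeonhole: two pegs in the same row
  have hcard : (univ : Finset (Fin m)).card < D.card := by
    simp [hD]
  obtain ⟨p, hp, q, hq, hpq, hfst⟩ :=
    Finset.exists_ne_map_eq_of_card_lt_of_maps_to hcard (fun x _ => Finset.mem_univ x.1)
  set i0 : Fin m := p.1 with hi0
  have hp' : (i0, p.2) ∈ D := by rw [hi0, Prod.mk.eta]; exact hp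
  have hq' : (i0, q.2) ∈ D := by rw [hfst, Prod.mk.eta]; exact hq
  have hj12 : p.2 ≠ q.2 := by
    intro h; exact hpq (Prod.ext hfst h)
  set j1 : Fin n := p.2
  set j2 : Fin n := q.2
  have hia : i0 ≠ a := fun h => hrow j1 j2 hj12 (h ▸ hp') (h ▸ hq')
  by_cases hc : ∃ c : Fin m, (c, b) ∈ D
  · obtain ⟨c, hcb⟩ := hc
    by_cases hci : c = i0
    · subst hci
      -- peg at (c,b)=(i0,b); pick j ∈ {j1,j2} with j ≠ b
      rcases eq_or_ne j1 b with h1b | h1b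
      · have h2b : j2 ≠ b := fun h => hj12 (h1b.trans h.symm)
        exact reach_move (u := (i0, j2)) (v := (i0, b))
          (by simp [kk_adj, h2b]) (by simp [kk_adj, hia]) hq' hcb ht
      · exact reach_move (u := (i0, j1)) (v := (i0, b))
          (by simp [kk_adj, h1b]) (by simp [kk_adj, hia]) hp' hcb ht
    · -- c ≠ i0 : move a peg of row i0 to (i0,b), then two in column b
      have hw : (i0, b) ∉ D := hcol c i0 hci hcb
      have h2b : j2 ≠ b := fun h => hw (h ▸ hq')
      refine reach_step ⟨(i0, j1), (i0, j2), (i0, b),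
        (by simp [kk_adj, hj12]), (by simp [kk_adj, h2b]), hp', hq', hw, rfl⟩ ?_
      refine two_in_col (Ne.symm hci) (i1 := i0) (i2 := c) ?_ ?_
      · exact mem_insert_self _ _
      · simp only [mem_insert, mem_erase]
        exact Or.inr ⟨fun h => hci (congrArg Prod.fst h), fun h => hci (congrArg Prod.fst h), hcb⟩
  · push_neg at hc
    -- column b is empty
    have h1b : j1 ≠ b := fun h => hc i0 (h ▸ hp')
    have h2b : j2 ≠ b := fun h => hc i0 (h ▸ hq')
    by_cases hr : ∃ j' : Fin n, (a, j') ∈ D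
    · obtain ⟨j', hj'⟩ := hr
      rcases eq_or_ne j2 j' with h2j | h2j
      · -- use j1 (j1 ≠ j' since j1 ≠ j2 = j')
        have h1j : j1 ≠ j' := h2j ▸ hj12
        have hw : (a, j1) ∉ D := hrow j' j1 (Ne.symm h1j) hj'
        refine reach_step ⟨(i0, j2), (i0, j1), (a, j1),
          (by simp [kk_adj, Ne.symm hj12]), (by simp [kk_adj, hia]), hq', hp', hw, rfl⟩ ?_
        refine two_in_row (j1 := j') (j2 := j1) (Ne.symm h1j) ?_ (mem_insert_self _ _)
        simp only [mem_insert, mem_erase]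
        exact Or.inr ⟨fun h => hia (congrArg Prod.fst h).symm,
          fun h => hia (congrArg Prod.fst h).symm, hj'⟩
      · have hw : (a, j2) ∉ D := hrow j' j2 (Ne.symm h2j) hj'
        refine reach_step ⟨(i0, j1), (i0, j2), (a, j2),
          (by simp [kk_adj, hj12]), (by simp [kk_adj, hia]), hp', hq', hw, rfl⟩ ?_
        refine two_in_row (j1 := j') (j2 := j2) (Ne.symm h2j) ?_ (mem_insert_self _ _)
        simp only [mem_insert, mem_erase]
        exact Or.inr ⟨fun h => hia (congrArg Prod.fst h).symm,
          fun h => hia (congrArg Prod.fst h).symm, hj'⟩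
    · push_neg at hr
      -- row a empty and column b empty; second pigeonhole on D minus one peg
      have hq'' : (i0, j2) ∈ D := hq'
      have hcard2 : ((univ : Finset (Fin m)).erase a).card < (D.erase (i0, j2)).card := by
        rw [card_erase_of_mem hq'', card_erase_of_mem (mem_univ a), hD, card_univ,
          Fintype.card_fin]
        have hm : 0 < m := Fin.pos a
        omega
      obtain ⟨p', hp2, q', hq2, hpq2, hfst2⟩ :=
        Finset.exists_ne_map_eq_of_card_lt_of_maps_to hcard2
          (fun x hx => by
            refine mem_erase.2 ⟨?_, mem_univ _⟩
            intro hxa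
            exact hr x.2 (by rw [← hxa, Prod.mk.eta]; exact (mem_erase.1 hx).2))
      have hp2D : p' ∈ D := (mem_erase.1 hp2).2
      have hq2D : q' ∈ D := (mem_erase.1 hq2).2
      have hp2ne : p' ≠ (i0, j2) := (mem_erase.1 hp2).1
      have hq2ne : q' ≠ (i0, j2) := (mem_erase.1 hq2).1
      have hsnd2 : p'.2 ≠ q'.2 := fun h => hpq2 (Prod.ext hfst2 h)
      have hpb : p'.2 ≠ b := fun h => hc p'.1 (by rw [← h, Prod.mk.eta]; exact hp2D)
      have hqb : q'.2 ≠ b := fun h => hc q'.1 (by rw [← h, Prod.mk.eta]; exact hq2D)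
      by_cases hi : p'.1 = i0
      · -- three pegs in row i0: p', q', (i0, j2)
        have hq1 : q'.1 = i0 := hfst2 ▸ hi
        -- move1: u=p', v=q', w=(i0, b)
        have hw1 : (i0, b) ∉ D := hc i0
        have hadj1 : (KK m n).Adj p' q' := by
          rw [kk_adj]; exact Or.inr ⟨hsnd2, hfst2⟩
        have hadj2 : (KK m n).Adj q' (i0, b) := by
          rw [kk_adj]; exact Or.inr ⟨hqb, hq1⟩
        refine reach_step ⟨p', q', (i0, b), hadj1, hadj2, hp2D, hq2D, hw1, rfl⟩ ?_
        -- move2: u=(i0,j2), v=(i0,b), w=(a,b)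
        have hmem1 : (i0, j2) ∈ insert (i0, b) ((D.erase p').erase q') := by
          simp only [mem_insert, mem_erase]
          exact Or.inr ⟨Ne.symm hq2ne, Ne.symm hp2ne, hq''⟩
        have hmem2 : (i0, b) ∈ insert (i0, b) ((D.erase p').erase q') :=
          mem_insert_self _ _
        have hwt : (a, b) ∉ insert (i0, b) ((D.erase p').erase q') := by
          simp only [mem_insert, mem_erase]
          rintro (h | ⟨-, -, h⟩)
          · exact hia (congrArg Prod.fst h).symm
          · exact ht h
        exact reach_move (u := (i0, j2)) (v := (i0, b))
          (by simp [kk_adj, h2b]) (by simp [kk_adj, hia]) hmem1 hmem2 hwt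
      · -- two rows with two pegs: row i0 (j1,j2) and row i1 := p'.1
        set i1 : Fin m := p'.1 with hi1
        have hq1 : q'.1 = i1 := hfst2.symm
        have hp1' : p' = (i1, p'.2) := by rw [hi1, Prod.mk.eta]
        have hq1' : q' = (i1, q'.2) := by rw [← hq1, Prod.mk.eta]
        -- move1: row i0 pegs jump to (i0, b)
        have hw1 : (i0, b) ∉ D := hc i0
        refine reach_step ⟨(i0, j1), (i0, j2), (i0, b),
          (by simp [kk_adj, hj12]), (by simp [kk_adj, h2b]), hp', hq'', hw1, rfl⟩ ?_
        set D1 : Finset (Fin m × Fin n) := insert (i0, b) ((D.erase (i0, j1)).erase (i0, j2))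
          with hD1
        -- move2: row i1 pegs p', q' jump to (i1, b)
        have hp2D1 : p' ∈ D1 := by
          simp only [hD1, mem_insert, mem_erase]
          exact Or.inr ⟨fun h => hi (by rw [hi1, h]), fun h => hi (by rw [hi1, h]), hp2D⟩
        have hq2D1 : q' ∈ D1 := by
          simp only [hD1, mem_insert, mem_erase]
          exact Or.inr ⟨fun h => hi (by rw [hfst2, h]), fun h => hi (by rw [hfst2, h]), hq2D⟩
        have hw2 : (i1, b) ∉ D1 := by
          simp only [hD1, mem_insert, mem_erase]
          rintro (h | ⟨-, -, h⟩)
          · injection h with h1 h2; exact hi h1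
          · exact hc i1 h
        have hadj1 : (KK m n).Adj p' q' := by
          rw [kk_adj]; exact Or.inr ⟨hsnd2, hfst2⟩
        have hadj2 : (KK m n).Adj q' (i1, b) := by
          rw [kk_adj]; exact Or.inr ⟨hqb, hq1⟩
        refine reach_step ⟨p', q', (i1, b), hadj1, hadj2, hp2D1, hq2D1, hw2, rfl⟩ ?_
        -- now two pegs in column b: (i0,b) and (i1,b)
        refine two_in_col (i1 := i0) (i2 := i1) (fun h => hi h.symm) ?_ (mem_insert_self _ _)
        simp only [mem_insert, mem_erase]
        exact Or.inr ⟨fun h => hi (hfst2.trans (congrArg Prod.fst h).symm),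
          fun h => hi (congrArg Prod.fst h).symm, mem_insert_self _ _⟩

lemma pegMove_swap {m n : ℕ} {D D' : Finset (Fin m × Fin n)}
    (h : PegMove (KK m n) D D') :
    PegMove (KK n m) (D.image Prod.swap) (D'.image Prod.swap) := by
  obtain ⟨u, v, w, huv, hvw, hu, hv, hw, hE⟩ := h
  refine ⟨u.swap, v.swap, w.swap, ?_, ?_,
    mem_image_of_mem _ hu, mem_image_of_mem _ hv, ?_, ?_⟩
  · rw [kk_adj] at huv ⊢; simp only [Prod.fst_swap, Prod.snd_swap]; tauto
  · rw [kk_adj] at hvw ⊢; simp only [Prod.fst_swap, Prod.snd_swap]; tauto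
  · intro hmem
    obtain ⟨x, hx, hxw⟩ := Finset.mem_image.1 hmem
    exact hw (Prod.swap_injective hxw ▸ hx)
  · rw [hE, Finset.image_insert, Finset.image_erase Prod.swap_injective,
      Finset.image_erase Prod.swap_injective]

lemma reach_swap {m n : ℕ} {D : Finset (Fin m × Fin n)} {t : Fin m × Fin n}
    (h : t ∈ PegReach (KK m n) D) :
    t.swap ∈ PegReach (KK n m) (D.image Prod.swap) := by
  obtain ⟨E, hE, ht⟩ := h
  exact ⟨E.image Prod.swap,
    Relation.ReflTransGen.lift (fun s : Finset (Fin m × Fin n) => s.image Prod.swap)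
      (fun _ _ => pegMove_swap) _ _ hE,
    mem_image_of_mem _ ht⟩

lemma good_swap {m n k : ℕ}
    (h : ∀ D : Finset (Fin n × Fin m), D.card = k → PegReach (KK n m) D = Set.univ)
    (D : Finset (Fin m × Fin n)) (hD : D.card = k) : PegReach (KK m n) D = Set.univ := by
  ext t
  simp only [Set.mem_univ, iff_true]
  have h1 : t.swap ∈ PegReach (KK n m) (D.image Prod.swap) := by
    rw [h _ (by rw [Finset.card_image_of_injective _ Prod.swap_injective, hD])]
    trivial
  have h2 := reach_swap h1
  rwa [Prod.swap_swap, Finset.image_image, show (Prod.swap ∘ Prod.swap :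
    Fin m × Fin n → Fin m × Fin n) = id from funext (fun x => Prod.swap_swap x),
    Finset.image_id] at h2

lemma kk_diag {m n k : ℕ} (hk : 0 < k) (hkm : k ≤ m) (hkn : k ≤ n) :
    ∃ D : Finset (Fin m × Fin n), D.card = k ∧
      ∀ t, t ∈ PegReach (KK m n) D → t ∈ D := by
  classical
  have hm : 0 < m := hk.trans_le hkm
  have hn : 0 < n := hk.trans_le hkn
  set f : ℕ → Fin m × Fin n :=
    fun i => (⟨min i (m-1), by omega⟩, ⟨min i (n-1), by omega⟩) with hf
  have hfval : ∀ i < k, ((f i).1 : ℕ) = i ∧ ((f i).2 : ℕ) = i := by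
    intro i hi
    constructor <;> simp [hf] <;> omega
  refine ⟨(Finset.range k).image f, ?_, ?_⟩
  · rw [Finset.card_image_of_injOn, Finset.card_range]
    intro i hi j hj hij
    have h1 := (hfval i (Finset.mem_range.1 hi)).1
    have h2 := (hfval j (Finset.mem_range.1 hj)).1
    rw [← h1, ← h2, hij]
  · have hnoadj : ∀ p ∈ (Finset.range k).image f, ∀ q ∈ (Finset.range k).image f,
        ¬ (KK m n).Adj p q := by
      simp only [Finset.mem_image, Finset.mem_range]
      rintro p ⟨i, hi, rfl⟩ q ⟨j, hj, rfl⟩ hadj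
      have h1 := hfval i hi
      have h2 := hfval j hj
      have hij : i = j := by
        rw [kk_adj] at hadj
        rcases hadj with ⟨h, he⟩ | ⟨h, he⟩
        · have := congrArg Fin.val he; omega
        · have := congrArg Fin.val he; omega
      subst hij
      exact (KK m n).irrefl hadj
    intro t ht
    obtain ⟨E, hE, htE⟩ := ht
    rcases hE.cases_head with rfl | ⟨c, hmove, -⟩
    · exact htE
    · obtain ⟨u, v, w, huv, -, hu, hv, -, -⟩ := hmove
      exact absurd huv (hnoadj u hu v hv)


theorem peggingNumber_complete_boxProd (m n : ℕ) (hm : 0 < m) (hn : 0 < n)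
    (h : ¬ (m = 1 ∧ n = 1)) :
    PeggingNumber ((⊤ : SimpleGraph (Fin m)) □ (⊤ : SimpleGraph (Fin n))) =
      min m n + 1 := by
  have hmem : (min m n + 1) ∈ {k | 0 < k ∧
      ∀ D : Finset (Fin m × Fin n), D.card = k → PegReach (KK m n) D = Set.univ} := by
    refine ⟨Nat.succ_pos _, fun D hD => ?_⟩
    rcases le_total m n with hle | hle
    · rw [min_eq_left hle] at hD
      exact kk_upper D hD
    · rw [min_eq_right hle] at hD
      exact good_swap (fun E hE => kk_upper E hE) D hD
  have hminlt : min m n < m * n := by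
    have h1 : 0 < min m n := lt_min hm hn
    rcases le_total m n with hle | hle
    · have h2 : 2 ≤ n := by omega
      have h3 : min m n * 2 ≤ m * n := Nat.mul_le_mul (min_le_left m n) h2
      omega
    · have h2 : 2 ≤ m := by omega
      have h3 : min m n * 2 ≤ n * m := Nat.mul_le_mul (min_le_right m n) h2
      rw [mul_comm n m] at h3
      omega
  refine le_antisymm (Nat.sInf_le hmem) (le_csInf ⟨_, hmem⟩ ?_)
  rintro j ⟨hj0, hjall⟩
  by_contra hlt
  push_neg at hlt
  have hjmin : j ≤ min m n := by omega
  obtain ⟨D, hDc, hDreach⟩ := kk_diag hj0 (hjmin.trans (min_le_left m n))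
    (hjmin.trans (min_le_right m n))
  have hall := hjall D hDc
  have hsub : (univ : Finset (Fin m × Fin n)) ⊆ D := fun x _ =>
    hDreach x (by rw [hall]; trivial)
  have hcard := Finset.card_le_card hsub
  rw [Finset.card_univ, hDc] at hcard
  simp only [Fintype.card_prod, Fintype.card_fin] at hcard
  omega
end

section
/- For positive integers m, n with min{m,n} ≥ 3, the optimal pegging number of K_m × K_n is 3; if mn > 1 and min{m,n} ≤ 2, it is 2; and if m = n = 1, it is 1. -/
open SimpleGraph Finset

variable {V : Type*} {W : Type*}

section Helpers
variable {V : Type*} [DecidableEq V] {G : SimpleGraph V}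

lemma pegMove_two_le {D D' : Finset V} (h : PegMove G D D') : 2 ≤ D.card := by
  obtain ⟨u, v, w, huv, _, hu, hv, _, _⟩ := h
  exact Finset.one_lt_card.mpr ⟨u, hu, v, hv, huv.ne⟩

lemma rtg_eq_of_card_le_one {D D' : Finset V} (h : D.card ≤ 1)
    (hr : Relation.ReflTransGen (PegMove G) D D') : D' = D := by
  rcases hr.cases_head with h1 | ⟨c, hc, _⟩
  · exact h1.symm
  · exact absurd (pegMove_two_le hc) (by omega)

lemma mem_reach_two {D : Finset V} (h2 : D.card = 2) {t : V}
    (ht : t ∈ PegReach G D) : t ∈ D ∨ ∃ v ∈ D, G.Adj v t := by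
  obtain ⟨D', hr, htD'⟩ := ht
  rcases hr.cases_head with h1 | ⟨C, hC, hr'⟩
  · left; exact h1.symm ▸ htD'
  · obtain ⟨u, v, w, huv, hvw, hu, hv, hw, hCeq⟩ := hC
    have hvu : v ∈ D.erase u := Finset.mem_erase.mpr ⟨huv.ne', hv⟩
    have hc0 : ((D.erase u).erase v).card = 0 := by
      rw [Finset.card_erase_of_mem hvu, Finset.card_erase_of_mem hu, h2]
    have hCcard : C.card ≤ 1 := by
      rw [hCeq]
      calc (insert w ((D.erase u).erase v)).card ≤ ((D.erase u).erase v).card + 1 :=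
        Finset.card_insert_le _ _
      _ ≤ 1 := by omega
    have hD'C := rtg_eq_of_card_le_one hCcard hr'
    have : t = w := by
      rw [hD'C, hCeq] at htD'
      rcases Finset.mem_insert.mp htD' with h | h
      · exact h
      · exact absurd h (by simp [Finset.card_eq_zero.mp hc0])
    exact Or.inr ⟨v, hv, this ▸ hvw⟩

lemma reach_of_card_le_one {D : Finset V} (h : D.card ≤ 1) :
    PegReach G D = ↑D := by
  ext t
  constructor
  · rintro ⟨D', hr, ht⟩
    rw [rtg_eq_of_card_le_one h hr] at ht; exact ht
  · intro ht; exact ⟨D, Relation.ReflTransGen.refl, ht⟩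

lemma reach_full_of_two {a b : V} (hab : G.Adj a b)
    (h : ∀ w, w ∉ ({a, b} : Finset V) → G.Adj a w ∨ G.Adj b w) :
    PegReach G {a, b} = Set.univ := by
  ext t
  simp only [Set.mem_univ, iff_true]
  by_cases htD : t ∈ ({a, b} : Finset V)
  · exact ⟨_, Relation.ReflTransGen.refl, htD⟩
  · rcases h t htD with hat | hbt
    · exact ⟨_, Relation.ReflTransGen.single
        ⟨b, a, t, hab.symm, hat, by simp, by simp, htD, rfl⟩, Finset.mem_insert_self _ _⟩
    · exact ⟨_, Relation.ReflTransGen.single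
        ⟨a, b, t, hab, hbt, by simp, by simp, htD, rfl⟩, Finset.mem_insert_self _ _⟩

end Helpers

lemma rook_adj {m n : ℕ} (x y : Fin m × Fin n) :
    ((⊤ : SimpleGraph (Fin m)) □ (⊤ : SimpleGraph (Fin n))).Adj x y ↔
    (x.1 ≠ y.1 ∧ x.2 = y.2) ∨ (x.2 ≠ y.2 ∧ x.1 = y.1) := by
  simp [SimpleGraph.boxProd_adj]

lemma exists_avoid {k : ℕ} (hk : 3 ≤ k) (p q : Fin k) : ∃ z : Fin k, z ≠ p ∧ z ≠ q := by
  have h : ¬ (Finset.univ : Finset (Fin k)) ⊆ {p, q} := by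
    intro h
    have h1 := Finset.card_le_card h
    have h2 : ({p, q} : Finset (Fin k)).card ≤ 2 := by
      calc ({p, q} : Finset (Fin k)).card ≤ ({q} : Finset (Fin k)).card + 1 :=
        Finset.card_insert_le _ _
      _ ≤ 2 := by simp
    rw [Finset.card_univ, Fintype.card_fin] at h1
    omega
  obtain ⟨z, _, hz⟩ := Finset.not_subset.mp h
  simp only [Finset.mem_insert, Finset.mem_singleton, not_or] at hz
  exact ⟨z, hz.1, hz.2⟩

lemma not_full_one {V : Type*} [Fintype V] [DecidableEq V] {G : SimpleGraph V}
    (h : 1 < Fintype.card V) {D : Finset V} (h1 : D.card = 1) :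
    PegReach G D ≠ Set.univ := by
  intro hfull
  have hDuniv : (↑D : Set V) = Set.univ := by
    rw [← reach_of_card_le_one h1.le]; exact hfull
  have hD : D = Finset.univ := by
    apply Finset.eq_univ_of_forall
    intro x
    have : x ∈ (↑D : Set V) := hDuniv ▸ Set.mem_univ x
    exact_mod_cast this
  rw [hD, Finset.card_univ] at h1
  omega

lemma not_full_two {m n : ℕ} (hm : 3 ≤ m) (hn : 3 ≤ n)
    {D : Finset (Fin m × Fin n)} (h2 : D.card = 2) :
    PegReach ((⊤ : SimpleGraph (Fin m)) □ (⊤ : SimpleGraph (Fin n))) D ≠ Set.univ := by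
  obtain ⟨a, b, hab, rfl⟩ := Finset.card_eq_two.mp h2
  obtain ⟨z1, hz1a, hz1b⟩ := exists_avoid hm a.1 b.1
  obtain ⟨z2, hz2a, hz2b⟩ := exists_avoid hn a.2 b.2
  intro hfull
  have hz : (z1, z2) ∈ PegReach ((⊤ : SimpleGraph (Fin m)) □ (⊤ : SimpleGraph (Fin n))) {a, b} :=
    hfull ▸ Set.mem_univ _
  rcases mem_reach_two (Finset.card_pair hab) hz with hmem | ⟨v, hv, hadj⟩
  · rcases Finset.mem_insert.mp hmem with h | h
    · exact hz1a (congrArg Prod.fst h)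
    · exact hz1b (congrArg Prod.fst (Finset.mem_singleton.mp h))
  · rw [rook_adj] at hadj
    rcases Finset.mem_insert.mp hv with rfl | hv
    · rcases hadj with ⟨_, h⟩ | ⟨_, h⟩
      · exact hz2a h.symm
      · exact hz1a h.symm
    · rw [Finset.mem_singleton.mp hv] at hadj
      rcases hadj with ⟨_, h⟩ | ⟨_, h⟩
      · exact hz2b h.symm
      · exact hz1b h.symm

lemma reach_three_of {m n : ℕ} (x0 : Fin m) (y0 y1 y2 : Fin n)
    (h01 : y0 ≠ y1) (h02 : y0 ≠ y2) (h12 : y1 ≠ y2) :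
    PegReach ((⊤ : SimpleGraph (Fin m)) □ (⊤ : SimpleGraph (Fin n)))
      {(x0, y0), (x0, y1), (x0, y2)} = Set.univ := by
  set G := (⊤ : SimpleGraph (Fin m)) □ (⊤ : SimpleGraph (Fin n)) with hG
  have adjR : ∀ (ya yb : Fin n), ya ≠ yb → G.Adj (x0, ya) (x0, yb) :=
    fun ya yb h => (rook_adj _ _).mpr (Or.inr ⟨h, rfl⟩)
  have adjC : ∀ (y : Fin n) (i : Fin m), i ≠ x0 → G.Adj (x0, y) (i, y) :=
    fun y i h => (rook_adj _ _).mpr (Or.inl ⟨Ne.symm h, rfl⟩)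
  set D : Finset (Fin m × Fin n) := {(x0, y0), (x0, y1), (x0, y2)} with hD
  ext t
  obtain ⟨i, j⟩ := t
  simp only [Set.mem_univ, iff_true]
  by_cases htD : (i, j) ∈ D
  · exact ⟨D, Relation.ReflTransGen.refl, htD⟩
  by_cases hi : i = x0
  · have hj1 : j ≠ y1 := by
      intro h; exact htD (by simp [hD, hi, h])
    exact ⟨_, Relation.ReflTransGen.single
      ⟨(x0, y0), (x0, y1), (i, j), adjR _ _ h01,
        (rook_adj _ _).mpr (Or.inr ⟨Ne.symm hj1, hi.symm⟩),
        by simp [hD], by simp [hD], htD, rfl⟩, Finset.mem_insert_self _ _⟩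
  · by_cases hj0 : j = y0
    · exact ⟨_, Relation.ReflTransGen.single
        ⟨(x0, y1), (x0, y0), (i, j), adjR _ _ (Ne.symm h01),
          (rook_adj _ _).mpr (Or.inl ⟨fun h => hi h.symm, hj0.symm⟩),
          by simp [hD], by simp [hD], htD, rfl⟩, Finset.mem_insert_self _ _⟩
    by_cases hj1 : j = y1
    · exact ⟨_, Relation.ReflTransGen.single
        ⟨(x0, y0), (x0, y1), (i, j), adjR _ _ h01,
          (rook_adj _ _).mpr (Or.inl ⟨fun h => hi h.symm, hj1.symm⟩),
          by simp [hD], by simp [hD], htD, rfl⟩, Finset.mem_insert_self _ _⟩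
    by_cases hj2 : j = y2
    · exact ⟨_, Relation.ReflTransGen.single
        ⟨(x0, y0), (x0, y2), (i, j), adjR _ _ h02,
          (rook_adj _ _).mpr (Or.inl ⟨fun h => hi h.symm, hj2.symm⟩),
          by simp [hD], by simp [hD], htD, rfl⟩, Finset.mem_insert_self _ _⟩
    -- generic case: two moves through (x0, j)
    have hpD : (x0, j) ∉ D := by
      simp only [hD, Finset.mem_insert, Finset.mem_singleton, Prod.mk.injEq, not_or]
      exact ⟨fun h => hj0 h.2, fun h => hj1 h.2, fun h => hj2 h.2⟩
    have mv1 : PegMove G D (insert (x0, j) ((D.erase (x0, y0)).erase (x0, y1))) :=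
      ⟨(x0, y0), (x0, y1), (x0, j), adjR _ _ h01, adjR _ _ (fun h => hj1 h.symm),
        by simp [hD], by simp [hD], hpD, rfl⟩
    have he2 : (x0, y2) ∈ insert (x0, j) ((D.erase (x0, y0)).erase (x0, y1)) := by
      simp only [Finset.mem_insert, Finset.mem_erase]
      right
      refine ⟨?_, ?_, by simp [hD]⟩
      · simp [Prod.mk.injEq]; intro h; exact absurd h.symm h12
      · simp [Prod.mk.injEq]; intro h; exact absurd h.symm h02
    have htD1 : (i, j) ∉ insert (x0, j) ((D.erase (x0, y0)).erase (x0, y1)) := by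
      intro h
      rcases Finset.mem_insert.mp h with h | h
      · exact hi (congrArg Prod.fst h)
      · exact htD (Finset.mem_of_mem_erase (Finset.mem_of_mem_erase h))
    have mv2 : PegMove G (insert (x0, j) ((D.erase (x0, y0)).erase (x0, y1)))
        (insert (i, j) (((insert (x0, j) ((D.erase (x0, y0)).erase (x0, y1))).erase (x0, y2)).erase (x0, j))) :=
      ⟨(x0, y2), (x0, j), (i, j), adjR _ _ (fun h => hj2 h.symm), adjC _ _ hi,
        he2, Finset.mem_insert_self _ _, htD1, rfl⟩
    exact ⟨_, (Relation.ReflTransGen.single mv2).head mv1, Finset.mem_insert_self _ _⟩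

lemma exists_pair_cover {m n : ℕ} (hm : 0 < m) (hn : 0 < n) (hmn : 1 < m * n)
    (hmin : min m n ≤ 2) :
    ∃ a b : Fin m × Fin n,
      ((⊤ : SimpleGraph (Fin m)) □ (⊤ : SimpleGraph (Fin n))).Adj a b ∧
      ∀ w, w ∉ ({a, b} : Finset (Fin m × Fin n)) →
        ((⊤ : SimpleGraph (Fin m)) □ (⊤ : SimpleGraph (Fin n))).Adj a w ∨
        ((⊤ : SimpleGraph (Fin m)) □ (⊤ : SimpleGraph (Fin n))).Adj b w := by
  have vert : 2 ≤ m → (m ≤ 2 ∨ n = 1) → (∃ a b : Fin m × Fin n,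
      ((⊤ : SimpleGraph (Fin m)) □ (⊤ : SimpleGraph (Fin n))).Adj a b ∧
      ∀ w, w ∉ ({a, b} : Finset (Fin m × Fin n)) →
        ((⊤ : SimpleGraph (Fin m)) □ (⊤ : SimpleGraph (Fin n))).Adj a w ∨
        ((⊤ : SimpleGraph (Fin m)) □ (⊤ : SimpleGraph (Fin n))).Adj b w) := by
    intro hm2 hcov
    refine ⟨(⟨0, by omega⟩, ⟨0, hn⟩), (⟨1, by omega⟩, ⟨0, hn⟩),
      (rook_adj _ _).mpr (Or.inl ⟨by simp [Fin.ext_iff], rfl⟩), ?_⟩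
    intro w hw
    obtain ⟨i, j⟩ := w
    have hiv := i.isLt
    have hjv := j.isLt
    simp only [Finset.mem_insert, Finset.mem_singleton, not_or, Prod.mk.injEq, not_and,
      Fin.ext_iff] at hw
    simp only [rook_adj, ne_eq, Fin.ext_iff]
    omega
  have horiz : 2 ≤ n → (n ≤ 2 ∨ m = 1) → (∃ a b : Fin m × Fin n,
      ((⊤ : SimpleGraph (Fin m)) □ (⊤ : SimpleGraph (Fin n))).Adj a b ∧
      ∀ w, w ∉ ({a, b} : Finset (Fin m × Fin n)) →
        ((⊤ : SimpleGraph (Fin m)) □ (⊤ : SimpleGraph (Fin n))).Adj a w ∨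
        ((⊤ : SimpleGraph (Fin m)) □ (⊤ : SimpleGraph (Fin n))).Adj b w) := by
    intro hn2 hcov
    refine ⟨(⟨0, hm⟩, ⟨0, by omega⟩), (⟨0, hm⟩, ⟨1, by omega⟩),
      (rook_adj _ _).mpr (Or.inr ⟨by simp [Fin.ext_iff], rfl⟩), ?_⟩
    intro w hw
    obtain ⟨i, j⟩ := w
    have hiv := i.isLt
    have hjv := j.isLt
    simp only [Finset.mem_insert, Finset.mem_singleton, not_or, Prod.mk.injEq, not_and,
      Fin.ext_iff] at hw
    simp only [rook_adj, ne_eq, Fin.ext_iff]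
    omega
  rcases (by omega : m = 1 ∨ m = 2 ∨ 3 ≤ m) with rfl | rfl | hm3
  · exact horiz (by omega) (Or.inr rfl)
  · exact vert le_rfl (Or.inl le_rfl)
  · have hn2 : n ≤ 2 := by omega
    rcases (by omega : n = 1 ∨ n = 2) with rfl | rfl
    · exact vert (by omega) (Or.inr rfl)
    · exact horiz le_rfl (Or.inl le_rfl)

theorem optPeggingNumber_complete_boxProd (m n : ℕ) (hm : 0 < m) (hn : 0 < n) :
    (3 ≤ min m n →
      OptPeggingNumber ((⊤ : SimpleGraph (Fin m)) □ (⊤ : SimpleGraph (Fin n))) = 3) ∧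
    (1 < m * n ∧ min m n ≤ 2 →
      OptPeggingNumber ((⊤ : SimpleGraph (Fin m)) □ (⊤ : SimpleGraph (Fin n))) = 2) ∧
    (m = 1 ∧ n = 1 →
      OptPeggingNumber ((⊤ : SimpleGraph (Fin m)) □ (⊤ : SimpleGraph (Fin n))) = 1) := by
  refine ⟨?_, ?_, ?_⟩
  · -- min ≥ 3 : answer 3
    intro hmin
    have hm3 : 3 ≤ m := le_trans hmin (min_le_left _ _)
    have hn3 : 3 ≤ n := le_trans hmin (min_le_right _ _)
    have hcard : 1 < Fintype.card (Fin m × Fin n) := by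
      have h9 : 9 ≤ m * n := by
        calc (9 : ℕ) = 3 * 3 := by norm_num
        _ ≤ m * n := Nat.mul_le_mul hm3 hn3
      rw [Fintype.card_prod, Fintype.card_fin, Fintype.card_fin]
      omega
    show sInf {k | 0 < k ∧ ∃ D : Finset (Fin m × Fin n), D.card = k ∧
      PegReach ((⊤ : SimpleGraph (Fin m)) □ (⊤ : SimpleGraph (Fin n))) D = Set.univ} = 3
    have h3 : 3 ∈ {k | 0 < k ∧ ∃ D : Finset (Fin m × Fin n), D.card = k ∧
        PegReach ((⊤ : SimpleGraph (Fin m)) □ (⊤ : SimpleGraph (Fin n))) D = Set.univ} := by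
      refine ⟨by norm_num, {(⟨0, by omega⟩, ⟨0, by omega⟩), (⟨0, by omega⟩, ⟨1, by omega⟩),
        (⟨0, by omega⟩, ⟨2, by omega⟩)}, ?_, ?_⟩
      · apply Finset.card_eq_three.mpr
        exact ⟨_, _, _, by simp [Prod.ext_iff, Fin.ext_iff], by simp [Prod.ext_iff, Fin.ext_iff],
          by simp [Prod.ext_iff, Fin.ext_iff], rfl⟩
      · exact reach_three_of _ _ _ _ (by simp [Fin.ext_iff]) (by simp [Fin.ext_iff])
          (by simp [Fin.ext_iff])
    have hle := Nat.sInf_le h3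
    obtain ⟨hpos, D, hcardD, hreach⟩ := Nat.sInf_mem (⟨3, h3⟩ : Set.Nonempty _)
    have h1 : sInf {k | 0 < k ∧ ∃ D : Finset (Fin m × Fin n), D.card = k ∧
        PegReach ((⊤ : SimpleGraph (Fin m)) □ (⊤ : SimpleGraph (Fin n))) D = Set.univ} ≠ 1 :=
      fun h => not_full_one hcard (h ▸ hcardD) hreach
    have h2 : sInf {k | 0 < k ∧ ∃ D : Finset (Fin m × Fin n), D.card = k ∧
        PegReach ((⊤ : SimpleGraph (Fin m)) □ (⊤ : SimpleGraph (Fin n))) D = Set.univ} ≠ 2 :=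
      fun h => not_full_two hm3 hn3 (h ▸ hcardD) hreach
    omega
  · -- mixed case : answer 2
    rintro ⟨hmn, hmin⟩
    obtain ⟨a, b, hab, hcov⟩ := exists_pair_cover hm hn hmn hmin
    have hcard : 1 < Fintype.card (Fin m × Fin n) := by
      rw [Fintype.card_prod, Fintype.card_fin, Fintype.card_fin]; exact hmn
    show sInf {k | 0 < k ∧ ∃ D : Finset (Fin m × Fin n), D.card = k ∧
      PegReach ((⊤ : SimpleGraph (Fin m)) □ (⊤ : SimpleGraph (Fin n))) D = Set.univ} = 2
    have h2 : 2 ∈ {k | 0 < k ∧ ∃ D : Finset (Fin m × Fin n), D.card = k ∧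
        PegReach ((⊤ : SimpleGraph (Fin m)) □ (⊤ : SimpleGraph (Fin n))) D = Set.univ} :=
      ⟨by norm_num, {a, b}, Finset.card_pair hab.ne, reach_full_of_two hab hcov⟩
    have hle := Nat.sInf_le h2
    obtain ⟨hpos, D, hcardD, hreach⟩ := Nat.sInf_mem (⟨2, h2⟩ : Set.Nonempty _)
    have h1 : sInf {k | 0 < k ∧ ∃ D : Finset (Fin m × Fin n), D.card = k ∧
        PegReach ((⊤ : SimpleGraph (Fin m)) □ (⊤ : SimpleGraph (Fin n))) D = Set.univ} ≠ 1 :=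
      fun h => not_full_one hcard (h ▸ hcardD) hreach
    omega
  · -- m = n = 1 : answer 1
    rintro ⟨rfl, rfl⟩
    show sInf {k | 0 < k ∧ ∃ D : Finset (Fin 1 × Fin 1), D.card = k ∧
      PegReach ((⊤ : SimpleGraph (Fin 1)) □ (⊤ : SimpleGraph (Fin 1))) D = Set.univ} = 1
    have h1 : 1 ∈ {k | 0 < k ∧ ∃ D : Finset (Fin 1 × Fin 1), D.card = k ∧
        PegReach ((⊤ : SimpleGraph (Fin 1)) □ (⊤ : SimpleGraph (Fin 1))) D = Set.univ} := by
      refine ⟨one_pos, {((0 : Fin 1), (0 : Fin 1))}, by simp, ?_⟩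
      ext t
      simp only [Set.mem_univ, iff_true]
      exact ⟨_, Relation.ReflTransGen.refl, by
        simp [Subsingleton.elim t ((0 : Fin 1), (0 : Fin 1))]⟩
    have hle := Nat.sInf_le h1
    obtain ⟨hpos, -⟩ := Nat.sInf_mem (⟨1, h1⟩ : Set.Nonempty _)
    omega
end

section
/- For any graph G and positive integer n, the pegging number of the Cartesian product G × K_n is at most the two-pebbling number of G, i.e. P(G × K_n) ≤ π₂(G). -/
open SimpleGraph Finset

variable {V : Type*} {W : Type*}

/-- A pebbling move: remove two pebbles from `u`, add one pebble on an adjacent vertex `v`. -/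
def PebMove {V : Type*} (G : SimpleGraph V) [DecidableEq V] (D D' : V → ℕ) : Prop :=
  ∃ u v : V, G.Adj u v ∧ 2 ≤ D u ∧
    D' = fun x => if x = u then D u - 2 else if x = v then D v + 1 else D x

/-- The pebbling number (`⊤` if no number of pebbles suffices): the least `p > 0` such
that from every distribution of `p` pebbles, every target can receive a pebble. -/
noncomputable def PebblingNumber {V : Type*} [Fintype V] [DecidableEq V]
    (G : SimpleGraph V) : ℕ∞ :=
  sInf {p : ℕ∞ | ∃ k : ℕ, p = k ∧ 0 < k ∧ ∀ D : V → ℕ, (∑ x, D x) = k →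
    ∀ t : V, ∃ D', Relation.ReflTransGen (PebMove G) D D' ∧ 1 ≤ D' t}

/-- The two-pebbling number (`⊤` if no number of pebbles suffices): the least `p > 0` such
that from every distribution of `p` pebbles, every target can receive two pebbles. -/
noncomputable def TwoPebblingNumber {V : Type*} [Fintype V] [DecidableEq V]
    (G : SimpleGraph V) : ℕ∞ :=
  sInf {p : ℕ∞ | ∃ k : ℕ, p = k ∧ 0 < k ∧ ∀ D : V → ℕ, (∑ x, D x) = k →
    ∀ t : V, ∃ D', Relation.ReflTransGen (PebMove G) D D' ∧ 2 ≤ D' t}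

section PegboxProof

variable {V : Type*} [DecidableEq V]

/-- Number of pegs in the column of `u`. -/
private def pegCol {n : ℕ} (E : Finset (V × Fin n)) (u : V) : ℕ :=
  (E.filter fun p => p.1 = u).card

/-- Number of pending moves into `u`. -/
private def pIn (M : Multiset (V × V)) (u : V) : ℕ :=
  Multiset.countP (fun p => p.2 = u) M

/-- Number of pending moves out of `u`. -/
private def pOut (M : Multiset (V × V)) (u : V) : ℕ :=
  Multiset.countP (fun p => p.1 = u) M

private lemma pIn_cons (a : V × V) (M : Multiset (V × V)) (u : V) :
    pIn (a ::ₘ M) u = pIn M u + if a.2 = u then 1 else 0 := by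
  simp [pIn, Multiset.countP_cons]

private lemma pOut_cons (a : V × V) (M : Multiset (V × V)) (u : V) :
    pOut (a ::ₘ M) u = pOut M u + if a.1 = u then 1 else 0 := by
  simp [pOut, Multiset.countP_cons]

private lemma pegCol_insert {n : ℕ} {E : Finset (V × Fin n)} {x : V × Fin n} (hx : x ∉ E)
    (u : V) : pegCol (insert x E) u = pegCol E u + if x.1 = u then 1 else 0 := by
  unfold pegCol
  rw [Finset.filter_insert]
  split_ifs with h
  · rw [Finset.card_insert_of_notMem fun hc => hx (Finset.mem_filter.mp hc).1]
  · rfl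

private lemma pegCol_erase {n : ℕ} {E : Finset (V × Fin n)} {x : V × Fin n} (hx : x ∈ E)
    (u : V) : pegCol (E.erase x) u + (if x.1 = u then 1 else 0) = pegCol E u := by
  unfold pegCol
  rw [Finset.filter_erase]
  split_ifs with h
  · have hmem : x ∈ E.filter fun p => p.1 = u := Finset.mem_filter.mpr ⟨hx, h⟩
    rw [Finset.card_erase_of_mem hmem]
    have : 0 < (E.filter fun p => p.1 = u).card := Finset.card_pos.mpr ⟨x, hmem⟩
    omega
  · have hnot : x ∉ E.filter fun p => p.1 = u := fun hc => h (Finset.mem_filter.mp hc).2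
    rw [Finset.erase_eq_of_notMem hnot]
    omega

/-- Column-count bookkeeping for a pegging move on the product graph. -/
private lemma pegCol_move {n : ℕ} {E : Finset (V × Fin n)} {a b w : V × Fin n}
    (ha : a ∈ E) (hb : b ∈ E) (hab : a ≠ b) (hw : w ∉ E) (u : V) :
    pegCol (insert w ((E.erase a).erase b)) u + (if a.1 = u then 1 else 0)
      + (if b.1 = u then 1 else 0) = pegCol E u + (if w.1 = u then 1 else 0) := by
  have hb' : b ∈ E.erase a := Finset.mem_erase.mpr ⟨fun h => hab h.symm, hb⟩
  have hw' : w ∉ (E.erase a).erase b := fun hc =>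
    hw (Finset.mem_of_mem_erase (Finset.mem_of_mem_erase hc))
  rw [pegCol_insert hw' u]
  have h1 := pegCol_erase hb' u
  have h2 := pegCol_erase ha u
  omega

private lemma two_pegs {n : ℕ} {E : Finset (V × Fin n)} {t : V} (h : 2 ≤ pegCol E t) :
    ∃ x y : Fin n, x ≠ y ∧ (t, x) ∈ E ∧ (t, y) ∈ E := by
  obtain ⟨p, hp, q, hq, hpq⟩ := Finset.one_lt_card.mp h
  obtain ⟨hpE, hp1⟩ := Finset.mem_filter.mp hp
  obtain ⟨hqE, hq1⟩ := Finset.mem_filter.mp hq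
  refine ⟨p.2, q.2, ?_, ?_, ?_⟩
  · intro hc
    exact hpq (Prod.ext_iff.mpr ⟨hp1.trans hq1.symm, hc⟩)
  · have hpt : p = (t, p.2) := Prod.ext_iff.mpr ⟨hp1, rfl⟩
    rwa [← hpt]
  · have hqt : q = (t, q.2) := Prod.ext_iff.mpr ⟨hq1, rfl⟩
    rwa [← hqt]

private lemma pIn_cons' (a b : V) (M : Multiset (V × V)) (u : V) :
    pIn ((a, b) ::ₘ M) u = pIn M u + if b = u then 1 else 0 := by
  simp [pIn, Multiset.countP_cons]

private lemma pOut_cons' (a b : V) (M : Multiset (V × V)) (u : V) :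
    pOut ((a, b) ::ₘ M) u = pOut M u + if a = u then 1 else 0 := by
  simp [pOut, Multiset.countP_cons]

/-- The key lemma: given pegs `E` on `G □ Kₙ`, a multiset `PL` of pending pebbling
moves, and a virtual pebble distribution `q` satisfying the invariant
`q u + 2·out(u) ≤ col(u) + in(u)`, if `2 ≤ q v` then we can reach (by pegging
moves) a configuration with at least two pegs in the column of `v`, preserving
the invariant. -/
private lemma ensure (G : SimpleGraph V) {n : ℕ} :
    ∀ (N : ℕ) (PL : Multiset (V × V)) (E : Finset (V × Fin n)) (q : V → ℕ) (v : V),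
      Multiset.card PL ≤ N →
      (∀ p ∈ PL, G.Adj p.1 p.2) →
      (∀ u, q u + 2 * pOut PL u ≤ pegCol E u + pIn PL u) →
      2 ≤ q v →
      ∃ (E' : Finset (V × Fin n)) (PL' : Multiset (V × V)),
        Relation.ReflTransGen (PegMove (G □ (⊤ : SimpleGraph (Fin n)))) E E' ∧
        (∀ p ∈ PL', G.Adj p.1 p.2) ∧
        (∀ u, q u + 2 * pOut PL' u ≤ pegCol E' u + pIn PL' u) ∧
        Multiset.card PL' ≤ Multiset.card PL ∧ 2 ≤ pegCol E' v := by
  intro N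
  induction N with
  | zero =>
    intro PL E q v hcard hadj hinv hqv
    have hPL : PL = 0 := Multiset.card_eq_zero.mp (Nat.le_zero.mp hcard)
    subst hPL
    have hv := hinv v
    simp [pIn, pOut] at hv
    exact ⟨E, 0, Relation.ReflTransGen.refl, by simp, hinv, le_rfl, by omega⟩
  | succ N ih =>
    intro PL E q v hcard hadj hinv hqv
    by_cases hrich : 2 ≤ pegCol E v
    · exact ⟨E, PL, Relation.ReflTransGen.refl, hadj, hinv, le_rfl, hrich⟩
    · -- `v` is poor, so there is a pending move into `v`
      have hpin : 0 < pIn PL v := by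
        have := hinv v
        omega
      obtain ⟨e, heM, he2⟩ := Multiset.countP_pos.mp hpin
      obtain ⟨PL', rfl⟩ := Multiset.exists_cons_of_mem heM
      obtain ⟨c, v'⟩ := e
      dsimp only at he2
      subst v'
      have hcv : G.Adj c v := hadj (c, v) (Multiset.mem_cons_self _ _)
      have hcv_ne : c ≠ v := hcv.ne
      set qt : V → ℕ := fun u => if u = c then q u + 2 else if u = v then q u - 1 else q u
        with hqt
      have hcard' : Multiset.card PL' ≤ N := by
        rw [Multiset.card_cons] at hcard
        omega
      have hadj' : ∀ p ∈ PL', G.Adj p.1 p.2 := fun p hp => hadj p (Multiset.mem_cons_of_mem hp)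
      have hinv' : ∀ u, qt u + 2 * pOut PL' u ≤ pegCol E u + pIn PL' u := by
        intro u
        have h0 := hinv u
        rw [pIn_cons', pOut_cons'] at h0
        simp only [hqt]
        rcases eq_or_ne u c with rfl | huc
        · rw [if_pos rfl] at h0
          rw [if_neg (fun h : v = u => hcv_ne h.symm)] at h0
          rw [if_pos rfl]
          omega
        · rw [if_neg (fun h : c = u => huc h.symm)] at h0
          rw [if_neg huc]
          rcases eq_or_ne u v with rfl | huv
          · rw [if_pos rfl] at h0
            rw [if_pos rfl]
            omega
          · rw [if_neg (fun h : v = u => huv h.symm)] at h0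
            rw [if_neg huv]
            omega
      obtain ⟨E₁, PL₁, hrtg₁, hadj₁, hinv₁, hcard₁, hrich₁⟩ :=
        ih PL' E qt c hcard' hadj' hinv' (by simp only [hqt, if_pos rfl]; omega)
      by_cases hsub : ∀ ρ : Fin n, (c, ρ) ∈ E₁ → (v, ρ) ∈ E₁
      · -- donate: every pegged row of column `c` is pegged in column `v` as well
        have hvle : pegCol E₁ c ≤ pegCol E₁ v := by
          apply Finset.card_le_card_of_injOn (fun p => (v, p.2))
          · intro p hp
            obtain ⟨hpE, hp1⟩ := Finset.mem_filter.mp hp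
            refine Finset.mem_filter.mpr ⟨?_, rfl⟩
            have hpc : p = (c, p.2) := Prod.ext_iff.mpr ⟨hp1, rfl⟩
            exact hsub p.2 (hpc ▸ hpE)
          · intro p hp p' hp' hpq
            have h2 : p.2 = p'.2 := by simpa using congrArg Prod.snd hpq
            have hp1 := (Finset.mem_filter.mp hp).2
            have hp1' := (Finset.mem_filter.mp hp').2
            exact Prod.ext_iff.mpr ⟨hp1.trans hp1'.symm, h2⟩
        refine ⟨E₁, (c, v) ::ₘ PL₁, hrtg₁, ?_, ?_, ?_, le_trans hrich₁ hvle⟩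
        · intro p hp
          rcases Multiset.mem_cons.mp hp with rfl | hp'
          · exact hcv
          · exact hadj₁ p hp'
        · intro u
          have h1 := hinv₁ u
          simp only [hqt] at h1
          rw [pIn_cons', pOut_cons']
          rcases eq_or_ne u c with rfl | huc
          · rw [if_pos rfl] at h1 ⊢
            rw [if_neg (fun h : v = u => hcv_ne h.symm)]
            omega
          · rw [if_neg huc] at h1
            rw [if_neg (fun h : c = u => huc h.symm)]
            rcases eq_or_ne u v with rfl | huv
            · rw [if_pos rfl] at h1
              rw [if_pos rfl]
              omega
            · rw [if_neg huv] at h1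
              rw [if_neg (fun h : v = u => huv h.symm)]
              omega
        · rw [Multiset.card_cons, Multiset.card_cons]
          omega
      · -- emit: a real pegging move from column `c` into column `v`
        push_neg at hsub
        obtain ⟨ρ, hcρ, hvρ⟩ := hsub
        obtain ⟨pr, hpr, hprne⟩ := Finset.exists_mem_ne hrich₁ (c, ρ)
        obtain ⟨hprE, hpr1⟩ := Finset.mem_filter.mp hpr
        have hprr : pr = (c, pr.2) := Prod.ext_iff.mpr ⟨hpr1, rfl⟩
        have hrρ : pr.2 ≠ ρ := fun h => hprne (by rw [hprr, h])
        have hcr : (c, pr.2) ∈ E₁ := hprr ▸ hprE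
        have hmove : PegMove (G □ (⊤ : SimpleGraph (Fin n))) E₁
            (insert (v, ρ) ((E₁.erase (c, pr.2)).erase (c, ρ))) := by
          refine ⟨(c, pr.2), (c, ρ), (v, ρ), ?_, ?_, hcr, hcρ, hvρ, rfl⟩
          · exact SimpleGraph.boxProd_adj.mpr (Or.inr ⟨(SimpleGraph.top_adj _ _).mpr hrρ, rfl⟩)
          · exact SimpleGraph.boxProd_adj.mpr (Or.inl ⟨hcv, rfl⟩)
        have hinv₂ : ∀ u, q u + 2 * pOut PL₁ u ≤
            pegCol (insert (v, ρ) ((E₁.erase (c, pr.2)).erase (c, ρ))) u + pIn PL₁ u := by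
          intro u
          have h1 := hinv₁ u
          simp only [hqt] at h1
          have h2 := pegCol_move hcr hcρ
            (fun h => hrρ (congrArg Prod.snd h)) hvρ u
          dsimp only at h2
          rcases eq_or_ne u c with rfl | huc
          · rw [if_pos rfl] at h1
            rw [if_pos rfl, if_neg (fun h : v = u => hcv_ne h.symm)] at h2
            omega
          · rw [if_neg huc] at h1
            rw [if_neg (fun h : c = u => huc h.symm)] at h2
            rcases eq_or_ne u v with rfl | huv
            · rw [if_pos rfl] at h1
              rw [if_pos rfl] at h2
              omega
            · rw [if_neg huv] at h1
              rw [if_neg (fun h : v = u => huv h.symm)] at h2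
              omega
        obtain ⟨E₃, PL₃, hrtg₃, hadj₃, hinv₃, hcard₃, hrich₃⟩ :=
          ih PL₁ _ q v (le_trans hcard₁ hcard') hadj₁ hinv₂ hqv
        refine ⟨E₃, PL₃, (hrtg₁.tail hmove).trans hrtg₃, hadj₃, hinv₃, ?_, hrich₃⟩
        rw [Multiset.card_cons]
        omega

/-- Collect the moves of a pebbling plan into a multiset, with the flow identity. -/
private lemma plan_to_multiset {G : SimpleGraph V} {q₀ qf : V → ℕ}
    (h : Relation.ReflTransGen (PebMove G) q₀ qf) :
    ∃ M : Multiset (V × V), (∀ p ∈ M, G.Adj p.1 p.2) ∧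
      ∀ u, qf u + 2 * pOut M u = q₀ u + pIn M u := by
  induction h with
  | refl => exact ⟨0, by simp, fun u => by simp [pIn, pOut]⟩
  | tail hab hbc ih =>
    obtain ⟨M, hMadj, hMid⟩ := ih
    obtain ⟨x, y, hadj, h2, rfl⟩ := hbc
    refine ⟨(x, y) ::ₘ M, ?_, ?_⟩
    · intro p hp
      rcases Multiset.mem_cons.mp hp with rfl | hp'
      · exact hadj
      · exact hMadj p hp'
    · intro u
      have hxy : x ≠ y := hadj.ne
      have h0 := hMid u
      rw [pIn_cons', pOut_cons']
      dsimp only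
      rcases eq_or_ne u x with rfl | hux
      · rw [if_pos rfl, if_pos rfl, if_neg (fun h : y = u => hxy h.symm)]
        omega
      · rw [if_neg hux, if_neg (fun h : x = u => hux h.symm)]
        rcases eq_or_ne u y with rfl | huy
        · rw [if_pos rfl, if_pos rfl]
          omega
        · rw [if_neg huy, if_neg (fun h : y = u => huy h.symm)]
          omega

/-- Main lemma: if `k` pebbles always allow two-pebbling any target in `G`, then any
distribution of `k` pegs on `G □ Kₙ` has full reach. -/
private lemma full_reach_s14 (G : SimpleGraph V) [Fintype V] {n k : ℕ}
    (hk : ∀ D : V → ℕ, (∑ x, D x) = k →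
      ∀ t : V, ∃ D', Relation.ReflTransGen (PebMove G) D D' ∧ 2 ≤ D' t)
    (E : Finset (V × Fin n)) (hE : E.card = k) :
    PegReach (G □ (⊤ : SimpleGraph (Fin n))) E = Set.univ := by
  apply Set.eq_univ_of_forall
  rintro ⟨t, j⟩
  have hsum : (∑ u, pegCol E u) = k := by
    rw [← hE]
    exact (Finset.card_eq_sum_card_fiberwise (f := Prod.fst)
      (fun x _ => Finset.mem_univ x.1)).symm
  obtain ⟨qf, hplan, hqf⟩ := hk (fun u => pegCol E u) hsum t
  obtain ⟨M, hMadj, hMid⟩ := plan_to_multiset hplan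
  obtain ⟨E', PL', hrtg, _hadj', _hinv', _hcard', hrich⟩ :=
    ensure G (Multiset.card M) M E qf t le_rfl hMadj (fun u => (hMid u).le) hqf
  by_cases hj : (t, j) ∈ E'
  · exact ⟨E', hrtg, hj⟩
  · obtain ⟨x, y, hxy, htx, hty⟩ := two_pegs hrich
    have hjy : j ≠ y := fun h => hj (h ▸ hty)
    refine ⟨insert (t, j) ((E'.erase (t, x)).erase (t, y)), hrtg.tail ?_,
      Finset.mem_insert_self _ _⟩
    refine ⟨(t, x), (t, y), (t, j), ?_, ?_, htx, hty, hj, rfl⟩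
    · exact SimpleGraph.boxProd_adj.mpr (Or.inr ⟨(SimpleGraph.top_adj _ _).mpr hxy, rfl⟩)
    · exact SimpleGraph.boxProd_adj.mpr
        (Or.inr ⟨(SimpleGraph.top_adj _ _).mpr (fun h => hjy h.symm), rfl⟩)

end PegboxProof

theorem peggingNumber_boxProd_complete_le_twoPebbling {V : Type*} [Fintype V] [DecidableEq V]
    (G : SimpleGraph V) (n : ℕ) (hn : 0 < n) :
    (PeggingNumber (G □ (⊤ : SimpleGraph (Fin n))) : ℕ∞) ≤ TwoPebblingNumber G := by
  refine le_sInf ?_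
  rintro p ⟨k, rfl, hk0, hk⟩
  have hmem : k ∈ {k' : ℕ | 0 < k' ∧ ∀ D : Finset (V × Fin n), D.card = k' →
      PegReach (G □ (⊤ : SimpleGraph (Fin n))) D = Set.univ} :=
    ⟨hk0, fun D hD => full_reach_s14 G hk D hD⟩
  exact_mod_cast Nat.sInf_le hmem
end

section
/- For any distributions D on G and E on H, the set Reach(D) × Reach(E) is contained in Reach(D × E), where D × E is viewed as a distribution on the Cartesian product G × H. -/
open SimpleGraph Finset

variable {V : Type*} {W : Type*}

lemma pegStep_left {V W : Type*} [DecidableEq V] [DecidableEq W]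
    (G : SimpleGraph V) (H : SimpleGraph W) {D D' : Finset V}
    (h : PegMove G D D') :
    ∀ (E : Finset W) (S : Finset (V × W)), (∀ p ∈ S, p.2 ∉ E) →
      Relation.ReflTransGen (PegMove (G □ H)) (D ×ˢ E ∪ S) (D' ×ˢ E ∪ S) := by
  intro E
  induction E using Finset.induction_on with
  | empty => intro S _; simp only [Finset.product_empty, Finset.empty_product, Finset.empty_union]; exact .refl
  | @insert e E' he ih =>
    intro S hS
    obtain ⟨u, v, w, huv, hvw, hu, hv, hw, hD'⟩ := h
    have hne : u ≠ v := G.ne_of_adj huv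
    have hstep : PegMove (G □ H) (D ×ˢ insert e E' ∪ S)
        (D ×ˢ E' ∪ (D' ×ˢ {e} ∪ S)) := by
      refine ⟨(u,e), (v,e), (w,e), Or.inl ⟨huv, rfl⟩, Or.inl ⟨hvw, rfl⟩, ?_, ?_, ?_, ?_⟩
      · simp [hu]
      · simp [hv]
      · simp only [Finset.mem_union, Finset.mem_product, not_or]
        exact ⟨fun h => hw h.1, fun h => hS _ h (Finset.mem_insert_self e E')⟩
      · ext ⟨x, y⟩
        have hSy : (x, y) ∈ S → ¬(y = e) ∧ y ∉ E' := by
          intro h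
          have := hS _ h
          simp only [Finset.mem_insert, not_or] at this
          exact this
        subst hD'
        simp only [Finset.mem_insert, Finset.mem_erase, Finset.mem_union,
          Finset.mem_product, Finset.mem_singleton, Prod.mk.injEq, ne_eq]
        by_cases hye : y = e
        · subst hye
          have : y ∉ E' := he
          tauto
        · have : ¬ (y = e) := hye
          tauto
    have ihS : Relation.ReflTransGen (PegMove (G □ H))
        (D ×ˢ E' ∪ (D' ×ˢ {e} ∪ S)) (D' ×ˢ E' ∪ (D' ×ˢ {e} ∪ S)) := by
      refine ih _ ?_
      intro p hp
      rcases Finset.mem_union.mp hp with hp | hp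
      · have : p.2 = e := by
          have := (Finset.mem_product.mp hp).2
          simpa using this
        simpa [this] using he
      · exact fun hc => hS _ hp (Finset.mem_insert_of_mem hc)
    have heq : D' ×ˢ E' ∪ (D' ×ˢ {e} ∪ S) = D' ×ˢ insert e E' ∪ S := by
      ext ⟨x, y⟩
      simp only [Finset.mem_union, Finset.mem_product, Finset.mem_singleton,
        Finset.mem_insert]
      tauto
    exact Relation.ReflTransGen.head hstep (heq ▸ ihS)

lemma pegStep_right {V W : Type*} [DecidableEq V] [DecidableEq W]
    (G : SimpleGraph V) (H : SimpleGraph W) {E E' : Finset W}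
    (h : PegMove H E E') :
    ∀ (D : Finset V) (S : Finset (V × W)), (∀ p ∈ S, p.1 ∉ D) →
      Relation.ReflTransGen (PegMove (G □ H)) (D ×ˢ E ∪ S) (D ×ˢ E' ∪ S) := by
  intro D
  induction D using Finset.induction_on with
  | empty => intro S _; simp only [Finset.product_empty, Finset.empty_product, Finset.empty_union]; exact .refl
  | @insert d D' hd ih =>
    intro S hS
    obtain ⟨u, v, w, huv, hvw, hu, hv, hw, hE'⟩ := h
    have hne : u ≠ v := H.ne_of_adj huv
    have hstep : PegMove (G □ H) ((insert d D') ×ˢ E ∪ S)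
        (D' ×ˢ E ∪ ({d} ×ˢ E' ∪ S)) := by
      refine ⟨(d,u), (d,v), (d,w), Or.inr ⟨huv, rfl⟩, Or.inr ⟨hvw, rfl⟩, ?_, ?_, ?_, ?_⟩
      · simp [hu]
      · simp [hv]
      · simp only [Finset.mem_union, Finset.mem_product, not_or]
        exact ⟨fun h => hw h.2, fun h => hS _ h (Finset.mem_insert_self d D')⟩
      · ext ⟨x, y⟩
        have hSy : (x, y) ∈ S → ¬(x = d) ∧ x ∉ D' := by
          intro h
          have := hS _ h
          simp only [Finset.mem_insert, not_or] at this
          exact this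
        subst hE'
        simp only [Finset.mem_insert, Finset.mem_erase, Finset.mem_union,
          Finset.mem_product, Finset.mem_singleton, Prod.mk.injEq, ne_eq]
        by_cases hxd : x = d
        · subst hxd
          have : x ∉ D' := hd
          tauto
        · have : ¬ (x = d) := hxd
          tauto
    have ihS : Relation.ReflTransGen (PegMove (G □ H))
        (D' ×ˢ E ∪ ({d} ×ˢ E' ∪ S)) (D' ×ˢ E' ∪ ({d} ×ˢ E' ∪ S)) := by
      refine ih _ ?_
      intro p hp
      rcases Finset.mem_union.mp hp with hp | hp
      · have : p.1 = d := by
          have := (Finset.mem_product.mp hp).1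
          simpa using this
        simpa [this] using hd
      · exact fun hc => hS _ hp (Finset.mem_insert_of_mem hc)
    have heq : D' ×ˢ E' ∪ ({d} ×ˢ E' ∪ S) = (insert d D') ×ˢ E' ∪ S := by
      ext ⟨x, y⟩
      simp only [Finset.mem_union, Finset.mem_product, Finset.mem_singleton,
        Finset.mem_insert]
      tauto
    exact Relation.ReflTransGen.head hstep (heq ▸ ihS)

lemma pegRTG_left {V W : Type*} [DecidableEq V] [DecidableEq W]
    (G : SimpleGraph V) (H : SimpleGraph W) {D D₁ : Finset V}
    (h : Relation.ReflTransGen (PegMove G) D D₁) (E : Finset W) :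
    Relation.ReflTransGen (PegMove (G □ H)) (D ×ˢ E) (D₁ ×ˢ E) := by
  induction h with
  | refl => exact .refl
  | tail _ hstep ih =>
    refine ih.trans ?_
    have := pegStep_left G H hstep E ∅ (by simp)
    simpa using this

lemma pegRTG_right {V W : Type*} [DecidableEq V] [DecidableEq W]
    (G : SimpleGraph V) (H : SimpleGraph W) {E E₁ : Finset W}
    (h : Relation.ReflTransGen (PegMove H) E E₁) (D : Finset V) :
    Relation.ReflTransGen (PegMove (G □ H)) (D ×ˢ E) (D ×ˢ E₁) := by
  induction h with
  | refl => exact .refl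
  | tail _ hstep ih =>
    refine ih.trans ?_
    have := pegStep_right G H hstep D ∅ (by simp)
    simpa using this

theorem pegReach_boxProd {V W : Type*} [DecidableEq V] [DecidableEq W]
    (G : SimpleGraph V) (H : SimpleGraph W) (D : Finset V) (E : Finset W) :
    ∀ t ∈ PegReach G D, ∀ u ∈ PegReach H E, (t, u) ∈ PegReach (G □ H) (D ×ˢ E) := by
  rintro t ⟨D₁, hD, htD⟩ u ⟨E₁, hE, huE⟩
  exact ⟨D₁ ×ˢ E₁, (pegRTG_left G H hD E).trans (pegRTG_right G H hE D₁),
    Finset.mem_product.mpr ⟨htD, huE⟩⟩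
end
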